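/- arXiv:2409.10559 — 7 statements merged into one kernel-verified Lean document; each statement's English description precedes it below -/
import Mathlib

section
/- Assume L/2 ≥ M ≥ r and L ≥ M + 1. Fix a subset S ⊆ {1,…,M} and, for M+1 ≤ l ≤ L+1, let Y_l = (x_l, (x_{l−s})_{s∈S}) ∈ 𝒳^{1+|S|} be the corresponding window of the chain of length L+1; let ν denote the marginal of the stationary window distribution μ̄ on the coordinates (x_{M+1}, (x_{M+1−s})_{s∈S}). Then: (i) ‖ (L−M)^{−1} Σ_{l=M+1}^{L} p(Y_l = ·) − ν ‖_TV ≤ 2√(D₀+1) / (L(1−λ)); and (ii) ‖ p(Y_{L+1} = ·) − ν ‖_TV ≤ λ^{L−M} · √(D₀+1). -/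
open Finset

/-- Probability of the full sequence `x` (tokens indexed `0,…,T-1`, i.e. `x_1,…,x_T`)
under the `n`-gram Markov chain with parent offsets `r`, transition kernel `pk`,
and initial distribution `init` on the first `R` tokens. -/
noncomputable def ngramProb (d n R T : ℕ) (r : Fin n → ℕ)
    (pk : (Fin n → Fin d) → Fin d → ℝ) (init : (Fin R → Fin d) → ℝ)
    (hRT : R ≤ T) (x : Fin T → Fin d) : ℝ :=
  init (fun i => x ⟨i.1, lt_of_lt_of_le i.2 hRT⟩) *
    ∏ l ∈ (Finset.Ico R T).attach,
      pk (fun k => x ⟨l.1 - r k, lt_of_le_of_lt (Nat.sub_le _ _) (Finset.mem_Ico.mp l.2).2⟩)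
        (x ⟨l.1, (Finset.mem_Ico.mp l.2).2⟩)

/-- The window transition matrix `P_π` on `𝒳^R` of the `n`-gram chain:
`P(Z', Z) = π(z'_R | Z parents) · 1{Z' is the shift of Z}`. -/
noncomputable def windowMatrix (d n R : ℕ) (hR : 0 < R) (r : Fin n → ℕ)
    (hrpos : ∀ k, 0 < r k) (pk : (Fin n → Fin d) → Fin d → ℝ) :
    Matrix (Fin R → Fin d) (Fin R → Fin d) ℝ :=
  Matrix.of fun Z' Z =>
    if ∀ j : Fin (R - 1),
        Z' ⟨j.1, lt_of_lt_of_le j.2 (Nat.sub_le R 1)⟩ = Z ⟨j.1 + 1, by have := j.2; omega⟩ then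
      pk (fun k => Z ⟨R - r k, Nat.sub_lt hR (hrpos k)⟩) (Z' ⟨R - 1, Nat.sub_lt hR Nat.one_pos⟩)
    else 0

/-- The matrix `K - √μ (√μ)ᵀ` where `K = diag(√μ)⁻¹ P_π diag(√μ)`. -/
noncomputable def specA (d n R : ℕ) (hR : 0 < R) (r : Fin n → ℕ) (hrpos : ∀ k, 0 < r k)
    (pk : (Fin n → Fin d) → Fin d → ℝ) (μ : (Fin R → Fin d) → ℝ) :
    Matrix (Fin R → Fin d) (Fin R → Fin d) ℝ :=
  (Matrix.diagonal fun Z => (Real.sqrt (μ Z))⁻¹) * windowMatrix d n R hR r hrpos pk *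
      (Matrix.diagonal fun Z => Real.sqrt (μ Z)) -
    Matrix.vecMulVec (fun Z => Real.sqrt (μ Z)) (fun Z => Real.sqrt (μ Z))

/-- The tuple `(x_{l0-s})_{s ∈ S}` of tokens at offsets `S` before position `l0` (0-based). -/
def parents (d T : ℕ) (S : Finset ℕ) (x : Fin T → Fin d) (l0 : ℕ) (hl : l0 < T) :
    {s // s ∈ S} → Fin d :=
  fun s => x ⟨l0 - s.1, lt_of_le_of_lt (Nat.sub_le _ _) hl⟩

/-- The window `Y_{l0} = (x_{l0}, (x_{l0-s})_{s ∈ S})` (0-based position `l0`). -/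
def window (d T : ℕ) (S : Finset ℕ) (x : Fin T → Fin d) (l0 : ℕ) (hl : l0 < T) :
    Fin d × ({s // s ∈ S} → Fin d) :=
  (x ⟨l0, hl⟩, parents d T S x l0 hl)

/-- The law of the window `Y_{l0}` when the full sequence is distributed as `q`. -/
noncomputable def windowLaw (d T : ℕ) (S : Finset ℕ) (q : (Fin T → Fin d) → ℝ)
    (l0 : ℕ) (hl : l0 < T) (w : Fin d × ({s // s ∈ S} → Fin d)) : ℝ :=
  ∑ x : Fin T → Fin d, if window d T S x l0 hl = w then q x else 0

/-- Total variation distance: half the ℓ₁ distance. -/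
noncomputable def tvDist {α : Type*} [Fintype α] (p q : α → ℝ) : ℝ :=
  (∑ w, |p w - q w|) / 2

/-- χ²-divergence `D_{χ²}(p ‖ q) = Σ_ω (p ω - q ω)² / q ω`. -/
noncomputable def chiSq {α : Type*} [Fintype α] (p q : α → ℝ) : ℝ :=
  ∑ w, (p w - q w) ^ 2 / q w

theorem icoLtSucc {M L : ℕ} (l : {m // m ∈ Finset.Ico M L}) : l.1 < L + 1 :=
  Nat.lt_succ_of_lt (Finset.mem_Ico.mp l.2).2

def extF (d T : ℕ) (c : Fin d) (x : Fin T → Fin d) : ℕ → Fin d :=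
  fun i => if h : i < T then x ⟨i, h⟩ else c

noncomputable def ngP (d n R : ℕ) (r : Fin n → ℕ) (pk : (Fin n → Fin d) → Fin d → ℝ)
    (ρ : (Fin R → Fin d) → ℝ) (T : ℕ) (z : ℕ → Fin d) : ℝ :=
  ρ (fun i => z i.1) * ∏ l ∈ Finset.Ico R T, pk (fun k => z (l - r k)) (z l)

def windowN (d : ℕ) (S : Finset ℕ) (z : ℕ → Fin d) (l : ℕ) :
    Fin d × ({s // s ∈ S} → Fin d) := (z l, fun s => z (l - s.1))

noncomputable def chainW (d n R : ℕ) (r : Fin n → ℕ) (pk : (Fin n → Fin d) → Fin d → ℝ)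
    (S : Finset ℕ) (c : Fin d)
    (ρ : (Fin R → Fin d) → ℝ) (T l : ℕ) (w : Fin d × ({s // s ∈ S} → Fin d)) : ℝ :=
  ∑ x : Fin T → Fin d,
    if windowN d S (extF d T c x) l = w then ngP d n R r pk ρ T (extF d T c x) else 0

lemma extF_lt (d T : ℕ) (c : Fin d) (x : Fin T → Fin d) {i : ℕ} (h : i < T) :
    extF d T c x i = x ⟨i, h⟩ := dif_pos h

lemma ngramProb_eq_ngP (d n R T : ℕ) (r : Fin n → ℕ) (pk : (Fin n → Fin d) → Fin d → ℝ)
    (ρ : (Fin R → Fin d) → ℝ) (hRT : R ≤ T) (c : Fin d) (x : Fin T → Fin d) :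
    ngramProb d n R T r pk ρ hRT x = ngP d n R r pk ρ T (extF d T c x) := by
  unfold ngramProb ngP
  congr 1
  · congr 1; funext i
    rw [extF_lt d T c x (lt_of_lt_of_le i.2 hRT)]
  · rw [← Finset.prod_attach (Finset.Ico R T)
      (fun l => pk (fun k => extF d T c x (l - r k)) (extF d T c x l))]
    refine Finset.prod_congr rfl fun l _ => ?_
    have hl := (Finset.mem_Ico.mp l.2).2
    congr 1
    · funext k
      rw [extF_lt d T c x (lt_of_le_of_lt (Nat.sub_le _ _) hl)]
    · rw [extF_lt d T c x hl]

lemma window_eq_windowN (d T : ℕ) (S : Finset ℕ) (c : Fin d) (x : Fin T → Fin d)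
    (l0 : ℕ) (hl : l0 < T) :
    window d T S x l0 hl = windowN d S (extF d T c x) l0 := by
  unfold window windowN parents
  refine Prod.ext ?_ ?_
  · exact (extF_lt d T c x hl).symm
  · funext s
    exact (extF_lt d T c x (lt_of_le_of_lt (Nat.sub_le _ _) hl)).symm

lemma windowLaw_eq_chainW (d n R T : ℕ) (r : Fin n → ℕ) (pk : (Fin n → Fin d) → Fin d → ℝ)
    (ρ : (Fin R → Fin d) → ℝ) (S : Finset ℕ) (c : Fin d) (hRT : R ≤ T) (l0 : ℕ) (hl : l0 < T)
    (w : Fin d × ({s // s ∈ S} → Fin d)) :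
    windowLaw d T S (ngramProb d n R T r pk ρ hRT) l0 hl w = chainW d n R r pk S c ρ T l0 w := by
  unfold windowLaw chainW
  refine Finset.sum_congr rfl fun x _ => ?_
  rw [window_eq_windowN d T S c x l0 hl, ngramProb_eq_ngP d n R T r pk ρ hRT c x]

section Core
variable {d n R : ℕ} {r : Fin n → ℕ} {pk : (Fin n → Fin d) → Fin d → ℝ}

lemma ngP_congr (ρ : (Fin R → Fin d) → ℝ) (T : ℕ) {z z' : ℕ → Fin d}
    (hz : ∀ i < T, z i = z' i) (hRT : R ≤ T) :
    ngP d n R r pk ρ T z = ngP d n R r pk ρ T z' := by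
  unfold ngP
  congr 1
  · congr 1; funext i; exact hz i.1 (lt_of_lt_of_le i.2 hRT)
  · refine Finset.prod_congr rfl fun l hl => ?_
    have h2 := (Finset.mem_Ico.mp hl).2
    rw [hz l h2]
    congr 1; funext k; rw [hz _ (lt_of_le_of_lt (Nat.sub_le _ _) h2)]

lemma ngP_succ (ρ : (Fin R → Fin d) → ℝ) (T : ℕ) (hRT : R ≤ T) (z : ℕ → Fin d) :
    ngP d n R r pk ρ (T + 1) z
      = ngP d n R r pk ρ T z * pk (fun k => z (T - r k)) (z T) := by
  unfold ngP
  rw [Finset.prod_Ico_succ_top hRT, mul_assoc]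

lemma snoc_mk_lt {T : ℕ} (y : Fin T → Fin d) (e : Fin d) {i : ℕ} (h : i < T) (h' : i < T + 1) :
    (Fin.snoc y e : Fin (T+1) → Fin d) ⟨i, h'⟩ = y ⟨i, h⟩ := by
  simp [Fin.snoc, h]

lemma snoc_mk_last {T : ℕ} (y : Fin T → Fin d) (e : Fin d) (h' : T < T + 1) :
    (Fin.snoc y e : Fin (T+1) → Fin d) ⟨T, h'⟩ = e := by
  simp [Fin.snoc]

lemma extF_snoc_agree {T : ℕ} (c : Fin d) (y : Fin T → Fin d) (e : Fin d) :
    ∀ i < T, extF d (T + 1) c (Fin.snoc y e) i = extF d T c y i := by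
  intro i hi
  rw [extF_lt d (T+1) c _ (Nat.lt_succ_of_lt hi), extF_lt d T c y hi, snoc_mk_lt y e hi]

lemma sum_snoc_ngP (hR : 0 < R) (hrpos : ∀ k, 0 < r k) (hpk1 : ∀ Y, ∑ e, pk Y e = 1)
    (ρ : (Fin R → Fin d) → ℝ) (T : ℕ) (hRT : R ≤ T) (c : Fin d) (y : Fin T → Fin d) :
    ∑ e : Fin d, ngP d n R r pk ρ (T + 1) (extF d (T+1) c (Fin.snoc y e))
      = ngP d n R r pk ρ T (extF d T c y) := by
  have hT : 0 < T := lt_of_lt_of_le hR hRT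
  have key : ∀ e : Fin d, ngP d n R r pk ρ (T + 1) (extF d (T+1) c (Fin.snoc y e))
      = ngP d n R r pk ρ T (extF d T c y) * pk (fun k => extF d T c y (T - r k)) e := by
    intro e
    rw [ngP_succ ρ T hRT]
    congr 1
    · exact ngP_congr ρ T (extF_snoc_agree c y e) hRT
    · congr 1
      · funext k
        exact extF_snoc_agree c y e _ (Nat.sub_lt hT (hrpos k))
      · rw [extF_lt d (T+1) c _ (Nat.lt_succ_self T), snoc_mk_last]
  simp only [key, ← Finset.mul_sum, hpk1, mul_one]


lemma sum_snoc_decomp {T : ℕ} (F : (Fin (T+1) → Fin d) → ℝ) :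
    ∑ x : Fin (T+1) → Fin d, F x = ∑ y : Fin T → Fin d, ∑ e : Fin d, F (Fin.snoc y e) := by
  rw [← Equiv.sum_comp (Fin.snocEquiv (fun _ => Fin d)) F, Fintype.sum_prod_type,
    Finset.sum_comm]
  rfl

lemma sum_cons_decomp {T : ℕ} (F : (Fin (T+1) → Fin d) → ℝ) :
    ∑ x : Fin (T+1) → Fin d, F x = ∑ y : Fin T → Fin d, ∑ e : Fin d, F (Fin.cons e y) := by
  rw [← Equiv.sum_comp (Fin.consEquiv (fun _ => Fin d)) F, Fintype.sum_prod_type,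
    Finset.sum_comm]
  rfl

lemma ngP_mass (hR : 0 < R) (hrpos : ∀ k, 0 < r k) (hpk1 : ∀ Y, ∑ e, pk Y e = 1)
    (ρ : (Fin R → Fin d) → ℝ) (c : Fin d) :
    ∀ T, R ≤ T → ∑ x : Fin T → Fin d, ngP d n R r pk ρ T (extF d T c x) = ∑ Z, ρ Z := by
  refine Nat.le_induction ?_ ?_
  · refine Finset.sum_congr rfl fun x _ => ?_
    unfold ngP
    rw [Finset.Ico_self, Finset.prod_empty, mul_one]
    congr 1
    exact funext fun i => extF_lt d R c x i.2
  · intro T hT ih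
    rw [sum_snoc_decomp, ← ih]
    exact Finset.sum_congr rfl fun y _ => sum_snoc_ngP hR hrpos hpk1 ρ T hT c y


def consN (e : Fin d) (z : ℕ → Fin d) : ℕ → Fin d := fun i => Nat.casesOn i e z

lemma consN_pos (e : Fin d) (z : ℕ → Fin d) {i : ℕ} (hi : 0 < i) :
    consN e z i = z (i - 1) := by
  cases i with
  | zero => omega
  | succ j => rfl

lemma windowN_congr (S : Finset ℕ) {z z' : ℕ → Fin d} (l : ℕ) (hz : ∀ i ≤ l, z i = z' i) :
    windowN d S z l = windowN d S z' l :=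
  Prod.ext (hz l le_rfl) (funext fun s => hz _ (Nat.sub_le _ _))

lemma chainW_trunc_step (hR : 0 < R) (hrpos : ∀ k, 0 < r k) (hpk1 : ∀ Y, ∑ e, pk Y e = 1)
    (S : Finset ℕ) (ρ : (Fin R → Fin d) → ℝ) (c : Fin d) (T l : ℕ) (hRT : R ≤ T) (hlT : l < T)
    (w : Fin d × ({s // s ∈ S} → Fin d)) :
    chainW d n R r pk S c ρ (T+1) l w = chainW d n R r pk S c ρ T l w := by
  unfold chainW
  rw [sum_snoc_decomp]
  refine Finset.sum_congr rfl fun y _ => ?_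
  have hcond : ∀ e, windowN d S (extF d (T+1) c (Fin.snoc y e)) l
      = windowN d S (extF d T c y) l := fun e =>
    windowN_congr S l fun i hi => extF_snoc_agree c y e i (lt_of_le_of_lt hi hlT)
  simp only [hcond]
  split
  · exact sum_snoc_ngP hR hrpos hpk1 ρ T hRT c y
  · simp

lemma extF_cons {T : ℕ} (c : Fin d) (y : Fin T → Fin d) (e : Fin d) :
    extF d (T+1) c (Fin.cons e y) = consN e (extF d T c y) := by
  funext i
  cases i with
  | zero => exact extF_lt d (T+1) c _ (Nat.succ_pos T)
  | succ j =>
    show extF d (T+1) c (Fin.cons e y) (j+1) = extF d T c y j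
    unfold extF
    by_cases h : j < T
    · rw [dif_pos (Nat.succ_lt_succ h), dif_pos h]
      have : (⟨j+1, Nat.succ_lt_succ h⟩ : Fin (T+1)) = Fin.succ ⟨j, h⟩ := rfl
      rw [this, Fin.cons_succ]
    · rw [dif_neg (by omega), dif_neg h]


lemma sum_cons_ngP (hR : 0 < R) (hrpos : ∀ k, 0 < r k) (hrR : ∀ k, r k ≤ R)
    (ρ : (Fin R → Fin d) → ℝ) (T : ℕ) (hRT : R ≤ T) (z : ℕ → Fin d) :
    ∑ e : Fin d, ngP d n R r pk ρ (T+1) (consN e z)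
      = ngP d n R r pk (Matrix.mulVec (windowMatrix d n R hR r hrpos pk) ρ) T z := by
  classical
  have hterm : ∀ e : Fin d, ngP d n R r pk ρ (T+1) (consN e z)
      = (ρ (fun i => consN e z i.1) * pk (fun k => consN e z (R - r k)) (z (R-1)))
        * ∏ l ∈ Finset.Ico R T, pk (fun k => z (l - r k)) (z l) := by
    intro e
    unfold ngP
    rw [Finset.prod_eq_prod_Ico_succ_bot (Nat.lt_succ_of_le hRT)]
    have hbot : consN e z R = z (R-1) := consN_pos e z hR
    have htail : ∏ l ∈ Finset.Ico (R+1) (T+1), pk (fun k => consN e z (l - r k)) (consN e z l)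
        = ∏ l ∈ Finset.Ico R T, pk (fun k => z (l - r k)) (z l) := by
      have h1 : ∀ l ∈ Finset.Ico (R+1) (T+1),
          pk (fun k => consN e z (l - r k)) (consN e z l)
            = pk (fun k => z (l - 1 - r k)) (z (l - 1)) := by
        intro l hl
        have hl1 := (Finset.mem_Ico.mp hl).1
        rw [consN_pos e z (by omega)]
        congr 1
        funext k
        have hrk := hrR k
        rw [consN_pos e z (by omega), show l - r k - 1 = l - 1 - r k from by omega]
      rw [Finset.prod_congr rfl h1,
        ← Finset.prod_Ico_add' (fun l => pk (fun k => z (l - 1 - r k)) (z (l - 1))) R T 1]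
      simp only [Nat.add_sub_cancel]
    rw [htail, hbot, mul_assoc, mul_comm (pk _ _) (∏ l ∈ Finset.Ico R T, _), ← mul_assoc,
      mul_assoc (ρ _), mul_comm (∏ l ∈ Finset.Ico R T, _) (pk _ _), ← mul_assoc]
  have hhead : ∑ e : Fin d, ρ (fun i => consN e z i.1) * pk (fun k => consN e z (R - r k)) (z (R-1))
      = Matrix.mulVec (windowMatrix d n R hR r hrpos pk) ρ (fun i : Fin R => z i.1) := by
    set W : Fin d → (Fin R → Fin d) := fun e => fun i => consN e z i.1 with hW
    have hWinj : Function.Injective W := by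
      intro a b h
      exact congrFun h ⟨0, hR⟩
    have hWcond : ∀ Z : Fin R → Fin d,
        (∀ j : Fin (R - 1), (fun i : Fin R => z i.1) ⟨j.1, lt_of_lt_of_le j.2 (Nat.sub_le R 1)⟩
          = Z ⟨j.1 + 1, by have := j.2; omega⟩) ↔ Z ∈ Finset.image W Finset.univ := by
      intro Z
      constructor
      · intro hc
        refine Finset.mem_image.mpr ⟨Z ⟨0, hR⟩, Finset.mem_univ _, ?_⟩
        funext i
        rcases i with ⟨iv, hiv⟩
        cases iv with
        | zero => rfl
        | succ j =>
          exact hc ⟨j, by omega⟩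
      · intro hm
        obtain ⟨e, _, rfl⟩ := Finset.mem_image.mp hm
        intro j
        rfl
    simp only [Matrix.mulVec, dotProduct, windowMatrix, Matrix.of_apply]
    have : ∀ Z : Fin R → Fin d,
        (if ∀ j : Fin (R - 1), (fun i : Fin R => z i.1) ⟨j.1, lt_of_lt_of_le j.2 (Nat.sub_le R 1)⟩
            = Z ⟨j.1 + 1, by have := j.2; omega⟩ then
          pk (fun k => Z ⟨R - r k, Nat.sub_lt hR (hrpos k)⟩)
            ((fun i : Fin R => z i.1) ⟨R - 1, Nat.sub_lt hR Nat.one_pos⟩) else 0) * ρ Z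
        = if Z ∈ Finset.image W Finset.univ then
            pk (fun k => Z ⟨R - r k, Nat.sub_lt hR (hrpos k)⟩) (z (R-1)) * ρ Z else 0 := by
      intro Z
      rw [ite_mul, zero_mul]
      exact if_congr (hWcond Z) rfl rfl
    rw [Finset.sum_congr rfl fun Z _ => this Z, Finset.sum_ite_mem, Finset.univ_inter,
      Finset.sum_image (fun a _ b _ h => hWinj h)]
    refine Finset.sum_congr rfl fun e _ => ?_
    rw [mul_comm]
  simp only [hterm]
  rw [← Finset.sum_mul, hhead]
  rfl


lemma chainW_front_step (hR : 0 < R) (hrpos : ∀ k, 0 < r k) (hrR : ∀ k, r k ≤ R)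
    (S : Finset ℕ) (ρ : (Fin R → Fin d) → ℝ) (c : Fin d) (T : ℕ) (hRT : R ≤ T)
    (hs : ∀ s ∈ S, s + 1 ≤ T) (w : Fin d × ({s // s ∈ S} → Fin d)) :
    chainW d n R r pk S c ρ (T+1) T w
      = chainW d n R r pk S c (Matrix.mulVec (windowMatrix d n R hR r hrpos pk) ρ) T (T-1) w := by
  unfold chainW
  rw [sum_cons_decomp]
  refine Finset.sum_congr rfl fun y _ => ?_
  have hz : ∀ e, extF d (T+1) c (Fin.cons e y) = consN e (extF d T c y) := extF_cons c y
  have hT : 0 < T := lt_of_lt_of_le hR hRT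
  have hwin : ∀ e, windowN d S (consN e (extF d T c y)) T
      = windowN d S (extF d T c y) (T-1) := by
    intro e
    unfold windowN
    refine Prod.ext (consN_pos e _ hT) ?_
    funext s
    have hs' := hs s.1 s.2
    show consN e (extF d T c y) (T - s.1) = extF d T c y (T - 1 - s.1)
    rw [consN_pos e _ (by omega), show T - s.1 - 1 = T - 1 - s.1 from by omega]
  simp only [hz, hwin]
  split
  · exact sum_cons_ngP hR hrpos hrR ρ T hRT _
  · simp

lemma chainW_marg (hR : 0 < R) (hrpos : ∀ k, 0 < r k) (hrR : ∀ k, r k ≤ R)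
    (S : Finset ℕ) (c : Fin d) (M : ℕ) (hRM : R ≤ M) (hS : ∀ s ∈ S, s ≤ M)
    (ρ : (Fin R → Fin d) → ℝ) (w : Fin d × ({s // s ∈ S} → Fin d)) :
    ∀ l, M ≤ l → chainW d n R r pk S c ρ (l+1) l w
      = chainW d n R r pk S c
          ((Matrix.mulVec (windowMatrix d n R hR r hrpos pk))^[l - M] ρ) (M+1) M w := by
  intro l hl
  induction l, hl using Nat.le_induction generalizing ρ with
  | base => simp [Nat.sub_self]
  | succ l hl ih =>
    have h1 : chainW d n R r pk S c ρ (l+1+1) (l+1) w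
        = chainW d n R r pk S c
            (Matrix.mulVec (windowMatrix d n R hR r hrpos pk) ρ) (l+1) l w :=
      chainW_front_step hR hrpos hrR S ρ c (l+1) (by omega)
        (fun s hs => by have := hS s hs; omega) w
    rw [h1, ih _]
    have : (Matrix.mulVec (windowMatrix d n R hR r hrpos pk))^[l - M]
        (Matrix.mulVec (windowMatrix d n R hR r hrpos pk) ρ)
        = (Matrix.mulVec (windowMatrix d n R hR r hrpos pk))^[l + 1 - M] ρ := by
      rw [← Function.iterate_succ_apply]
      congr 1
      omega
    rw [this]

lemma chainW_trunc (hR : 0 < R) (hrpos : ∀ k, 0 < r k) (hpk1 : ∀ Y, ∑ e, pk Y e = 1)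
    (S : Finset ℕ) (c : Fin d) (ρ : (Fin R → Fin d) → ℝ) (l : ℕ) (hRl : R ≤ l)
    (w : Fin d × ({s // s ∈ S} → Fin d)) :
    ∀ T, l + 1 ≤ T → chainW d n R r pk S c ρ T l w = chainW d n R r pk S c ρ (l+1) l w := by
  intro T hT
  induction T, hT using Nat.le_induction with
  | base => rfl
  | succ T hT ih =>
    rw [chainW_trunc_step hR hrpos hpk1 S ρ c T l (by omega) (by omega) w, ih]


lemma colsum (hR : 0 < R) (hrpos : ∀ k, 0 < r k) (hpk1 : ∀ Y, ∑ e, pk Y e = 1)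
    (Z : Fin R → Fin d) :
    ∑ Z' : Fin R → Fin d, windowMatrix d n R hR r hrpos pk Z' Z = 1 := by
  classical
  set W : Fin d → (Fin R → Fin d) := fun e i => if h : i.1 + 1 < R then Z ⟨i.1 + 1, h⟩ else e
    with hW
  have hWlast : ∀ e, W e ⟨R - 1, Nat.sub_lt hR Nat.one_pos⟩ = e := by
    intro e
    simp only [hW]
    rw [dif_neg (by omega)]
  have hWinj : Function.Injective W := by
    intro a b h
    have := congrFun h ⟨R - 1, Nat.sub_lt hR Nat.one_pos⟩
    rwa [hWlast, hWlast] at this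
  have hWcond : ∀ Z' : Fin R → Fin d,
      (∀ j : Fin (R - 1), Z' ⟨j.1, lt_of_lt_of_le j.2 (Nat.sub_le R 1)⟩
        = Z ⟨j.1 + 1, by have := j.2; omega⟩) ↔ Z' ∈ Finset.image W Finset.univ := by
    intro Z'
    constructor
    · intro hc
      refine Finset.mem_image.mpr ⟨Z' ⟨R - 1, Nat.sub_lt hR Nat.one_pos⟩, Finset.mem_univ _, ?_⟩
      funext i
      by_cases h : i.1 + 1 < R
      · have h2 := hc ⟨i.1, by omega⟩
        simp only [hW]
        rw [dif_pos h]
        exact h2.symm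
      · have : i = (⟨R - 1, Nat.sub_lt hR Nat.one_pos⟩ : Fin R) :=
          Fin.ext (show i.1 = R - 1 from by omega)
        rw [this, hWlast]
    · intro hm j
      obtain ⟨e, _, rfl⟩ := Finset.mem_image.mp hm
      simp only [hW]
      rw [dif_pos (by have := j.2; omega)]
  unfold windowMatrix
  simp only [Matrix.of_apply]
  have : ∀ Z' : Fin R → Fin d,
      (if ∀ j : Fin (R - 1), Z' ⟨j.1, lt_of_lt_of_le j.2 (Nat.sub_le R 1)⟩
          = Z ⟨j.1 + 1, by have := j.2; omega⟩ then
        pk (fun k => Z ⟨R - r k, Nat.sub_lt hR (hrpos k)⟩)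
          (Z' ⟨R - 1, Nat.sub_lt hR Nat.one_pos⟩) else 0)
      = if Z' ∈ Finset.image W Finset.univ then
          pk (fun k => Z ⟨R - r k, Nat.sub_lt hR (hrpos k)⟩)
            (Z' ⟨R - 1, Nat.sub_lt hR Nat.one_pos⟩) else 0 := by
    intro Z'
    exact if_congr (hWcond Z') rfl rfl
  rw [Finset.sum_congr rfl fun Z' _ => this Z', Finset.sum_ite_mem, Finset.univ_inter,
    Finset.sum_image (fun a _ b _ h => hWinj h)]
  rw [Finset.sum_congr rfl fun e _ => by rw [hWlast]]
  exact hpk1 _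

lemma mulVec_mass (hR : 0 < R) (hrpos : ∀ k, 0 < r k) (hpk1 : ∀ Y, ∑ e, pk Y e = 1)
    (σ : (Fin R → Fin d) → ℝ) :
    ∑ Z', Matrix.mulVec (windowMatrix d n R hR r hrpos pk) σ Z' = ∑ Z, σ Z := by
  simp only [Matrix.mulVec, dotProduct]
  rw [Finset.sum_comm]
  refine Finset.sum_congr rfl fun Z _ => ?_
  rw [← Finset.sum_mul, colsum hR hrpos hpk1 Z, one_mul]

lemma ngP_abs (hpk0 : ∀ Y e, 0 ≤ pk Y e) (σ τ : (Fin R → Fin d) → ℝ) (T : ℕ) (z : ℕ → Fin d) :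
    |ngP d n R r pk σ T z - ngP d n R r pk τ T z|
      = ngP d n R r pk (fun Z => |σ Z - τ Z|) T z := by
  unfold ngP
  rw [← sub_mul, abs_mul, abs_of_nonneg (Finset.prod_nonneg fun l _ => hpk0 _ _)]

lemma chainW_tv (hR : 0 < R) (hrpos : ∀ k, 0 < r k) (hpk0 : ∀ Y e, 0 ≤ pk Y e)
    (hpk1 : ∀ Y, ∑ e, pk Y e = 1) (S : Finset ℕ) (c : Fin d) (T l : ℕ) (hRT : R ≤ T)
    (σ τ : (Fin R → Fin d) → ℝ) :
    ∑ w, |chainW d n R r pk S c σ T l w - chainW d n R r pk S c τ T l w|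
      ≤ ∑ Z, |σ Z - τ Z| := by
  unfold chainW
  have hterm : ∀ w : Fin d × ({s // s ∈ S} → Fin d),
      |(∑ x : Fin T → Fin d, if windowN d S (extF d T c x) l = w then
          ngP d n R r pk σ T (extF d T c x) else 0)
        - ∑ x : Fin T → Fin d, if windowN d S (extF d T c x) l = w then
          ngP d n R r pk τ T (extF d T c x) else 0|
      ≤ ∑ x : Fin T → Fin d, if windowN d S (extF d T c x) l = w then
          ngP d n R r pk (fun Z => |σ Z - τ Z|) T (extF d T c x) else 0 := by
    intro w
    rw [← Finset.sum_sub_distrib]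
    refine (Finset.abs_sum_le_sum_abs _ _).trans (le_of_eq (Finset.sum_congr rfl fun x _ => ?_))
    split
    · exact ngP_abs hpk0 σ τ T _
    · simp
  calc ∑ w, |(∑ x : Fin T → Fin d, if windowN d S (extF d T c x) l = w then
          ngP d n R r pk σ T (extF d T c x) else 0)
        - ∑ x : Fin T → Fin d, if windowN d S (extF d T c x) l = w then
          ngP d n R r pk τ T (extF d T c x) else 0|
      ≤ ∑ w, ∑ x : Fin T → Fin d, if windowN d S (extF d T c x) l = w then
          ngP d n R r pk (fun Z => |σ Z - τ Z|) T (extF d T c x) else 0 :=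
        Finset.sum_le_sum fun w _ => hterm w
    _ = ∑ x : Fin T → Fin d, ∑ w, if windowN d S (extF d T c x) l = w then
          ngP d n R r pk (fun Z => |σ Z - τ Z|) T (extF d T c x) else 0 := Finset.sum_comm
    _ = ∑ x : Fin T → Fin d, ngP d n R r pk (fun Z => |σ Z - τ Z|) T (extF d T c x) := by
        refine Finset.sum_congr rfl fun x _ => ?_
        rw [Finset.sum_ite_eq]
        simp
    _ = ∑ Z, |σ Z - τ Z| := ngP_mass hR hrpos hpk1 _ c T hRT

lemma tv_le_sqrt_chi {μ : (Fin R → Fin d) → ℝ} (hμpos : ∀ Z, 0 < μ Z) (hμ1 : ∑ Z, μ Z = 1)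
    (σ : (Fin R → Fin d) → ℝ) :
    ∑ Z, |σ Z - μ Z| ≤ Real.sqrt (chiSq σ μ) := by
  have hchi : 0 ≤ chiSq σ μ :=
    Finset.sum_nonneg fun Z _ => div_nonneg (sq_nonneg _) (hμpos Z).le
  have key : (∑ Z, |σ Z - μ Z|) ^ 2 ≤ chiSq σ μ := by
    have h1 : ∀ Z : Fin R → Fin d, |σ Z - μ Z|
        = Real.sqrt (μ Z) * (|σ Z - μ Z| / Real.sqrt (μ Z)) := by
      intro Z
      rw [mul_div_cancel₀]
      exact (Real.sqrt_pos.mpr (hμpos Z)).ne'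
    calc (∑ Z, |σ Z - μ Z|) ^ 2
        = (∑ Z, Real.sqrt (μ Z) * (|σ Z - μ Z| / Real.sqrt (μ Z))) ^ 2 := by
          rw [Finset.sum_congr rfl fun Z _ => h1 Z]
      _ ≤ (∑ Z, Real.sqrt (μ Z) ^ 2) * ∑ Z, (|σ Z - μ Z| / Real.sqrt (μ Z)) ^ 2 :=
          Finset.sum_mul_sq_le_sq_mul_sq _ _ _
      _ = chiSq σ μ := by
          rw [Finset.sum_congr rfl fun Z _ => Real.sq_sqrt (hμpos Z).le, hμ1, one_mul]
          refine Finset.sum_congr rfl fun Z _ => ?_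
          rw [div_pow, Real.sq_sqrt (hμpos Z).le, sq_abs]
  calc ∑ Z, |σ Z - μ Z| = Real.sqrt ((∑ Z, |σ Z - μ Z|) ^ 2) :=
        (Real.sqrt_sq (Finset.sum_nonneg fun Z _ => abs_nonneg _)).symm
    _ ≤ Real.sqrt (chiSq σ μ) := Real.sqrt_le_sqrt key


lemma chi_contract (hR : 0 < R) (hrpos : ∀ k, 0 < r k)
    {μ : (Fin R → Fin d) → ℝ} (hμpos : ∀ Z, 0 < μ Z) (hμ1 : ∑ Z, μ Z = 1)
    (hstat : ∀ Z', μ Z' = ∑ Z, windowMatrix d n R hR r hrpos pk Z' Z * μ Z)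
    {lam : ℝ}
    (hop : ∀ v : (Fin R → Fin d) → ℝ,
      Real.sqrt (∑ Z', Matrix.mulVec (specA d n R hR r hrpos pk μ) v Z' ^ 2)
        ≤ lam * Real.sqrt (∑ Z, v Z ^ 2))
    (σ : (Fin R → Fin d) → ℝ) (hσ : ∑ Z, σ Z = 1) :
    Real.sqrt (chiSq (Matrix.mulVec (windowMatrix d n R hR r hrpos pk) σ) μ)
      ≤ lam * Real.sqrt (chiSq σ μ) := by
  set P := windowMatrix d n R hR r hrpos pk with hP
  set v : (Fin R → Fin d) → ℝ := fun Z => (σ Z - μ Z) / Real.sqrt (μ Z) with hv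
  have hsq : ∀ Z, Real.sqrt (μ Z) ≠ 0 := fun Z => (Real.sqrt_pos.mpr (hμpos Z)).ne'
  have hmul : ∀ Z, Real.sqrt (μ Z) * v Z = σ Z - μ Z := fun Z => by
    rw [hv, mul_comm, div_mul_cancel₀ _ (hsq Z)]
  have hzero : ∑ Z, Real.sqrt (μ Z) * v Z = 0 := by
    simp only [hmul]
    rw [Finset.sum_sub_distrib, hσ, hμ1, sub_self]
  have hAv : ∀ Z', Matrix.mulVec (specA d n R hR r hrpos pk μ) v Z'
      = (Matrix.mulVec P σ Z' - μ Z') / Real.sqrt (μ Z') := by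
    intro Z'
    unfold specA
    rw [Matrix.sub_mulVec]
    have h2 : Matrix.mulVec (Matrix.vecMulVec (fun Z => Real.sqrt (μ Z))
        (fun Z => Real.sqrt (μ Z))) v Z' = 0 := by
      simp only [Matrix.vecMulVec, Matrix.mulVec, dotProduct, Matrix.of_apply]
      rw [Finset.sum_congr rfl fun Z _ => mul_assoc (Real.sqrt (μ Z')) (Real.sqrt (μ Z)) (v Z),
        ← Finset.mul_sum, hzero, mul_zero]
    rw [Pi.sub_apply, h2, sub_zero]
    have hD2 : Matrix.mulVec (Matrix.diagonal fun Z => Real.sqrt (μ Z)) v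
        = fun Z => σ Z - μ Z := by
      funext Z
      rw [Matrix.mulVec_diagonal, hmul]
    have hPd : Matrix.mulVec P (fun Z => σ Z - μ Z) Z' = Matrix.mulVec P σ Z' - μ Z' := by
      simp only [Matrix.mulVec, dotProduct, mul_sub]
      rw [Finset.sum_sub_distrib]
      congr 1
      exact (hstat Z').symm
    rw [← Matrix.mulVec_mulVec, ← Matrix.mulVec_mulVec, hD2, Matrix.mulVec_diagonal, hPd,
      inv_mul_eq_div]
  have hchiA : ∑ Z', Matrix.mulVec (specA d n R hR r hrpos pk μ) v Z' ^ 2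
      = chiSq (Matrix.mulVec P σ) μ := by
    unfold chiSq
    refine Finset.sum_congr rfl fun Z' _ => ?_
    rw [hAv, div_pow, Real.sq_sqrt (hμpos Z').le]
  have hchiv : ∑ Z, v Z ^ 2 = chiSq σ μ := by
    unfold chiSq
    refine Finset.sum_congr rfl fun Z _ => ?_
    rw [hv, div_pow, Real.sq_sqrt (hμpos Z).le]
  have h := hop v
  rwa [hchiA, hchiv] at h

lemma chi_iterate (hR : 0 < R) (hrpos : ∀ k, 0 < r k) (hpk1 : ∀ Y, ∑ e, pk Y e = 1)
    {μ : (Fin R → Fin d) → ℝ} (hμpos : ∀ Z, 0 < μ Z) (hμ1 : ∑ Z, μ Z = 1)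
    (hstat : ∀ Z', μ Z' = ∑ Z, windowMatrix d n R hR r hrpos pk Z' Z * μ Z)
    {lam : ℝ} (hlam0 : 0 ≤ lam)
    (hop : ∀ v : (Fin R → Fin d) → ℝ,
      Real.sqrt (∑ Z', Matrix.mulVec (specA d n R hR r hrpos pk μ) v Z' ^ 2)
        ≤ lam * Real.sqrt (∑ Z, v Z ^ 2))
    (μ0 : (Fin R → Fin d) → ℝ) (hμ01 : ∑ Z, μ0 Z = 1) :
    ∀ t, (∑ Z, (Matrix.mulVec (windowMatrix d n R hR r hrpos pk))^[t] μ0 Z = 1)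
      ∧ Real.sqrt (chiSq ((Matrix.mulVec (windowMatrix d n R hR r hrpos pk))^[t] μ0) μ)
          ≤ lam ^ t * Real.sqrt (chiSq μ0 μ) := by
  intro t
  induction t with
  | zero => simpa using hμ01
  | succ t ih =>
    constructor
    · rw [Function.iterate_succ_apply', mulVec_mass hR hrpos hpk1]
      exact ih.1
    · rw [Function.iterate_succ_apply']
      calc Real.sqrt (chiSq (Matrix.mulVec (windowMatrix d n R hR r hrpos pk)
            ((Matrix.mulVec (windowMatrix d n R hR r hrpos pk))^[t] μ0)) μ)
          ≤ lam * Real.sqrt (chiSq ((Matrix.mulVec (windowMatrix d n R hR r hrpos pk))^[t] μ0) μ) :=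
            chi_contract hR hrpos hμpos hμ1 hstat hop _ ih.1
        _ ≤ lam * (lam ^ t * Real.sqrt (chiSq μ0 μ)) := by
            exact mul_le_mul_of_nonneg_left ih.2 hlam0
        _ = lam ^ (t+1) * Real.sqrt (chiSq μ0 μ) := by ring

end Core

/-- First-order convergence of window laws of the `n`-gram chain to the
stationary window law: (i) the averaged law of the windows `Y_{M+1},…,Y_L` is within TV
distance `2√(D₀+1)/(L(1−λ))` of the stationary window marginal `ν`; (ii) the law of `Y_{L+1}`
is within TV distance `λ^{L−M}√(D₀+1)` of `ν`. -/
theorem statement5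
    (d n R M L : ℕ) (hd : 0 < d) (hn : 0 < n) (hR : 0 < R)
    (r : Fin n → ℕ) (hrpos : ∀ i, 0 < r i) (hrmono : StrictMono r)
    (hrR : ∀ i, r i ≤ R) (hRmax : ∃ i, r i = R)
    (pk : (Fin n → Fin d) → Fin d → ℝ)
    (hpk0 : ∀ Y e, 0 ≤ pk Y e) (hpk1 : ∀ Y, ∑ e, pk Y e = 1)
    (μ0 : (Fin R → Fin d) → ℝ) (hμ00 : ∀ Z, 0 ≤ μ0 Z) (hμ01 : ∑ Z, μ0 Z = 1)
    (μ : (Fin R → Fin d) → ℝ) (hμpos : ∀ Z, 0 < μ Z) (hμ1 : ∑ Z, μ Z = 1)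
    (hstat : ∀ Z', μ Z' = ∑ Z, windowMatrix d n R hR r hrpos pk Z' Z * μ Z)
    (lam : ℝ) (hlam0 : 0 ≤ lam) (hlam1 : lam < 1)
    (hop : ∀ v : (Fin R → Fin d) → ℝ,
      Real.sqrt (∑ Z', Matrix.mulVec (specA d n R hR r hrpos pk μ) v Z' ^ 2)
        ≤ lam * Real.sqrt (∑ Z, v Z ^ 2))
    (hRM : R ≤ M) (hML : 2 * M ≤ L) (hML1 : M + 1 ≤ L)
    (S : Finset ℕ) (hS : ∀ s ∈ S, 1 ≤ s ∧ s ≤ M) :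
    tvDist
        (fun w =>
          (∑ l ∈ (Finset.Ico M L).attach,
              windowLaw d (L + 1) S (ngramProb d n R (L + 1) r pk μ0 (by omega)) l.1
                (icoLtSucc l) w) /
            ((L : ℝ) - M))
        (windowLaw d (M + 1) S (ngramProb d n R (M + 1) r pk μ (by omega)) M
          (Nat.lt_succ_self M))
      ≤ 2 * Real.sqrt (chiSq μ0 μ + 1) / (L * (1 - lam)) ∧
    tvDist
        (windowLaw d (L + 1) S (ngramProb d n R (L + 1) r pk μ0 (by omega)) L
          (Nat.lt_succ_self L))
        (windowLaw d (M + 1) S (ngramProb d n R (M + 1) r pk μ (by omega)) M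
          (Nat.lt_succ_self M))
      ≤ lam ^ (L - M) * Real.sqrt (chiSq μ0 μ + 1) := by
  classical
  set c : Fin d := ⟨0, hd⟩ with hc
  have hD0 : 0 ≤ chiSq μ0 μ :=
    Finset.sum_nonneg fun Z _ => div_nonneg (sq_nonneg _) (hμpos Z).le
  have hB0 : 0 ≤ Real.sqrt (chiSq μ0 μ + 1) := Real.sqrt_nonneg _
  have hsB : Real.sqrt (chiSq μ0 μ) ≤ Real.sqrt (chiSq μ0 μ + 1) :=
    Real.sqrt_le_sqrt (by linarith)
  have h1lam : (0:ℝ) < 1 - lam := by linarith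
  have hchain := chi_iterate hR hrpos hpk1 hμpos hμ1 hstat hlam0 hop μ0 hμ01
  have hνid : ∀ (hl : M < M + 1) w,
      windowLaw d (M+1) S (ngramProb d n R (M+1) r pk μ (by omega)) M hl w
        = chainW d n R r pk S c μ (M+1) M w := fun hl w =>
    windowLaw_eq_chainW d n R (M+1) r pk μ S c (by omega) M hl w
  have hTV : ∀ t, ∑ w, |chainW d n R r pk S c
        ((Matrix.mulVec (windowMatrix d n R hR r hrpos pk))^[t] μ0) (M+1) M w
      - chainW d n R r pk S c μ (M+1) M w| ≤ lam ^ t * Real.sqrt (chiSq μ0 μ) := by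
    intro t
    calc ∑ w, |chainW d n R r pk S c
          ((Matrix.mulVec (windowMatrix d n R hR r hrpos pk))^[t] μ0) (M+1) M w
        - chainW d n R r pk S c μ (M+1) M w|
        ≤ ∑ Z, |(Matrix.mulVec (windowMatrix d n R hR r hrpos pk))^[t] μ0 Z - μ Z| :=
          chainW_tv hR hrpos hpk0 hpk1 S c (M+1) M (by omega) _ μ
      _ ≤ Real.sqrt (chiSq ((Matrix.mulVec (windowMatrix d n R hR r hrpos pk))^[t] μ0) μ) :=
          tv_le_sqrt_chi hμpos hμ1 _
      _ ≤ lam ^ t * Real.sqrt (chiSq μ0 μ) := (hchain t).2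
  have hlid : ∀ (l : ℕ) (hMl : M ≤ l) (hlL : l ≤ L) (hl : l < L + 1) w,
      windowLaw d (L+1) S (ngramProb d n R (L+1) r pk μ0 (by omega)) l hl w
        = chainW d n R r pk S c
            ((Matrix.mulVec (windowMatrix d n R hR r hrpos pk))^[l - M] μ0) (M+1) M w := by
    intro l hMl hlL hl w
    rw [windowLaw_eq_chainW d n R (L+1) r pk μ0 S c (by omega) l hl w,
      chainW_trunc hR hrpos hpk1 S c μ0 l (by omega) w (L+1) (by omega),
      chainW_marg hR hrpos hrR S c M hRM (fun s hs => (hS s hs).2) μ0 w l hMl]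
  have hgeom : ∑ i ∈ Finset.range (L - M), lam ^ i ≤ 1 / (1 - lam) := by
    rw [geom_sum_eq (by linarith : lam ≠ 1) (L - M)]
    have heq : (lam ^ (L - M) - 1) / (lam - 1) = (1 - lam ^ (L - M)) / (1 - lam) := by
      rw [← neg_div_neg_eq]
      ring_nf
    rw [heq]
    exact (div_le_div_iff_of_pos_right h1lam).mpr (by nlinarith [pow_nonneg hlam0 (L - M)])
  constructor
  · unfold tvDist
    have hMLlt : M < L := by omega
    have hLR : (M:ℝ) < (L:ℝ) := by exact_mod_cast hMLlt
    have hLM : (0:ℝ) < (L:ℝ) - (M:ℝ) := by linarith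
    have hL0 : (0:ℝ) < (L:ℝ) := by
      have h0 : (0:ℕ) < L := by omega
      exact_mod_cast h0
    have hcard : ((Finset.Ico M L).card : ℝ) = (L:ℝ) - (M:ℝ) := by
      rw [Nat.card_Ico]
      push_cast [Nat.cast_sub (by omega : M ≤ L)]
      ring
    have hrw : ∀ w : Fin d × ({s // s ∈ S} → Fin d),
        (∑ l ∈ (Finset.Ico M L).attach,
            windowLaw d (L + 1) S (ngramProb d n R (L + 1) r pk μ0 (by omega)) l.1
              (icoLtSucc l) w)
          = ∑ l ∈ Finset.Ico M L, chainW d n R r pk S c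
              ((Matrix.mulVec (windowMatrix d n R hR r hrpos pk))^[l - M] μ0) (M+1) M w := by
      intro w
      rw [← Finset.sum_attach (Finset.Ico M L) (fun l => chainW d n R r pk S c
        ((Matrix.mulVec (windowMatrix d n R hR r hrpos pk))^[l - M] μ0) (M+1) M w)]
      refine Finset.sum_congr rfl fun l _ => ?_
      have hm := Finset.mem_Ico.mp l.2
      exact hlid l.1 hm.1 (le_of_lt hm.2) (icoLtSucc l) w
    simp only [hνid, hrw]
    have hptw : ∀ w : Fin d × ({s // s ∈ S} → Fin d),
        |(∑ l ∈ Finset.Ico M L, chainW d n R r pk S c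
              ((Matrix.mulVec (windowMatrix d n R hR r hrpos pk))^[l - M] μ0) (M+1) M w)
            / ((L:ℝ) - M) - chainW d n R r pk S c μ (M+1) M w|
        ≤ (∑ l ∈ Finset.Ico M L, |chainW d n R r pk S c
              ((Matrix.mulVec (windowMatrix d n R hR r hrpos pk))^[l - M] μ0) (M+1) M w
            - chainW d n R r pk S c μ (M+1) M w|) / ((L:ℝ) - M) := by
      intro w
      have heq : (∑ l ∈ Finset.Ico M L, chainW d n R r pk S c
              ((Matrix.mulVec (windowMatrix d n R hR r hrpos pk))^[l - M] μ0) (M+1) M w)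
            / ((L:ℝ) - M) - chainW d n R r pk S c μ (M+1) M w
          = (∑ l ∈ Finset.Ico M L, (chainW d n R r pk S c
              ((Matrix.mulVec (windowMatrix d n R hR r hrpos pk))^[l - M] μ0) (M+1) M w
            - chainW d n R r pk S c μ (M+1) M w)) / ((L:ℝ) - M) := by
        rw [Finset.sum_sub_distrib, Finset.sum_const, nsmul_eq_mul, hcard, sub_div,
          mul_div_cancel_left₀ _ hLM.ne']
      rw [heq, abs_div, abs_of_pos hLM]
      exact (div_le_div_iff_of_pos_right hLM).mpr (Finset.abs_sum_le_sum_abs _ _)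
    calc (∑ w, |(∑ l ∈ Finset.Ico M L, chainW d n R r pk S c
              ((Matrix.mulVec (windowMatrix d n R hR r hrpos pk))^[l - M] μ0) (M+1) M w)
            / ((L:ℝ) - M) - chainW d n R r pk S c μ (M+1) M w|) / 2
        ≤ (∑ w, (∑ l ∈ Finset.Ico M L, |chainW d n R r pk S c
              ((Matrix.mulVec (windowMatrix d n R hR r hrpos pk))^[l - M] μ0) (M+1) M w
            - chainW d n R r pk S c μ (M+1) M w|) / ((L:ℝ) - M)) / 2 :=
          (div_le_div_iff_of_pos_right (by norm_num : (0:ℝ) < 2)).mpr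
            (Finset.sum_le_sum fun w _ => hptw w)
      _ = (∑ l ∈ Finset.Ico M L, ∑ w, |chainW d n R r pk S c
              ((Matrix.mulVec (windowMatrix d n R hR r hrpos pk))^[l - M] μ0) (M+1) M w
            - chainW d n R r pk S c μ (M+1) M w|) / (((L:ℝ) - M) * 2) := by
          rw [← Finset.sum_div, Finset.sum_comm, div_div]
      _ ≤ (∑ l ∈ Finset.Ico M L, lam ^ (l - M) * Real.sqrt (chiSq μ0 μ))
            / (((L:ℝ) - M) * 2) :=
          (div_le_div_iff_of_pos_right (by positivity)).mpr
            (Finset.sum_le_sum fun l _ => hTV (l - M))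
      _ = ((∑ i ∈ Finset.range (L - M), lam ^ i) * Real.sqrt (chiSq μ0 μ))
            / (((L:ℝ) - M) * 2) := by
          rw [Finset.sum_Ico_eq_sum_range]
          simp only [Nat.add_sub_cancel_left]
          rw [← Finset.sum_mul]
      _ ≤ ((1 / (1 - lam)) * Real.sqrt (chiSq μ0 μ)) / (((L:ℝ) - M) * 2) :=
          (div_le_div_iff_of_pos_right (by positivity)).mpr
            (mul_le_mul_of_nonneg_right hgeom (Real.sqrt_nonneg _))
      _ ≤ 2 * Real.sqrt (chiSq μ0 μ + 1) / (L * (1 - lam)) := by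
          rw [div_le_div_iff₀ (by positivity) (by positivity)]
          have hL2 : (L:ℝ) ≤ 2 * ((L:ℝ) - M) := by
            have hcast : ((2 * M : ℕ):ℝ) ≤ (L:ℝ) := by exact_mod_cast hML
            push_cast at hcast
            linarith
          have he : 1 / (1 - lam) * Real.sqrt (chiSq μ0 μ) * ((L:ℝ) * (1 - lam))
              = Real.sqrt (chiSq μ0 μ) * L := by
            field_simp
          rw [he]
          have h1 : Real.sqrt (chiSq μ0 μ) * L
              ≤ Real.sqrt (chiSq μ0 μ + 1) * (2 * ((L:ℝ) - M)) :=
            mul_le_mul hsB hL2 hL0.le hB0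
          nlinarith [mul_nonneg hB0 hLM.le]
  · unfold tvDist
    have hrw2 : ∀ w : Fin d × ({s // s ∈ S} → Fin d),
        |windowLaw d (L + 1) S (ngramProb d n R (L + 1) r pk μ0 (by omega)) L
            (Nat.lt_succ_self L) w
          - windowLaw d (M + 1) S (ngramProb d n R (M + 1) r pk μ (by omega)) M
            (Nat.lt_succ_self M) w|
        = |chainW d n R r pk S c
            ((Matrix.mulVec (windowMatrix d n R hR r hrpos pk))^[L - M] μ0) (M+1) M w
          - chainW d n R r pk S c μ (M+1) M w| := by
      intro w
      rw [hlid L (by omega) le_rfl (Nat.lt_succ_self L) w, hνid (Nat.lt_succ_self M) w]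
    rw [Finset.sum_congr rfl fun w _ => hrw2 w]
    have h := hTV (L - M)
    have hpow : 0 ≤ lam ^ (L - M) := pow_nonneg hlam0 _
    have h2 : lam ^ (L - M) * Real.sqrt (chiSq μ0 μ)
        ≤ lam ^ (L - M) * Real.sqrt (chiSq μ0 μ + 1) :=
      mul_le_mul_of_nonneg_left hsB hpow
    have h3 : 0 ≤ lam ^ (L - M) * Real.sqrt (chiSq μ0 μ + 1) := mul_nonneg hpow hB0
    linarith
end

section
/- In the multi-head feature setup, fix S* ∈ [H]_{≤D} with S* ⊆ {1,…,min(H,M)}, and set Δ₁ = 1 − p_{S*} and Δ₂ = 1 − ∏_{h∈S*} (σ^{(h)}_{−h})². Then for every l with M+1 ≤ l ≤ L: | s_l − ∏_{h∈S*} 1{x_{l−h} = x_{L+1−h}} | ≤ Δ₁ + Δ₂. -/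
open Finset

lemma ind_sum (d : ℕ) (u w : Fin d) :
    (∑ kk : Fin d, (if u = kk then (1:ℝ) else 0) * (if w = kk then 1 else 0))
      = if u = w then 1 else 0 := by
  rw [Finset.sum_eq_single u]
  · simp [eq_comm]
  · intro b _ hb; simp [Ne.symm hb]
  · simp

lemma head_eq (d M : ℕ) (τ : ℕ → ℝ) (y z : ℕ → Fin d) :
    (∑ kk : Fin d, (∑ i ∈ Finset.Icc 1 M, τ i * (if y i = kk then (1:ℝ) else 0)) *
        (∑ i ∈ Finset.Icc 1 M, τ i * (if z i = kk then (1:ℝ) else 0)))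
      = ∑ i ∈ Finset.Icc 1 M, ∑ j ∈ Finset.Icc 1 M,
          τ i * τ j * (if y i = z j then (1:ℝ) else 0) := by
  simp_rw [Finset.sum_mul, Finset.mul_sum]
  rw [Finset.sum_comm]
  refine Finset.sum_congr rfl fun i _ => ?_
  rw [Finset.sum_comm]
  refine Finset.sum_congr rfl fun j _ => ?_
  rw [← ind_sum d (y i) (z j), Finset.mul_sum]
  refine Finset.sum_congr rfl fun kk _ => ?_
  ring

lemma aux (d H M D : ℕ)
    (σ : ℕ → ℕ → ℝ) (hσ0 : ∀ h i, 0 ≤ σ h i)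
    (hσ1 : ∀ h ∈ Finset.Icc 1 H, ∑ i ∈ Finset.Icc 1 M, σ h i = 1)
    (p : Finset ℕ → ℝ) (hp0 : ∀ S, 0 ≤ p S)
    (hp1 : ∑ S ∈ (Finset.Icc 1 H).powerset.filter (fun S => S.card ≤ D), p S = 1)
    (Sstar : Finset ℕ)
    (hSstar : Sstar ∈ (Finset.Icc 1 H).powerset.filter (fun S => S.card ≤ D))
    (hSstarM : ∀ h ∈ Sstar, h ≤ M)
    (y z : ℕ → Fin d) :
    |(∑ S ∈ (Finset.Icc 1 H).powerset.filter (fun S => S.card ≤ D),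
          p S * ∏ h ∈ S,
            ∑ kk : Fin d,
              (∑ i ∈ Finset.Icc 1 M, σ h i * (if y i = kk then (1 : ℝ) else 0)) *
              (∑ i ∈ Finset.Icc 1 M, σ h i * (if z i = kk then (1 : ℝ) else 0))) -
        ∏ h ∈ Sstar, (if y h = z h then (1 : ℝ) else 0)|
      ≤ (1 - p Sstar) + (1 - ∏ h ∈ Sstar, σ h h ^ 2) := by
  set F := (Finset.Icc 1 H).powerset.filter (fun S => S.card ≤ D) with hF
  set B : ℕ → ℝ := fun h => ∑ i ∈ Finset.Icc 1 M, ∑ j ∈ Finset.Icc 1 M,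
      σ h i * σ h j * (if y i = z j then (1:ℝ) else 0) with hB
  have hrw : ∀ h : ℕ, (∑ kk : Fin d,
      (∑ i ∈ Finset.Icc 1 M, σ h i * (if y i = kk then (1 : ℝ) else 0)) *
      (∑ i ∈ Finset.Icc 1 M, σ h i * (if z i = kk then (1 : ℝ) else 0))) = B h :=
    fun h => head_eq d M (σ h) y z
  simp only [hrw]
  -- basic bounds on B
  have hB0 : ∀ h, 0 ≤ B h := by
    intro h
    refine Finset.sum_nonneg fun i _ => Finset.sum_nonneg fun j _ => ?_
    have := hσ0 h i; have := hσ0 h j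
    positivity
  have hB1 : ∀ h ∈ Finset.Icc 1 H, B h ≤ 1 := by
    intro h hh
    have : B h ≤ ∑ i ∈ Finset.Icc 1 M, ∑ j ∈ Finset.Icc 1 M, σ h i * σ h j := by
      refine Finset.sum_le_sum fun i _ => Finset.sum_le_sum fun j _ => ?_
      have hnn : 0 ≤ σ h i * σ h j := mul_nonneg (hσ0 h i) (hσ0 h j)
      split <;> nlinarith
    calc B h ≤ ∑ i ∈ Finset.Icc 1 M, ∑ j ∈ Finset.Icc 1 M, σ h i * σ h j := this
      _ = (∑ i ∈ Finset.Icc 1 M, σ h i) * (∑ j ∈ Finset.Icc 1 M, σ h j) := by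
          rw [Finset.sum_mul_sum]
      _ = 1 := by rw [hσ1 h hh]; ring
  have hSsub : Sstar ⊆ Finset.Icc 1 H := by
    have := (Finset.mem_filter.mp hSstar).1; exact Finset.mem_powerset.mp this
  have hmemM : ∀ h ∈ Sstar, h ∈ Finset.Icc 1 M := by
    intro h hh
    have h1 := Finset.mem_Icc.mp (hSsub hh)
    exact Finset.mem_Icc.mpr ⟨h1.1, hSstarM h hh⟩
  have hσle1 : ∀ h ∈ Sstar, σ h h ≤ 1 := by
    intro h hh
    have := Finset.single_le_sum (f := σ h) (fun i _ => hσ0 h i) (hmemM h hh)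
    rw [hσ1 h (hSsub hh)] at this; exact this
  -- lower bound when match
  have hAlow : ∀ h ∈ Sstar, y h = z h → σ h h ^ 2 ≤ B h := by
    intro h hh heq
    have h1 : σ h h * σ h h * (if y h = z h then (1:ℝ) else 0)
        ≤ ∑ j ∈ Finset.Icc 1 M, σ h h * σ h j * (if y h = z j then (1:ℝ) else 0) := by
      refine Finset.single_le_sum
        (f := fun j => σ h h * σ h j * (if y h = z j then (1:ℝ) else 0))
        (fun j _ => ?_) (hmemM h hh)
      have := hσ0 h h; have := hσ0 h j
      split <;> nlinarith
    have h2 : (∑ j ∈ Finset.Icc 1 M, σ h h * σ h j * (if y h = z j then (1:ℝ) else 0)) ≤ B h := by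
      refine Finset.single_le_sum (f := fun i => ∑ j ∈ Finset.Icc 1 M,
          σ h i * σ h j * (if y i = z j then (1:ℝ) else 0)) (fun i _ => ?_) (hmemM h hh)
      refine Finset.sum_nonneg fun j _ => ?_
      have := hσ0 h i; have := hσ0 h j
      split <;> nlinarith
    rw [if_pos heq, mul_one] at h1
    nlinarith
  -- upper bound when mismatch
  have hAhigh : ∀ h ∈ Sstar, y h ≠ z h → B h ≤ 1 - σ h h ^ 2 := by
    intro h hh hne
    have hprod : B h = ∑ q ∈ Finset.Icc 1 M ×ˢ Finset.Icc 1 M,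
        σ h q.1 * σ h q.2 * (if y q.1 = z q.2 then (1:ℝ) else 0) := by
      rw [Finset.sum_product]
    have hhm : (h, h) ∈ Finset.Icc 1 M ×ˢ Finset.Icc 1 M :=
      Finset.mem_product.mpr ⟨hmemM h hh, hmemM h hh⟩
    have hdiag : σ h h * σ h h * (if y h = z h then (1:ℝ) else 0) = 0 := by simp [hne]
    have hsplit := (Finset.add_sum_erase _ (fun q : ℕ × ℕ =>
        σ h q.1 * σ h q.2 * (if y q.1 = z q.2 then (1:ℝ) else 0)) hhm).symm
    have hsplit2 := (Finset.add_sum_erase _ (fun q : ℕ × ℕ =>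
        σ h q.1 * σ h q.2) hhm).symm
    have htot : ∑ q ∈ Finset.Icc 1 M ×ˢ Finset.Icc 1 M, σ h q.1 * σ h q.2 = 1 := by
      rw [Finset.sum_product (f := fun q : ℕ × ℕ => σ h q.1 * σ h q.2)]
      rw [show (∑ i ∈ Finset.Icc 1 M, ∑ j ∈ Finset.Icc 1 M, σ h i * σ h j)
          = (∑ i ∈ Finset.Icc 1 M, σ h i) * (∑ j ∈ Finset.Icc 1 M, σ h j) from
          (Finset.sum_mul_sum _ _ _ _).symm, hσ1 h (hSsub hh)]
      ring
    have hle : ∑ q ∈ (Finset.Icc 1 M ×ˢ Finset.Icc 1 M).erase (h, h),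
        σ h q.1 * σ h q.2 * (if y q.1 = z q.2 then (1:ℝ) else 0)
        ≤ ∑ q ∈ (Finset.Icc 1 M ×ˢ Finset.Icc 1 M).erase (h, h), σ h q.1 * σ h q.2 := by
      refine Finset.sum_le_sum fun q _ => ?_
      have := hσ0 h q.1; have := hσ0 h q.2
      split <;> nlinarith
    rw [hprod, hsplit, hdiag]
    have : σ h h * σ h h = σ h h ^ 2 := by ring
    linarith [hsplit2 ▸ htot]
  -- products over sets
  have hP0 : ∀ S ∈ F, 0 ≤ ∏ h ∈ S, B h := fun S _ =>
    Finset.prod_nonneg fun h _ => hB0 h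
  have hP1 : ∀ S ∈ F, ∏ h ∈ S, B h ≤ 1 := by
    intro S hS
    have hsub : S ⊆ Finset.Icc 1 H :=
      Finset.mem_powerset.mp (Finset.mem_filter.mp hS).1
    exact Finset.prod_le_one (fun h hh => hB0 h) (fun h hh => hB1 h (hsub hh))
  set P := ∏ h ∈ Sstar, B h with hP
  set I := ∏ h ∈ Sstar, (if y h = z h then (1:ℝ) else 0) with hI
  set Q := ∏ h ∈ Sstar, σ h h ^ 2 with hQ
  have hQ0 : 0 ≤ Q := Finset.prod_nonneg fun h _ => sq_nonneg _
  have hQ1 : Q ≤ 1 := Finset.prod_le_one (fun h _ => sq_nonneg _)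
      (fun h hh => by nlinarith [hσle1 h hh, hσ0 h h])
  have hP0' : 0 ≤ P := hP0 Sstar hSstar
  have hP1' : P ≤ 1 := hP1 Sstar hSstar
  -- |P - I| ≤ 1 - Q
  have hPI : |P - I| ≤ 1 - Q := by
    by_cases hall : ∀ h ∈ Sstar, y h = z h
    · have hI1 : I = 1 := Finset.prod_eq_one fun h hh => by simp [hall h hh]
      have hPQ : Q ≤ P :=
        Finset.prod_le_prod (fun h hh => sq_nonneg _) (fun h hh => hAlow h hh (hall h hh))
      rw [hI1, abs_le]; constructor <;> linarith
    · push_neg at hall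
      obtain ⟨h0, hh0, hne⟩ := hall
      have hI0 : I = 0 := Finset.prod_eq_zero hh0 (by simp [hne])
      have hPle : P ≤ B h0 := by
        rw [hP, ← Finset.mul_prod_erase _ _ hh0]
        have h1 : ∏ h ∈ Sstar.erase h0, B h ≤ 1 :=
          Finset.prod_le_one (fun h _ => hB0 h)
            (fun h hh => hB1 h (hSsub (Finset.mem_of_mem_erase hh)))
        have h2 : 0 ≤ ∏ h ∈ Sstar.erase h0, B h :=
          Finset.prod_nonneg fun h _ => hB0 h
        nlinarith [hB0 h0]
      have hQle : Q ≤ σ h0 h0 ^ 2 := by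
        rw [hQ, ← Finset.mul_prod_erase _ _ hh0]
        have h1 : ∏ h ∈ Sstar.erase h0, σ h h ^ 2 ≤ 1 :=
          Finset.prod_le_one (fun h _ => sq_nonneg _)
            (fun h hh => by
              have := hσle1 h (Finset.mem_of_mem_erase hh)
              have := hσ0 h h; nlinarith)
        have h2 : 0 ≤ ∏ h ∈ Sstar.erase h0, σ h h ^ 2 :=
          Finset.prod_nonneg fun h _ => sq_nonneg _
        nlinarith [sq_nonneg (σ h0 h0)]
      have := hAhigh h0 hh0 hne
      rw [hI0, abs_le]; constructor <;> linarith
  -- split sum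
  have hsum := (Finset.add_sum_erase F (fun S => p S * ∏ h ∈ S, B h) hSstar).symm
  have hpsum := (Finset.add_sum_erase F p hSstar).symm
  have hR0 : 0 ≤ ∑ S ∈ F.erase Sstar, p S * ∏ h ∈ S, B h :=
    Finset.sum_nonneg fun S hS =>
      mul_nonneg (hp0 S) (hP0 S (Finset.mem_of_mem_erase hS))
  have hR1 : ∑ S ∈ F.erase Sstar, p S * ∏ h ∈ S, B h ≤ ∑ S ∈ F.erase Sstar, p S := by
    refine Finset.sum_le_sum fun S hS => ?_
    have := hP1 S (Finset.mem_of_mem_erase hS)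
    nlinarith [hp0 S, hP0 S (Finset.mem_of_mem_erase hS)]
  have hRsum : ∑ S ∈ F.erase Sstar, p S = 1 - p Sstar := by
    rw [hpsum] at hp1; linarith
  have hpS1 : p Sstar ≤ 1 := by nlinarith [hRsum ▸ hR0.trans hR1]
  rw [hsum]
  rw [abs_le] at hPI ⊢
  constructor <;> nlinarith [hp0 Sstar, mul_nonneg (hp0 Sstar) hP0',
    mul_nonneg (sub_nonneg.mpr hpS1) hP0',
    mul_nonneg (sub_nonneg.mpr hpS1) (sub_nonneg.mpr hP1'), hRsum ▸ hR1]

/-- Model misspecification error: in the multi-head feature setup, the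
attention score `s_l = Σ_{S ∈ [H]_{≤D}} p_S ∏_{h∈S} ⟨v_l^{(h)}, v_{L+1}^{(h)}⟩` deviates from
the perfect indicator `∏_{h∈S*} 1{x_{l−h} = x_{L+1−h}}` by at most
`Δ₁ + Δ₂ = (1 − p_{S*}) + (1 − ∏_{h∈S*} (σ^{(h)}_{−h})²)`. -/
theorem statement10 (d H M D L : ℕ) (hd : 0 < d) (hH : 0 < H) (hM : 0 < M) (hD : 0 < D)
    (hML : M < L)
    (σ : ℕ → ℕ → ℝ)
    (hσ0 : ∀ h i, 0 ≤ σ h i)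
    (hσ1 : ∀ h ∈ Finset.Icc 1 H, ∑ i ∈ Finset.Icc 1 M, σ h i = 1)
    (p : Finset ℕ → ℝ) (hp0 : ∀ S, 0 ≤ p S)
    (hp1 : ∑ S ∈ (Finset.Icc 1 H).powerset.filter (fun S => S.card ≤ D), p S = 1)
    (Sstar : Finset ℕ)
    (hSstar : Sstar ∈ (Finset.Icc 1 H).powerset.filter (fun S => S.card ≤ D))
    (hSstarM : ∀ h ∈ Sstar, h ≤ M)
    (x : Fin (L + 1) → Fin d)
    (l0 : ℕ) (hl0 : l0 ∈ Finset.Ico M L) :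
    |(∑ S ∈ (Finset.Icc 1 H).powerset.filter (fun S => S.card ≤ D),
          p S * ∏ h ∈ S,
            ∑ kk : Fin d,
              (∑ i ∈ Finset.Icc 1 M, σ h i *
                  (if x ⟨l0 - i, lt_of_le_of_lt (Nat.sub_le _ _)
                      (Nat.lt_succ_of_lt (Finset.mem_Ico.mp hl0).2)⟩ = kk then (1 : ℝ) else 0)) *
              (∑ i ∈ Finset.Icc 1 M, σ h i *
                  (if x ⟨L - i, Nat.lt_succ_of_le (Nat.sub_le _ _)⟩ = kk then (1 : ℝ) else 0))) -
        ∏ h ∈ Sstar,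
          (if x ⟨l0 - h, lt_of_le_of_lt (Nat.sub_le _ _)
                (Nat.lt_succ_of_lt (Finset.mem_Ico.mp hl0).2)⟩ =
              x ⟨L - h, Nat.lt_succ_of_le (Nat.sub_le _ _)⟩ then (1 : ℝ) else 0)|
      ≤ (1 - p Sstar) + (1 - ∏ h ∈ Sstar, σ h h ^ 2) := by
  exact aux d H M D σ hσ0 hσ1 p hp0 hp1 Sstar hSstar hSstarM
    (fun i => x ⟨l0 - i, lt_of_le_of_lt (Nat.sub_le _ _)
        (Nat.lt_succ_of_lt (Finset.mem_Ico.mp hl0).2)⟩)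
    (fun i => x ⟨L - i, Nat.lt_succ_of_le (Nat.sub_le _ _)⟩)
end

section
/- Let d ≥ 1, let M, L be integers with L ≥ M+2, let a ∈ [0,1], ε ∈ (0,1] and C > 0, and let ρ be any probability distribution on sequences X = (x_1,…,x_{L+1}) ∈ 𝒳^{L+1}. For each sequence X, let t(X) = (t_l)_{l=M+1}^{L} be any vector with every t_l ∈ [0,1], let σ_l(a·t) = exp(a·t_l)/Σ_{l′=M+1}^{L} exp(a·t_{l′}), y(k) = Σ_{l=M+1}^{L} σ_l(a·t)·1{x_l = e_k}, and ȳ(k) = (L−M)^{−1} Σ_{l=M+1}^{L} 1{x_l = e_k}, and let f : 𝒳^{L+1} → [−C, C]. Define A = E_{X∼ρ}[ Σ_{l=M+1}^{L} σ_l(a·t) · Σ_{k=1}^{d} ( 1{x_{L+1}=x_l=e_k}/(y(k)+ε) − y(k)·1{x_{L+1}=e_k}/(y(k)+ε) ) · f(X) ] and B = E_{X∼ρ}[ (L−M)^{−1} Σ_{l=M+1}^{L} Σ_{k=1}^{d} ( 1{x_{L+1}=x_l=e_k}/(ȳ(k)+ε) − ȳ(k)·1{x_{L+1}=e_k}/(ȳ(k)+ε)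 ) · f(X) ]. Then |A − B| ≤ 8Cad/ε². -/
open Finset

lemma exp_le_one_add_two_mul {a : ℝ} (h0 : 0 ≤ a) (h1 : a ≤ 1) :
    Real.exp a ≤ 1 + 2 * a := by
  have h := convexOn_exp.2 (Set.mem_univ (0:ℝ)) (Set.mem_univ (1:ℝ))
    (by linarith : (0:ℝ) ≤ 1 - a) h0 (by ring)
  simp only [smul_eq_mul, mul_zero, mul_one, zero_add, Real.exp_zero] at h
  have he : Real.exp 1 ≤ 3 := (Real.exp_one_lt_d9.trans (by norm_num)).le
  nlinarith

lemma key_term (ε a : ℝ) (hε0 : 0 < ε) (hε1 : ε ≤ 1) (ha : 0 ≤ a)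
    (σ u y yb i1 i2 : ℝ)
    (hi10 : 0 ≤ i1) (hi11 : i1 ≤ 1) (hi20 : 0 ≤ i2) (hi21 : i2 ≤ 1)
    (hu : 0 ≤ u) (hσu : |σ - u| ≤ 2 * a * u)
    (hy0 : 0 ≤ y) (hy1 : y ≤ 1) (hyb0 : 0 ≤ yb) (hyb1 : yb ≤ 1)
    (hyyb : |y - yb| ≤ 2 * a) :
    |σ * (i1 / (y + ε) - y * i2 / (y + ε)) - u * (i1 / (yb + ε) - yb * i2 / (yb + ε))|
      ≤ 8 * a * u / ε ^ 2 := by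
  have hp : 0 < y + ε := by linarith
  have hq : 0 < yb + ε := by linarith
  have hεp : ε ≤ y + ε := by linarith
  have hεq : ε ≤ yb + ε := by linarith
  set g1 : ℝ := i1 / (y + ε) - y * i2 / (y + ε) with hg1
  set g2 : ℝ := i1 / (yb + ε) - yb * i2 / (yb + ε) with hg2
  have hg1abs : |g1| ≤ 2 / ε := by
    have h1 : |i1 / (y + ε)| ≤ 1 / ε := by
      rw [abs_of_nonneg (by positivity)]
      exact div_le_div₀ zero_le_one hi11 hε0 hεp
    have h2 : |y * i2 / (y + ε)| ≤ 1 := by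
      rw [abs_of_nonneg (by positivity)]
      rw [div_le_one hp]
      nlinarith
    calc |g1| ≤ |i1 / (y + ε)| + |y * i2 / (y + ε)| := abs_sub _ _
      _ ≤ 1 / ε + 1 := by linarith
      _ ≤ 2 / ε := by
        have h1e : (1:ℝ) ≤ 1 / ε := one_le_one_div hε0 hε1
        have h2e : 2 / ε = 1 / ε + 1 / ε := by ring
        linarith
  have hdiff : |g1 - g2| ≤ 4 * a / ε ^ 2 := by
    have e1 : g1 - g2 = i1 * ((yb - y) / ((y + ε) * (yb + ε)))
        - i2 * (ε * (y - yb) / ((y + ε) * (yb + ε))) := by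
      rw [hg1, hg2]; field_simp; ring
    have hpq : ε ^ 2 ≤ (y + ε) * (yb + ε) := by nlinarith
    have hpq0 : 0 < (y + ε) * (yb + ε) := by positivity
    have b1 : |(yb - y) / ((y + ε) * (yb + ε))| ≤ 2 * a / ε ^ 2 := by
      rw [abs_div, abs_of_pos hpq0]
      apply div_le_div₀ (by positivity) _ (by positivity) hpq
      rw [abs_sub_comm] at hyyb; exact hyyb
    have b2 : |ε * (y - yb) / ((y + ε) * (yb + ε))| ≤ 2 * a / ε ^ 2 := by
      rw [abs_div, abs_of_pos hpq0, abs_mul, abs_of_pos hε0]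
      apply div_le_div₀ (by positivity) _ (by positivity) hpq
      nlinarith [abs_nonneg (y - yb)]
    calc |g1 - g2| ≤ |i1 * ((yb - y) / ((y + ε) * (yb + ε)))|
          + |i2 * (ε * (y - yb) / ((y + ε) * (yb + ε)))| := by rw [e1]; exact abs_sub _ _
      _ ≤ 1 * (2 * a / ε ^ 2) + 1 * (2 * a / ε ^ 2) := by
          rw [abs_mul, abs_mul]
          gcongr
          · rw [abs_of_nonneg hi10]; exact hi11
          · rw [abs_of_nonneg hi20]; exact hi21
      _ = 4 * a / ε ^ 2 := by ring
  have split : σ * g1 - u * g2 = (σ - u) * g1 + u * (g1 - g2) := by ring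
  calc |σ * g1 - u * g2| ≤ |(σ - u) * g1| + |u * (g1 - g2)| := by rw [split]; exact abs_add_le _ _
    _ = |σ - u| * |g1| + u * |g1 - g2| := by rw [abs_mul, abs_mul, abs_of_nonneg hu]
    _ ≤ (2 * a * u) * (2 / ε) + u * (4 * a / ε ^ 2) :=
        add_le_add (mul_le_mul hσu hg1abs (abs_nonneg _) (by positivity))
          (mul_le_mul_of_nonneg_left hdiff hu)
    _ ≤ (2 * a * u) * (2 / ε ^ 2) + u * (4 * a / ε ^ 2) := by
        have hee : (2:ℝ) / ε ≤ 2 / ε ^ 2 := by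
          have h1e : (1:ℝ) / ε ≤ 1 / ε ^ 2 := by
            apply div_le_div₀ zero_le_one le_rfl (by positivity)
            nlinarith
          calc (2:ℝ)/ε = 2 * (1/ε) := by ring
            _ ≤ 2 * (1/ε^2) := by linarith
            _ = 2 / ε^2 := by ring
        have := mul_le_mul_of_nonneg_left hee (by positivity : (0:ℝ) ≤ 2 * a * u)
        linarith
    _ = 8 * a * u / ε ^ 2 := by field_simp; ring

lemma sigma_close {n D E a : ℝ} (hn0 : 0 < n) (hD1 : n ≤ D) (hD2 : D ≤ n * (1 + 2 * a))
    (hE1 : 1 ≤ E) (hE2 : E ≤ 1 + 2 * a) :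
    |E / D - 1 / n| ≤ 2 * a * (1 / n) := by
  have hD0 : 0 < D := lt_of_lt_of_le hn0 hD1
  have e : E / D - 1 / n = (n * E - D) / (n * D) := by
    field_simp
  have hnum : |n * E - D| ≤ 2 * a * D :=
    abs_le.mpr ⟨by nlinarith, by nlinarith⟩
  calc |E / D - 1 / n| = |n * E - D| / (n * D) := by
        rw [e, abs_div, abs_of_pos (show (0:ℝ) < n * D by positivity)]
    _ ≤ (2 * a * D) / (n * D) := by
        apply div_le_div_of_nonneg_right hnum (by positivity) |>.trans_eq rfl
    _ = 2 * a * (1 / n) := by field_simp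

/-- Replacing the attention probabilities `σ_l(a·t)` by the uniform average
(and the attention-weighted token frequency `y` by the uniform frequency `ȳ`) incurs an error
of at most `8Cad/ε²` in the gradient-type expectation, for any sequence distribution `ρ`,
scores `t_l ∈ [0,1]`, `a ∈ [0,1]`, `ε ∈ (0,1]` and `|f| ≤ C`. -/
theorem statement11 (d M L : ℕ) (hd : 0 < d) (hML : M + 2 ≤ L)
    (a ε C : ℝ) (ha0 : 0 ≤ a) (ha1 : a ≤ 1) (hε0 : 0 < ε) (hε1 : ε ≤ 1) (hC : 0 < C)
    (ρ : (Fin (L + 1) → Fin d) → ℝ) (hρ0 : ∀ X, 0 ≤ ρ X) (hρ1 : ∑ X, ρ X = 1)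
    (t : (Fin (L + 1) → Fin d) → ℕ → ℝ)
    (ht : ∀ X, ∀ l ∈ Finset.Ico M L, 0 ≤ t X l ∧ t X l ≤ 1)
    (f : (Fin (L + 1) → Fin d) → ℝ) (hf : ∀ X, |f X| ≤ C) :
    let σw : (Fin (L + 1) → Fin d) → {m // m ∈ Finset.Ico M L} → ℝ := fun X l =>
      Real.exp (a * t X l.1) / ∑ l' ∈ (Finset.Ico M L).attach, Real.exp (a * t X l'.1);
    let y : (Fin (L + 1) → Fin d) → Fin d → ℝ := fun X k =>
      ∑ l ∈ (Finset.Ico M L).attach, σw X l * (if X ⟨l.1, icoLtSucc l⟩ = k then 1 else 0);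
    let ybar : (Fin (L + 1) → Fin d) → Fin d → ℝ := fun X k =>
      (∑ l ∈ (Finset.Ico M L).attach, (if X ⟨l.1, icoLtSucc l⟩ = k then (1 : ℝ) else 0)) /
        ((L : ℝ) - M);
    let A := ∑ X : Fin (L + 1) → Fin d, ρ X *
      ∑ l ∈ (Finset.Ico M L).attach, σw X l *
        ∑ k : Fin d,
          ((if X ⟨L, Nat.lt_succ_self L⟩ = k ∧ X ⟨l.1, icoLtSucc l⟩ = k then (1 : ℝ) else 0) /
              (y X k + ε) -
            y X k * (if X ⟨L, Nat.lt_succ_self L⟩ = k then (1 : ℝ) else 0) / (y X k + ε)) * f X;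
    let B := ∑ X : Fin (L + 1) → Fin d, ρ X *
      ((∑ l ∈ (Finset.Ico M L).attach,
          ∑ k : Fin d,
            ((if X ⟨L, Nat.lt_succ_self L⟩ = k ∧ X ⟨l.1, icoLtSucc l⟩ = k then (1 : ℝ) else 0) /
                (ybar X k + ε) -
              ybar X k * (if X ⟨L, Nat.lt_succ_self L⟩ = k then (1 : ℝ) else 0) /
                (ybar X k + ε)) * f X) /
        ((L : ℝ) - M));
    |A - B| ≤ 8 * C * a * d / ε ^ 2 := by
  intro σw y ybar A B
  classical
  have hMleL : M ≤ L := by omega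
  set n : ℝ := (L : ℝ) - M with hn_def
  have hn2 : (2:ℝ) ≤ n := by
    have h : ((M:ℝ) + 2) ≤ (L:ℝ) := by exact_mod_cast hML
    rw [hn_def]; linarith
  have hn0 : (0:ℝ) < n := by linarith
  have hcard : (((Finset.Ico M L).attach.card : ℕ) : ℝ) = n := by
    rw [Finset.card_attach, Nat.card_Ico, Nat.cast_sub hMleL, hn_def]
  set u : ℝ := 1 / n with hu_def
  have hu0 : (0:ℝ) < u := by positivity
  -- the per-sequence bound
  have keyX : ∀ X : Fin (L + 1) → Fin d,
      |(∑ l ∈ (Finset.Ico M L).attach, σw X l *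
          ∑ k : Fin d,
            ((if X ⟨L, Nat.lt_succ_self L⟩ = k ∧ X ⟨l.1, icoLtSucc l⟩ = k then (1 : ℝ) else 0) /
                (y X k + ε) -
              y X k * (if X ⟨L, Nat.lt_succ_self L⟩ = k then (1 : ℝ) else 0) / (y X k + ε)) * f X)
        - (∑ l ∈ (Finset.Ico M L).attach,
            ∑ k : Fin d,
              ((if X ⟨L, Nat.lt_succ_self L⟩ = k ∧ X ⟨l.1, icoLtSucc l⟩ = k then (1 : ℝ) else 0) /
                  (ybar X k + ε) -
                ybar X k * (if X ⟨L, Nat.lt_succ_self L⟩ = k then (1 : ℝ) else 0) /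
                  (ybar X k + ε)) * f X) / n| ≤ 8 * C * a * d / ε ^ 2 := by
    intro X
    set D := ∑ l' ∈ (Finset.Ico M L).attach, Real.exp (a * t X l'.1) with hD_def
    have hexp1 : ∀ l : {m // m ∈ Finset.Ico M L}, 1 ≤ Real.exp (a * t X l.1) := fun l =>
      Real.one_le_exp (mul_nonneg ha0 (ht X l.1 l.2).1)
    have hexp2 : ∀ l : {m // m ∈ Finset.Ico M L}, Real.exp (a * t X l.1) ≤ 1 + 2 * a := fun l => by
      have h1 : a * t X l.1 ≤ a := by
        have h2 := (ht X l.1 l.2).2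
        nlinarith
      exact (Real.exp_le_exp.mpr h1).trans (exp_le_one_add_two_mul ha0 ha1)
    have hD1 : n ≤ D := by
      calc n = (Finset.Ico M L).attach.card • (1:ℝ) := by rw [nsmul_eq_mul, mul_one, hcard]
        _ ≤ D := Finset.card_nsmul_le_sum _ _ _ (fun l _ => hexp1 l)
    have hD2 : D ≤ n * (1 + 2 * a) := by
      calc D ≤ (Finset.Ico M L).attach.card • (1 + 2 * a) :=
            Finset.sum_le_card_nsmul _ _ _ (fun l _ => hexp2 l)
        _ = n * (1 + 2 * a) := by rw [nsmul_eq_mul, hcard]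
    have hD0 : (0:ℝ) < D := lt_of_lt_of_le hn0 hD1
    have hσdef : ∀ l, σw X l = Real.exp (a * t X l.1) / D := fun l => rfl
    have hσ0 : ∀ l, 0 ≤ σw X l := fun l => by rw [hσdef]; positivity
    have hσu : ∀ l : {m // m ∈ Finset.Ico M L}, |σw X l - u| ≤ 2 * a * u := fun l => by
      rw [hσdef, hu_def]
      exact sigma_close hn0 hD1 hD2 (hexp1 l) (hexp2 l)
    have hσsum : ∑ l ∈ (Finset.Ico M L).attach, σw X l = 1 := by
      simp only [hσdef]
      rw [← Finset.sum_div, ← hD_def]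
      exact div_self hD0.ne'
    have hy0 : ∀ k, 0 ≤ y X k := fun k =>
      Finset.sum_nonneg (fun l _ => mul_nonneg (hσ0 l) (by split <;> norm_num))
    have hy1 : ∀ k, y X k ≤ 1 := fun k => by
      have h1 : y X k ≤ ∑ l ∈ (Finset.Ico M L).attach, σw X l :=
        Finset.sum_le_sum (fun l _ => mul_le_of_le_one_right (hσ0 l) (by split <;> norm_num))
      rw [hσsum] at h1; exact h1
    have hybdef : ∀ k, ybar X k =
        (∑ l ∈ (Finset.Ico M L).attach,
          (if X ⟨l.1, icoLtSucc l⟩ = k then (1 : ℝ) else 0)) / n := fun k => rfl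
    have hyb0 : ∀ k, 0 ≤ ybar X k := fun k => by
      rw [hybdef]
      exact div_nonneg (Finset.sum_nonneg (fun l _ => by split <;> norm_num)) hn0.le
    have hyb1 : ∀ k, ybar X k ≤ 1 := fun k => by
      rw [hybdef, div_le_one hn0]
      calc (∑ l ∈ (Finset.Ico M L).attach,
            (if X ⟨l.1, icoLtSucc l⟩ = k then (1 : ℝ) else 0))
          ≤ (Finset.Ico M L).attach.card • (1:ℝ) :=
            Finset.sum_le_card_nsmul _ _ _ (fun l _ => by split <;> norm_num)
        _ = n := by rw [nsmul_eq_mul, mul_one, hcard]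
    have hyyb : ∀ k, |y X k - ybar X k| ≤ 2 * a := fun k => by
      have e1 : ybar X k = ∑ l ∈ (Finset.Ico M L).attach,
          u * (if X ⟨l.1, icoLtSucc l⟩ = k then (1 : ℝ) else 0) := by
        rw [hybdef, Finset.sum_div]
        exact Finset.sum_congr rfl (fun l _ => by rw [hu_def]; ring)
      have e2 : y X k - ybar X k = ∑ l ∈ (Finset.Ico M L).attach,
          (σw X l - u) * (if X ⟨l.1, icoLtSucc l⟩ = k then (1 : ℝ) else 0) := by
        rw [e1, show y X k = ∑ l ∈ (Finset.Ico M L).attach,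
          σw X l * (if X ⟨l.1, icoLtSucc l⟩ = k then (1:ℝ) else 0) from rfl,
          ← Finset.sum_sub_distrib]
        exact Finset.sum_congr rfl (fun l _ => by ring)
      rw [e2]
      calc |∑ l ∈ (Finset.Ico M L).attach,
            (σw X l - u) * (if X ⟨l.1, icoLtSucc l⟩ = k then (1 : ℝ) else 0)|
          ≤ ∑ l ∈ (Finset.Ico M L).attach,
            |(σw X l - u) * (if X ⟨l.1, icoLtSucc l⟩ = k then (1 : ℝ) else 0)| :=
            Finset.abs_sum_le_sum_abs _ _
        _ ≤ ∑ _l ∈ (Finset.Ico M L).attach, 2 * a * u := by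
            refine Finset.sum_le_sum (fun l _ => ?_)
            rw [abs_mul]
            calc |σw X l - u| * |if X ⟨l.1, icoLtSucc l⟩ = k then (1:ℝ) else 0|
                ≤ (2 * a * u) * 1 :=
                  mul_le_mul (hσu l) (by split <;> norm_num) (abs_nonneg _) (by positivity)
              _ = 2 * a * u := mul_one _
        _ = (Finset.Ico M L).attach.card • (2 * a * u) := Finset.sum_const _
        _ = 2 * a := by rw [nsmul_eq_mul, hcard, hu_def]; field_simp
    -- expand both sums to a common double-sum shape
    have etrans : (∑ l ∈ (Finset.Ico M L).attach, σw X l *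
          ∑ k : Fin d,
            ((if X ⟨L, Nat.lt_succ_self L⟩ = k ∧ X ⟨l.1, icoLtSucc l⟩ = k then (1 : ℝ) else 0) /
                (y X k + ε) -
              y X k * (if X ⟨L, Nat.lt_succ_self L⟩ = k then (1 : ℝ) else 0) / (y X k + ε)) * f X)
        - (∑ l ∈ (Finset.Ico M L).attach,
            ∑ k : Fin d,
              ((if X ⟨L, Nat.lt_succ_self L⟩ = k ∧ X ⟨l.1, icoLtSucc l⟩ = k then (1 : ℝ) else 0) /
                  (ybar X k + ε) -
                ybar X k * (if X ⟨L, Nat.lt_succ_self L⟩ = k then (1 : ℝ) else 0) /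
                  (ybar X k + ε)) * f X) / n
        = ∑ l ∈ (Finset.Ico M L).attach, ∑ k : Fin d,
            (σw X l *
              ((if X ⟨L, Nat.lt_succ_self L⟩ = k ∧ X ⟨l.1, icoLtSucc l⟩ = k then (1 : ℝ) else 0) /
                  (y X k + ε) -
                y X k * (if X ⟨L, Nat.lt_succ_self L⟩ = k then (1 : ℝ) else 0) / (y X k + ε))
            - u *
              ((if X ⟨L, Nat.lt_succ_self L⟩ = k ∧ X ⟨l.1, icoLtSucc l⟩ = k then (1 : ℝ) else 0) /
                  (ybar X k + ε) -
                ybar X k * (if X ⟨L, Nat.lt_succ_self L⟩ = k then (1 : ℝ) else 0) /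
                  (ybar X k + ε))) * f X := by
      rw [Finset.sum_div, ← Finset.sum_sub_distrib]
      refine Finset.sum_congr rfl (fun l _ => ?_)
      rw [Finset.mul_sum, Finset.sum_div, ← Finset.sum_sub_distrib]
      refine Finset.sum_congr rfl (fun k _ => ?_)
      rw [hu_def]; ring
    rw [etrans]
    calc |∑ l ∈ (Finset.Ico M L).attach, ∑ k : Fin d, _|
        ≤ ∑ l ∈ (Finset.Ico M L).attach, ∑ k : Fin d,
          |(σw X l *
              ((if X ⟨L, Nat.lt_succ_self L⟩ = k ∧ X ⟨l.1, icoLtSucc l⟩ = k then (1 : ℝ) else 0) /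
                  (y X k + ε) -
                y X k * (if X ⟨L, Nat.lt_succ_self L⟩ = k then (1 : ℝ) else 0) / (y X k + ε))
            - u *
              ((if X ⟨L, Nat.lt_succ_self L⟩ = k ∧ X ⟨l.1, icoLtSucc l⟩ = k then (1 : ℝ) else 0) /
                  (ybar X k + ε) -
                ybar X k * (if X ⟨L, Nat.lt_succ_self L⟩ = k then (1 : ℝ) else 0) /
                  (ybar X k + ε))) * f X| :=
          (Finset.abs_sum_le_sum_abs _ _).trans
            (Finset.sum_le_sum (fun l _ => Finset.abs_sum_le_sum_abs _ _))
      _ ≤ ∑ _l ∈ (Finset.Ico M L).attach, ∑ _k : Fin d, (8 * a * u / ε ^ 2) * C := by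
          refine Finset.sum_le_sum (fun l _ => Finset.sum_le_sum (fun k _ => ?_))
          rw [abs_mul]
          refine mul_le_mul ?_ (hf X) (abs_nonneg _) (by positivity)
          exact key_term ε a hε0 hε1 ha0 _ _ _ _ _ _
            (by split <;> norm_num) (by split <;> norm_num)
            (by split <;> norm_num) (by split <;> norm_num)
            hu0.le (hσu l) (hy0 k) (hy1 k) (hyb0 k) (hyb1 k) (hyyb k)
      _ = 8 * C * a * d / ε ^ 2 := by
          simp only [Finset.sum_const, Finset.card_univ, Fintype.card_fin, nsmul_eq_mul]
          rw [hcard, hu_def]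
          field_simp
  -- assemble
  have hA' : A = ∑ X : Fin (L + 1) → Fin d, ρ X *
      ∑ l ∈ (Finset.Ico M L).attach, σw X l *
        ∑ k : Fin d,
          ((if X ⟨L, Nat.lt_succ_self L⟩ = k ∧ X ⟨l.1, icoLtSucc l⟩ = k then (1 : ℝ) else 0) /
              (y X k + ε) -
            y X k * (if X ⟨L, Nat.lt_succ_self L⟩ = k then (1 : ℝ) else 0) / (y X k + ε)) * f X :=
    rfl
  have hB' : B = ∑ X : Fin (L + 1) → Fin d, ρ X *
      ((∑ l ∈ (Finset.Ico M L).attach,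
          ∑ k : Fin d,
            ((if X ⟨L, Nat.lt_succ_self L⟩ = k ∧ X ⟨l.1, icoLtSucc l⟩ = k then (1 : ℝ) else 0) /
                (ybar X k + ε) -
              ybar X k * (if X ⟨L, Nat.lt_succ_self L⟩ = k then (1 : ℝ) else 0) /
                (ybar X k + ε)) * f X) / n) := rfl
  rw [hA', hB', ← Finset.sum_sub_distrib]
  calc |∑ X : Fin (L + 1) → Fin d, _|
      ≤ ∑ X : Fin (L + 1) → Fin d,
        |ρ X * (∑ l ∈ (Finset.Ico M L).attach, σw X l *
          ∑ k : Fin d,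
            ((if X ⟨L, Nat.lt_succ_self L⟩ = k ∧ X ⟨l.1, icoLtSucc l⟩ = k then (1 : ℝ) else 0) /
                (y X k + ε) -
              y X k * (if X ⟨L, Nat.lt_succ_self L⟩ = k then (1 : ℝ) else 0) / (y X k + ε)) * f X)
          - ρ X * ((∑ l ∈ (Finset.Ico M L).attach,
            ∑ k : Fin d,
              ((if X ⟨L, Nat.lt_succ_self L⟩ = k ∧ X ⟨l.1, icoLtSucc l⟩ = k then (1 : ℝ) else 0) /
                  (ybar X k + ε) -
                ybar X k * (if X ⟨L, Nat.lt_succ_self L⟩ = k then (1 : ℝ) else 0) /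
                  (ybar X k + ε)) * f X) / n)| := Finset.abs_sum_le_sum_abs _ _
    _ ≤ ∑ X : Fin (L + 1) → Fin d, ρ X * (8 * C * a * d / ε ^ 2) := by
        refine Finset.sum_le_sum (fun X _ => ?_)
        rw [← mul_sub, abs_mul, abs_of_nonneg (hρ0 X)]
        exact mul_le_mul_of_nonneg_left (keyX X) (hρ0 X)
    _ = 8 * C * a * d / ε ^ 2 := by rw [← Finset.sum_mul, hρ1, one_mul]
end

section
/- Let μ be a probability distribution on 𝒳^{M+1} with μ(z = e) > 0 for every e ∈ 𝒳. Let S be a finite index set and let (i_h, j_h)_{h∈S} be pairs of indices in {1,…,M}², and let S₁ = {i_h : h ∈ S} and S₂ = {j_h : h ∈ S} be the sets of their distinct values. Let (x, X) and (z, Z) be independent, each distributed as μ, with X = (x_{−M},…,x_{−1}) and Z = (z_{−M},…,z_{−1}). Then E[ ∏_{h∈S} 1{x_{−i_h} = z_{−j_h}} · ( Σ_{k=1}^{d} 1{x = z = e_k}/μ(z = e_k) − 1 ) ] ≤ ( Ĩ_{χ²}(S₁) + Ĩ_{χ²}(S₂) ) / 2. -/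
open Finset

/-- The single-token marginal at the last coordinate of a distribution on `𝒳^{M+1}`. -/
noncomputable def tokenMarg (d M : ℕ) (μb : (Fin (M + 1) → Fin d) → ℝ) (e : Fin d) : ℝ :=
  ∑ y : Fin (M + 1) → Fin d, if y ⟨M, Nat.lt_succ_self M⟩ = e then μb y else 0

/-- The modified χ²-mutual information
`Ĩ_{χ²}(S) = Σ_E [ Σ_e μ(z = e, Z_{-S} = E)² / μ(z = e) - μ(Z_{-S} = E)² ]`. -/
noncomputable def modMI (d M : ℕ) (μb : (Fin (M + 1) → Fin d) → ℝ) (S : Finset ℕ) : ℝ :=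
  ∑ E : {s // s ∈ S} → Fin d,
    ((∑ e : Fin d,
        windowLaw d (M + 1) S μb M (Nat.lt_succ_self M) (e, E) ^ 2 / tokenMarg d M μb e) -
      (∑ e : Fin d, windowLaw d (M + 1) S μb M (Nat.lt_succ_self M) (e, E)) ^ 2)

lemma aux_cs {d : ℕ} (p v : Fin d → ℝ) (hp : ∀ k, 0 < p k) (hps : ∑ k, p k = 1) :
    (∑ k, v k) ^ 2 ≤ ∑ k, v k ^ 2 / p k := by
  have := Finset.sq_sum_div_le_sum_sq_div Finset.univ v (fun k _ => hp k)
  rwa [hps, div_one] at this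

lemma aux_pair {d : ℕ} (p g h : Fin d → ℝ) (hp : ∀ k, 0 < p k) (hps : ∑ k, p k = 1) :
    (∑ e, g e * h e / p e) - (∑ e, g e) * (∑ e, h e)
      ≤ (((∑ k, g k ^ 2 / p k) - (∑ k, g k) ^ 2) + ((∑ k, h k ^ 2 / p k) - (∑ k, h k) ^ 2)) / 2 := by
  have hcs := aux_cs p (fun k => g k - h k) hp hps
  have e1 : ∑ k, (g k - h k) ^ 2 / p k
      = (∑ k, g k ^ 2 / p k) - 2 * (∑ k, g k * h k / p k) + (∑ k, h k ^ 2 / p k) := by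
    have h1 : ∀ k : Fin d, (g k - h k) ^ 2 / p k
        = g k ^ 2 / p k - 2 * (g k * h k / p k) + h k ^ 2 / p k := fun k => by ring
    rw [Finset.sum_congr rfl fun k _ => h1 k, Finset.sum_add_distrib, Finset.sum_sub_distrib,
      ← Finset.mul_sum]
  have e2 : (∑ k, (g k - h k)) = (∑ k, g k) - (∑ k, h k) := Finset.sum_sub_distrib _ _
  rw [e1, e2] at hcs
  nlinarith [hcs]

lemma aux_inner {d : ℕ} (p g h : Fin d → ℝ) (hp : ∀ k, 0 < p k) (hps : ∑ k, p k = 1)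
    (c : ℝ) (hc : 0 ≤ c) :
    ∑ e : Fin d, ∑ e' : Fin d, g e * (h e' *
        (c * ((∑ k : Fin d, (if e = k ∧ e' = k then (1 : ℝ) else 0) / p k) - 1)))
      ≤ c * ((((∑ k, g k ^ 2 / p k) - (∑ k, g k) ^ 2)
          + ((∑ k, h k ^ 2 / p k) - (∑ k, h k) ^ 2)) / 2) := by
  have key : ∀ e e' : Fin d, (∑ k : Fin d, (if e = k ∧ e' = k then (1 : ℝ) else 0) / p k)
      = if e = e' then 1 / p e else 0 := by
    intro e e'
    by_cases hee : e = e'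
    · subst hee
      simp only [and_self]
      have h1 : ∀ k : Fin d, (if e = k then (1 : ℝ) else 0) / p k
          = if e = k then 1 / p k else 0 := fun k => by split_ifs <;> simp
      rw [Finset.sum_congr rfl fun k _ => h1 k, Finset.sum_ite_eq]
      simp
    · have h1 : ∀ k : Fin d, (if e = k ∧ e' = k then (1 : ℝ) else 0) / p k = 0 := fun k => by
        split_ifs with hk
        · exact absurd (hk.1.trans hk.2.symm) hee
        · exact zero_div _
      rw [Finset.sum_congr rfl fun k _ => h1 k, Finset.sum_const_zero, if_neg hee]
  have inner : ∀ e : Fin d, ∑ e' : Fin d, h e' * (if e = e' then 1 / p e else 0) = h e / p e := by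
    intro e
    have h1 : ∀ e' : Fin d, h e' * (if e = e' then 1 / p e else 0)
        = if e = e' then h e' / p e else 0 := fun e' => by
      split_ifs
      · rw [mul_one_div]
      · rw [mul_zero]
    rw [Finset.sum_congr rfl fun e' _ => h1 e', Finset.sum_ite_eq]
    simp
  have e1 : ∑ e : Fin d, ∑ e' : Fin d, g e * (h e' *
        (c * ((∑ k : Fin d, (if e = k ∧ e' = k then (1 : ℝ) else 0) / p k) - 1)))
      = c * ((∑ e, g e * h e / p e) - (∑ e, g e) * (∑ e', h e')) := by
    have step : ∀ e : Fin d, ∑ e' : Fin d, g e * (h e' *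
          (c * ((∑ k : Fin d, (if e = k ∧ e' = k then (1 : ℝ) else 0) / p k) - 1)))
        = c * (g e * (h e / p e)) - c * (g e * ∑ e', h e') := by
      intro e
      have h2 : ∀ e' : Fin d, g e * (h e' *
            (c * ((∑ k : Fin d, (if e = k ∧ e' = k then (1 : ℝ) else 0) / p k) - 1)))
          = c * (g e * (h e' * (if e = e' then 1 / p e else 0))) - c * (g e * h e') :=
        fun e' => by rw [key e e']; ring
      rw [Finset.sum_congr rfl fun e' _ => h2 e', Finset.sum_sub_distrib,
        ← Finset.mul_sum, ← Finset.mul_sum, ← Finset.mul_sum, ← Finset.mul_sum, inner e]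
    rw [Finset.sum_congr rfl fun e _ => step e, Finset.sum_sub_distrib,
      ← Finset.mul_sum, ← Finset.mul_sum, ← mul_sub]
    congr 1
    congr 1
    · exact Finset.sum_congr rfl fun e _ => by rw [mul_div_assoc]
    · rw [← Finset.sum_mul]
  rw [e1]
  exact mul_le_mul_of_nonneg_left (aux_pair p g h hp hps) hc

lemma aux_main {d : ℕ} {A B : Type} [Fintype A] [Fintype B]
    (p : Fin d → ℝ) (hp : ∀ k, 0 < p k) (hps : ∑ k, p k = 1)
    (g : Fin d × A → ℝ) (h : Fin d × B → ℝ) (χ : A → B → ℝ)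
    (hχ0 : ∀ a b, 0 ≤ χ a b) (hχ1 : ∀ b, ∑ a, χ a b ≤ 1) (hχ2 : ∀ a, ∑ b, χ a b ≤ 1) :
    ∑ w₁ : Fin d × A, g w₁ * (∑ w₂ : Fin d × B, h w₂ *
        (χ w₁.2 w₂.2 * ((∑ k : Fin d, (if w₁.1 = k ∧ w₂.1 = k then (1 : ℝ) else 0) / p k) - 1)))
      ≤ ((∑ a : A, ((∑ e : Fin d, g (e, a) ^ 2 / p e) - (∑ e : Fin d, g (e, a)) ^ 2))
          + (∑ b : B, ((∑ e : Fin d, h (e, b) ^ 2 / p e) - (∑ e : Fin d, h (e, b)) ^ 2))) / 2 := by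
  have hTg : ∀ a : A, 0 ≤ (∑ e : Fin d, g (e, a) ^ 2 / p e) - (∑ e : Fin d, g (e, a)) ^ 2 :=
    fun a => sub_nonneg.mpr (aux_cs p (fun e => g (e, a)) hp hps)
  have hTh : ∀ b : B, 0 ≤ (∑ e : Fin d, h (e, b) ^ 2 / p e) - (∑ e : Fin d, h (e, b)) ^ 2 :=
    fun b => sub_nonneg.mpr (aux_cs p (fun e => h (e, b)) hp hps)
  calc ∑ w₁ : Fin d × A, g w₁ * (∑ w₂ : Fin d × B, h w₂ *
        (χ w₁.2 w₂.2 * ((∑ k : Fin d, (if w₁.1 = k ∧ w₂.1 = k then (1 : ℝ) else 0) / p k) - 1)))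
      = ∑ a : A, ∑ b : B, ∑ e : Fin d, ∑ e' : Fin d, g (e, a) * (h (e', b) *
          (χ a b * ((∑ k : Fin d, (if e = k ∧ e' = k then (1 : ℝ) else 0) / p k) - 1))) := by
        rw [Fintype.sum_prod_type_right]
        refine Finset.sum_congr rfl fun a _ => ?_
        simp_rw [Fintype.sum_prod_type_right, Finset.mul_sum]
        exact Finset.sum_comm
    _ ≤ ∑ a : A, ∑ b : B, χ a b *
          ((((∑ e : Fin d, g (e, a) ^ 2 / p e) - (∑ e : Fin d, g (e, a)) ^ 2)
            + ((∑ e : Fin d, h (e, b) ^ 2 / p e) - (∑ e : Fin d, h (e, b)) ^ 2)) / 2) := by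
        refine Finset.sum_le_sum fun a _ => Finset.sum_le_sum fun b _ => ?_
        exact aux_inner p (fun e => g (e, a)) (fun e' => h (e', b)) hp hps (χ a b) (hχ0 a b)
    _ ≤ _ := by
        have expand : ∑ a : A, ∑ b : B, χ a b *
              ((((∑ e : Fin d, g (e, a) ^ 2 / p e) - (∑ e : Fin d, g (e, a)) ^ 2)
                + ((∑ e : Fin d, h (e, b) ^ 2 / p e) - (∑ e : Fin d, h (e, b)) ^ 2)) / 2)
            = (∑ a : A, ∑ b : B, χ a b *
                ((∑ e : Fin d, g (e, a) ^ 2 / p e) - (∑ e : Fin d, g (e, a)) ^ 2)) / 2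
              + (∑ a : A, ∑ b : B, χ a b *
                ((∑ e : Fin d, h (e, b) ^ 2 / p e) - (∑ e : Fin d, h (e, b)) ^ 2)) / 2 := by
          simp_rw [Finset.sum_div]
          rw [← Finset.sum_add_distrib]
          refine Finset.sum_congr rfl fun a _ => ?_
          rw [← Finset.sum_add_distrib]
          exact Finset.sum_congr rfl fun b _ => by ring
        rw [expand]
        have P1 : ∑ a : A, ∑ b : B, χ a b *
              ((∑ e : Fin d, g (e, a) ^ 2 / p e) - (∑ e : Fin d, g (e, a)) ^ 2)
            ≤ ∑ a : A, ((∑ e : Fin d, g (e, a) ^ 2 / p e) - (∑ e : Fin d, g (e, a)) ^ 2) := by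
          refine Finset.sum_le_sum fun a _ => ?_
          rw [← Finset.sum_mul]
          calc (∑ b : B, χ a b) * _ ≤ 1 * ((∑ e : Fin d, g (e, a) ^ 2 / p e)
                - (∑ e : Fin d, g (e, a)) ^ 2) :=
              mul_le_mul_of_nonneg_right (hχ2 a) (hTg a)
            _ = _ := one_mul _
        have P2 : ∑ a : A, ∑ b : B, χ a b *
              ((∑ e : Fin d, h (e, b) ^ 2 / p e) - (∑ e : Fin d, h (e, b)) ^ 2)
            ≤ ∑ b : B, ((∑ e : Fin d, h (e, b) ^ 2 / p e) - (∑ e : Fin d, h (e, b)) ^ 2) := by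
          rw [Finset.sum_comm]
          refine Finset.sum_le_sum fun b _ => ?_
          rw [← Finset.sum_mul]
          calc (∑ a : A, χ a b) * _ ≤ 1 * ((∑ e : Fin d, h (e, b) ^ 2 / p e)
                - (∑ e : Fin d, h (e, b)) ^ 2) :=
              mul_le_mul_of_nonneg_right (hχ1 b) (hTh b)
            _ = _ := one_mul _
        linarith

lemma aux_collapse (d T : ℕ) (S : Finset ℕ) (q : (Fin T → Fin d) → ℝ) (l0 : ℕ) (hl : l0 < T)
    (F : Fin d × ({s // s ∈ S} → Fin d) → ℝ) :
    ∑ w, windowLaw d T S q l0 hl w * F w = ∑ x, q x * F (window d T S x l0 hl) := by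
  unfold windowLaw
  simp_rw [Finset.sum_mul, ite_mul, zero_mul]
  rw [Finset.sum_comm]
  simp

/-- For independent samples `(x,X), (z,Z)` from `μ` and index pairs
`(i_h, j_h)_{h∈S}` with distinct-value sets `S₁, S₂`,
`E[ ∏_h 1{x_{−i_h} = z_{−j_h}} · (Σ_k 1{x=z=e_k}/μ(z=e_k) − 1) ] ≤ (Ĩ_{χ²}(S₁)+Ĩ_{χ²}(S₂))/2`. -/
theorem statement14 (d M : ℕ) (hd : 0 < d) (hM : 0 < M)
    (μb : (Fin (M + 1) → Fin d) → ℝ) (hnn : ∀ y, 0 ≤ μb y) (hsum : ∑ y, μb y = 1)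
    (htm : ∀ e, 0 < tokenMarg d M μb e)
    (ι : Type) [Fintype ι] [DecidableEq ι]
    (i j : ι → ℕ) (hi : ∀ h, 1 ≤ i h ∧ i h ≤ M) (hj : ∀ h, 1 ≤ j h ∧ j h ≤ M) :
    (∑ y : Fin (M + 1) → Fin d, ∑ y' : Fin (M + 1) → Fin d,
        μb y * μb y' *
          ((∏ h : ι,
              (if y ⟨M - i h, Nat.lt_succ_of_le (Nat.sub_le _ _)⟩ =
                  y' ⟨M - j h, Nat.lt_succ_of_le (Nat.sub_le _ _)⟩ then (1 : ℝ) else 0)) *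
            ((∑ k : Fin d,
                (if y ⟨M, Nat.lt_succ_self M⟩ = k ∧ y' ⟨M, Nat.lt_succ_self M⟩ = k
                  then (1 : ℝ) else 0) / tokenMarg d M μb k) - 1)))
      ≤ (modMI d M μb (Finset.univ.image i) + modMI d M μb (Finset.univ.image j)) / 2 := by
  have mi : ∀ h : ι, i h ∈ Finset.univ.image i :=
    fun h => Finset.mem_image_of_mem i (Finset.mem_univ h)
  have mj : ∀ h : ι, j h ∈ Finset.univ.image j :=
    fun h => Finset.mem_image_of_mem j (Finset.mem_univ h)
  have hps : ∑ k : Fin d, tokenMarg d M μb k = 1 := by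
    unfold tokenMarg
    rw [Finset.sum_comm]
    simp only [Finset.sum_ite_eq, Finset.mem_univ, if_true]
    exact hsum
  have hcol : (∑ y : Fin (M + 1) → Fin d, ∑ y' : Fin (M + 1) → Fin d,
        μb y * μb y' *
          ((∏ h : ι,
              (if y ⟨M - i h, Nat.lt_succ_of_le (Nat.sub_le _ _)⟩ =
                  y' ⟨M - j h, Nat.lt_succ_of_le (Nat.sub_le _ _)⟩ then (1 : ℝ) else 0)) *
            ((∑ k : Fin d,
                (if y ⟨M, Nat.lt_succ_self M⟩ = k ∧ y' ⟨M, Nat.lt_succ_self M⟩ = k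
                  then (1 : ℝ) else 0) / tokenMarg d M μb k) - 1)))
      = ∑ w₁ : Fin d × ({s // s ∈ Finset.univ.image i} → Fin d),
          windowLaw d (M + 1) (Finset.univ.image i) μb M (Nat.lt_succ_self M) w₁ *
          (∑ w₂ : Fin d × ({s // s ∈ Finset.univ.image j} → Fin d),
            windowLaw d (M + 1) (Finset.univ.image j) μb M (Nat.lt_succ_self M) w₂ *
            ((∏ h : ι, (if w₁.2 ⟨i h, mi h⟩ = w₂.2 ⟨j h, mj h⟩ then (1 : ℝ) else 0)) *
              ((∑ k : Fin d, (if w₁.1 = k ∧ w₂.1 = k then (1 : ℝ) else 0) /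
                  tokenMarg d M μb k) - 1))) := by
    rw [aux_collapse d (M + 1) (Finset.univ.image i) μb M (Nat.lt_succ_self M)]
    refine Finset.sum_congr rfl fun y _ => ?_
    rw [aux_collapse d (M + 1) (Finset.univ.image j) μb M (Nat.lt_succ_self M)]
    rw [Finset.mul_sum]
    refine Finset.sum_congr rfl fun y' _ => ?_
    rw [mul_assoc]
    rfl
  rw [hcol]
  have hx0 : ∀ (E₁ : {s // s ∈ Finset.univ.image i} → Fin d)
      (E₂ : {s // s ∈ Finset.univ.image j} → Fin d),
      0 ≤ ∏ h : ι, if E₁ ⟨i h, mi h⟩ = E₂ ⟨j h, mj h⟩ then (1 : ℝ) else 0 :=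
    fun E₁ E₂ => Finset.prod_nonneg fun h _ => by split_ifs <;> norm_num
  have hx2 : ∀ E₁ : {s // s ∈ Finset.univ.image i} → Fin d,
      ∑ E₂ : {s // s ∈ Finset.univ.image j} → Fin d,
        (∏ h : ι, if E₁ ⟨i h, mi h⟩ = E₂ ⟨j h, mj h⟩ then (1 : ℝ) else 0) ≤ 1 := by
    intro E₁
    have hb : ∀ E₂ : {s // s ∈ Finset.univ.image j} → Fin d,
        (∏ h : ι, if E₁ ⟨i h, mi h⟩ = E₂ ⟨j h, mj h⟩ then (1 : ℝ) else 0)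
          = if (∀ h : ι, E₁ ⟨i h, mi h⟩ = E₂ ⟨j h, mj h⟩) then (1 : ℝ) else 0 :=
      fun E₂ => Fintype.prod_boole
    rw [Finset.sum_congr rfl fun E₂ _ => hb E₂, Finset.sum_boole]
    have hcard : (Finset.univ.filter fun E₂ : {s // s ∈ Finset.univ.image j} → Fin d =>
        ∀ h : ι, E₁ ⟨i h, mi h⟩ = E₂ ⟨j h, mj h⟩).card ≤ 1 := by
      refine Finset.card_le_one.mpr fun E₂ h2 E₂' h2' => ?_
      simp only [Finset.mem_filter] at h2 h2'
      funext s
      obtain ⟨s, hs⟩ := s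
      obtain ⟨h0, -, rfl⟩ := Finset.mem_image.mp hs
      exact (h2.2 h0).symm.trans (h2'.2 h0)
    exact_mod_cast hcard
  have hx1 : ∀ E₂ : {s // s ∈ Finset.univ.image j} → Fin d,
      ∑ E₁ : {s // s ∈ Finset.univ.image i} → Fin d,
        (∏ h : ι, if E₁ ⟨i h, mi h⟩ = E₂ ⟨j h, mj h⟩ then (1 : ℝ) else 0) ≤ 1 := by
    intro E₂
    have hb : ∀ E₁ : {s // s ∈ Finset.univ.image i} → Fin d,
        (∏ h : ι, if E₁ ⟨i h, mi h⟩ = E₂ ⟨j h, mj h⟩ then (1 : ℝ) else 0)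
          = if (∀ h : ι, E₁ ⟨i h, mi h⟩ = E₂ ⟨j h, mj h⟩) then (1 : ℝ) else 0 :=
      fun E₁ => Fintype.prod_boole
    rw [Finset.sum_congr rfl fun E₁ _ => hb E₁, Finset.sum_boole]
    have hcard : (Finset.univ.filter fun E₁ : {s // s ∈ Finset.univ.image i} → Fin d =>
        ∀ h : ι, E₁ ⟨i h, mi h⟩ = E₂ ⟨j h, mj h⟩).card ≤ 1 := by
      refine Finset.card_le_one.mpr fun E₁ h2 E₁' h2' => ?_
      simp only [Finset.mem_filter] at h2 h2'
      funext s
      obtain ⟨s, hs⟩ := s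
      obtain ⟨h0, -, rfl⟩ := Finset.mem_image.mp hs
      exact (h2.2 h0).trans (h2'.2 h0).symm
    exact_mod_cast hcard
  exact aux_main (tokenMarg d M μb) htm hps
    (windowLaw d (M + 1) (Finset.univ.image i) μb M (Nat.lt_succ_self M))
    (windowLaw d (M + 1) (Finset.univ.image j) μb M (Nat.lt_succ_self M))
    (fun E₁ E₂ => ∏ h : ι, if E₁ ⟨i h, mi h⟩ = E₂ ⟨j h, mj h⟩ then (1 : ℝ) else 0)
    hx0 hx1 hx2
end

section
/- Let μ be a probability distribution on 𝒳^{M+1} with μ(z = e) > 0 for every e ∈ 𝒳, let (x, X) and (z, Z) be independent with common distribution μ (X = (x_{−M},…,x_{−1}), Z = (z_{−M},…,z_{−1})). Let S be a finite index set, and for each h ∈ S let σ^{(h)} and σ̃^{(h)} be probability vectors on {1,…,M}; set v^{(h)}(X) = Σ_{j=1}^{M} σ^{(h)}_{−j} x_{−j} and ṽ^{(h)}(Z) = Σ_{i=1}^{M} σ̃^{(h)}_{−i} z_{−i}. Fix indices (i*_h, j*_h)_{h∈S} in {1,…,M}², let Π = ∏_{h∈S} σ^{(h)}_{−i*_h}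 · σ̃^{(h)}_{−j*_h}, and let Ĩ_max = max{ Ĩ_{χ²}(S′) : S′ ⊆ {1,…,M}, |S′| ≤ |S| }. Define A = E[ ( Σ_{k=1}^{d} 1{x = z = e_k}/μ(z = e_k) − 1 ) · ∏_{h∈S} ⟨ṽ^{(h)}(Z), v^{(h)}(X)⟩ ] and B = E[ ∏_{h∈S} 1{x_{−i*_h} = z_{−j*_h}} · ( Σ_{k=1}^{d} 1{x = z = e_k}/μ(z = e_k) − 1 ) ]. Then | A − Π·B | ≤ (1 − Π) · Ĩ_max. -/
open Finset

/-! ### Auxiliary definitions and lemmas for Statement 15 -/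

/-- Joint law of the last token and the tokens at offsets `f h`, `h : ι`. -/
noncomputable def aK (d M : ℕ) (μb : (Fin (M + 1) → Fin d) → ℝ) {ι : Type} [Fintype ι]
    (f : ι → ℕ) (F : ι → Fin d) (k : Fin d) : ℝ :=
  ∑ y : Fin (M + 1) → Fin d,
    if y ⟨M, Nat.lt_succ_self M⟩ = k ∧
        ∀ h, y ⟨M - f h, Nat.lt_succ_of_le (Nat.sub_le _ _)⟩ = F h then μb y else 0

lemma sum_ind_ind {d : ℕ} (a b : Fin d) :
    ∑ c : Fin d, (if a = c then (1:ℝ) else 0) * (if b = c then (1:ℝ) else 0)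
      = if a = b then (1:ℝ) else 0 := by
  by_cases h : a = b
  · subst h
    simp [ite_mul, Finset.sum_ite_eq]
  · rw [if_neg h]
    refine Finset.sum_eq_zero fun c _ => ?_
    by_cases h1 : a = c <;> by_cases h2 : b = c <;> simp [h1, h2]
    exact h (h1.trans h2.symm)

lemma ind_prod_eq {d : ℕ} {ι : Type} [Fintype ι] [DecidableEq ι] (a b : ι → Fin d) :
    (∏ h, (if a h = b h then (1:ℝ) else 0))
      = ∑ F : ι → Fin d,
          (∏ h, (if a h = F h then (1:ℝ) else 0)) * (∏ h, (if b h = F h then (1:ℝ) else 0)) := by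
  have e1 : ∀ F : ι → Fin d,
      (∏ h, (if a h = F h then (1:ℝ) else 0)) * (∏ h, (if b h = F h then (1:ℝ) else 0))
        = ∏ h, ((if a h = F h then (1:ℝ) else 0) * (if b h = F h then (1:ℝ) else 0)) := fun F =>
    (Finset.prod_mul_distrib).symm
  have e2 := Finset.prod_univ_sum (fun _ : ι => (univ : Finset (Fin d)))
    (fun h c => (if a h = c then (1:ℝ) else 0) * (if b h = c then (1:ℝ) else 0))
  rw [Fintype.piFinset_univ] at e2
  rw [Finset.sum_congr rfl fun F _ => e1 F, ← e2]
  exact Finset.prod_congr rfl fun h _ => (sum_ind_ind (a h) (b h)).symm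

lemma centered {κ : Type*} [Fintype κ] (μ : κ → ℝ) (hμ : ∀ k, 0 < μ k) (h1 : ∑ k, μ k = 1)
    (a b : κ → ℝ) :
    ∑ k, ((a k - μ k * ∑ j, a j) * (b k - μ k * ∑ j, b j)) / μ k
      = (∑ k, a k * b k / μ k) - (∑ k, a k) * (∑ k, b k) := by
  have e : ∀ k, ((a k - μ k * ∑ j, a j) * (b k - μ k * ∑ j, b j)) / μ k
      = a k * b k / μ k - (∑ j, a j) * b k - (∑ j, b j) * a k
          + μ k * ((∑ j, a j) * (∑ j, b j)) := by
    intro k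
    have := (hμ k).ne'
    field_simp
    ring
  rw [Finset.sum_congr rfl fun k _ => e k, Finset.sum_add_distrib, Finset.sum_sub_distrib,
    Finset.sum_sub_distrib, ← Finset.mul_sum, ← Finset.mul_sum, ← Finset.sum_mul, h1]
  ring

lemma abs_prod_div_le {μ u v : ℝ} (hμ : 0 < μ) : |u * v / μ| ≤ (u^2/μ + v^2/μ)/2 := by
  have h1 : |u * v| ≤ (u^2 + v^2)/2 := by
    rw [abs_mul]
    nlinarith [sq_nonneg (|u| - |v|), sq_abs u, sq_abs v]
  calc |u * v / μ| = |u * v| / μ := by rw [abs_div, abs_of_pos hμ]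
    _ ≤ ((u^2 + v^2)/2) / μ := div_le_div_of_nonneg_right h1 hμ.le
    _ = (u^2/μ + v^2/μ)/2 := by ring

lemma sumF_eq_modMI (d M : ℕ) (μb : (Fin (M + 1) → Fin d) → ℝ)
    {ι : Type} [Fintype ι] [DecidableEq ι] (f : ι → ℕ) :
    ∑ F : ι → Fin d,
      ((∑ k : Fin d, aK d M μb f F k ^ 2 / tokenMarg d M μb k)
        - (∑ k : Fin d, aK d M μb f F k) ^ 2)
    = modMI d M μb (Finset.image f Finset.univ) := by
  classical
  set S := Finset.image f Finset.univ with hS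
  have hmem : ∀ h, f h ∈ S := fun h => Finset.mem_image_of_mem f (Finset.mem_univ h)
  set Φ : ({s // s ∈ S} → Fin d) → (ι → Fin d) := fun E h => E ⟨f h, hmem h⟩ with hΦ
  have hΦinj : Function.Injective Φ := by
    intro E1 E2 hE
    funext s
    obtain ⟨h, -, hfh⟩ := Finset.mem_image.mp s.2
    have h2 := congrFun hE h
    simp only [hΦ] at h2
    have hs : s = ⟨f h, hmem h⟩ := Subtype.ext hfh.symm
    rw [hs]; exact h2
  have hwl : ∀ (E : {s // s ∈ S} → Fin d) (k : Fin d),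
      windowLaw d (M + 1) S μb M (Nat.lt_succ_self M) (k, E) = aK d M μb f (Φ E) k := by
    intro E k
    unfold windowLaw aK window parents
    refine Finset.sum_congr rfl fun y _ => ?_
    refine if_congr ?_ rfl rfl
    rw [Prod.mk.injEq, funext_iff]
    constructor
    · rintro ⟨h1, h2⟩
      exact ⟨h1, fun h => h2 ⟨f h, hmem h⟩⟩
    · rintro ⟨h1, h2⟩
      refine ⟨h1, fun s => ?_⟩
      obtain ⟨h, -, hfh⟩ := Finset.mem_image.mp s.2
      have hs : s = ⟨f h, hmem h⟩ := Subtype.ext hfh.symm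
      rw [hs]
      exact h2 h
  have hzero : ∀ F : ι → Fin d, F ∉ Finset.image Φ Finset.univ →
      ((∑ k : Fin d, aK d M μb f F k ^ 2 / tokenMarg d M μb k)
        - (∑ k : Fin d, aK d M μb f F k) ^ 2) = 0 := by
    intro F hF
    have haK : ∀ k, aK d M μb f F k = 0 := by
      intro k
      unfold aK
      refine Finset.sum_eq_zero fun y _ => ?_
      rw [if_neg]
      rintro ⟨-, hall⟩
      refine hF (Finset.mem_image.mpr ⟨fun s => y ⟨M - s.1, Nat.lt_succ_of_le (Nat.sub_le _ _)⟩,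
        Finset.mem_univ _, ?_⟩)
      funext h
      exact hall h
    simp [haK]
  rw [← Finset.sum_subset (Finset.subset_univ (Finset.image Φ Finset.univ))
    (fun F _ hF => hzero F hF)]
  rw [Finset.sum_image (fun E _ E' _ h => hΦinj h)]
  unfold modMI
  refine Finset.sum_congr rfl fun E _ => ?_
  simp only [hwl]

lemma step1_core {κ π : Type} [Fintype κ] [Fintype π] (a b : ℝ) (q1 q2 c : π → ℝ)
    (PA PB : κ → ℝ) :
    a * b * (((∑ k, q1 k * q2 k / c k) - 1) * ∑ F, PA F * PB F)
      = ∑ F, ((∑ k, (q1 k * a * PA F) * (q2 k * b * PB F) / c k) - (a * PA F) * (b * PB F)) := by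
  rw [Finset.mul_sum, Finset.mul_sum]
  refine Finset.sum_congr rfl fun F _ => ?_
  rw [sub_mul, one_mul, mul_sub, Finset.sum_mul, Finset.mul_sum]
  congr 1
  · exact Finset.sum_congr rfl fun k _ => by ring
  · ring

lemma aK_eq (d M : ℕ) (μb : (Fin (M + 1) → Fin d) → ℝ) {ι : Type} [Fintype ι]
    (f : ι → ℕ) (F : ι → Fin d) (k : Fin d) :
    aK d M μb f F k = ∑ y : Fin (M + 1) → Fin d,
      (if y ⟨M, Nat.lt_succ_self M⟩ = k then (1:ℝ) else 0) * μb y *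
        (∏ h, (if y ⟨M - f h, Nat.lt_succ_of_le (Nat.sub_le _ _)⟩ = F h then (1:ℝ) else 0)) := by
  unfold aK
  refine Finset.sum_congr rfl fun y _ => ?_
  rw [Finset.prod_boole]
  by_cases h1 : y ⟨M, Nat.lt_succ_self M⟩ = k <;>
    by_cases h2 : ∀ h, y ⟨M - f h, Nat.lt_succ_of_le (Nat.sub_le _ _)⟩ = F h <;>
    simp [h1, h2]

lemma sum_aK (d M : ℕ) (μb : (Fin (M + 1) → Fin d) → ℝ) {ι : Type} [Fintype ι]
    (f : ι → ℕ) (F : ι → Fin d) :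
    ∑ k : Fin d, aK d M μb f F k = ∑ y : Fin (M + 1) → Fin d,
      μb y * (∏ h, (if y ⟨M - f h, Nat.lt_succ_of_le (Nat.sub_le _ _)⟩ = F h then (1:ℝ) else 0)) := by
  rw [Finset.sum_congr rfl fun k _ => aK_eq d M μb f F k, Finset.sum_comm]
  refine Finset.sum_congr rfl fun y _ => ?_
  rw [← Finset.sum_mul, ← Finset.sum_mul]
  congr 1
  rw [Finset.sum_ite_eq]
  simp

lemma expandT (d M : ℕ) (μb : (Fin (M + 1) → Fin d) → ℝ)
    {ι : Type} [Fintype ι] [DecidableEq ι] (f g : ι → ℕ) :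
    ∑ y : Fin (M + 1) → Fin d, ∑ y' : Fin (M + 1) → Fin d,
      μb y * μb y' *
        (((∑ k : Fin d,
            (if y ⟨M, Nat.lt_succ_self M⟩ = k ∧ y' ⟨M, Nat.lt_succ_self M⟩ = k
              then (1 : ℝ) else 0) / tokenMarg d M μb k) - 1) *
          ∏ h, (if y ⟨M - f h, Nat.lt_succ_of_le (Nat.sub_le _ _)⟩ =
              y' ⟨M - g h, Nat.lt_succ_of_le (Nat.sub_le _ _)⟩ then (1:ℝ) else 0))
    = ∑ F : ι → Fin d,
        ((∑ k : Fin d, aK d M μb f F k * aK d M μb g F k / tokenMarg d M μb k)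
          - (∑ k : Fin d, aK d M μb f F k) * (∑ k : Fin d, aK d M μb g F k)) := by
  have hand : ∀ (y y' : Fin (M + 1) → Fin d) (k : Fin d),
      (if y ⟨M, Nat.lt_succ_self M⟩ = k ∧ y' ⟨M, Nat.lt_succ_self M⟩ = k then (1:ℝ) else 0)
        = (if y ⟨M, Nat.lt_succ_self M⟩ = k then (1:ℝ) else 0) *
          (if y' ⟨M, Nat.lt_succ_self M⟩ = k then (1:ℝ) else 0) := by
    intro y y' k
    by_cases h1 : y ⟨M, Nat.lt_succ_self M⟩ = k <;>
      by_cases h2 : y' ⟨M, Nat.lt_succ_self M⟩ = k <;> simp [h1, h2]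
  have hprod : ∀ (y y' : Fin (M + 1) → Fin d),
      (∏ h, (if y ⟨M - f h, Nat.lt_succ_of_le (Nat.sub_le _ _)⟩ =
          y' ⟨M - g h, Nat.lt_succ_of_le (Nat.sub_le _ _)⟩ then (1:ℝ) else 0))
        = ∑ F : ι → Fin d,
            (∏ h, (if y ⟨M - f h, Nat.lt_succ_of_le (Nat.sub_le _ _)⟩ = F h then (1:ℝ) else 0)) *
            (∏ h, (if y' ⟨M - g h, Nat.lt_succ_of_le (Nat.sub_le _ _)⟩ = F h then (1:ℝ) else 0)) :=
    fun y y' => ind_prod_eq _ _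
  simp only [hand, hprod]
  simp only [step1_core]
  rw [Finset.sum_congr rfl fun y (_ : y ∈ univ) => Finset.sum_comm, Finset.sum_comm]
  refine Finset.sum_congr rfl fun F _ => ?_
  rw [Finset.sum_congr rfl fun y (_ : y ∈ univ) => Finset.sum_sub_distrib _ _, Finset.sum_sub_distrib]
  congr 1
  · rw [Finset.sum_congr rfl fun y (_ : y ∈ univ) => Finset.sum_comm, Finset.sum_comm]
    refine Finset.sum_congr rfl fun k _ => ?_
    rw [aK_eq d M μb f F k, aK_eq d M μb g F k, Finset.sum_mul_sum, Finset.sum_div]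
    exact Finset.sum_congr rfl fun y _ => by rw [Finset.sum_div]
  · rw [sum_aK d M μb f F, sum_aK d M μb g F, Finset.sum_mul_sum]

lemma sum_tokenMarg (d M : ℕ) (μb : (Fin (M + 1) → Fin d) → ℝ)
    (hsum : ∑ y, μb y = 1) : ∑ k, tokenMarg d M μb k = 1 := by
  unfold tokenMarg
  rw [Finset.sum_comm, ← hsum]
  refine Finset.sum_congr rfl fun y _ => ?_
  rw [Finset.sum_ite_eq]
  simp

lemma key_bound (d M : ℕ) (μb : (Fin (M + 1) → Fin d) → ℝ)
    (hsum : ∑ y, μb y = 1) (htm : ∀ e, 0 < tokenMarg d M μb e)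
    {ι : Type} [Fintype ι] [DecidableEq ι] (f g : ι → ℕ) :
    |∑ F : ι → Fin d,
        ((∑ k : Fin d, aK d M μb f F k * aK d M μb g F k / tokenMarg d M μb k)
          - (∑ k : Fin d, aK d M μb f F k) * (∑ k : Fin d, aK d M μb g F k))|
      ≤ max (modMI d M μb (Finset.image f Finset.univ))
          (modMI d M μb (Finset.image g Finset.univ)) := by
  have h1 := sum_tokenMarg d M μb hsum
  have hc : ∀ F : ι → Fin d,
      (∑ k : Fin d, aK d M μb f F k * aK d M μb g F k / tokenMarg d M μb k)
          - (∑ k : Fin d, aK d M μb f F k) * (∑ k : Fin d, aK d M μb g F k)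
        = ∑ k : Fin d,
            ((aK d M μb f F k - tokenMarg d M μb k * ∑ j, aK d M μb f F j) *
             (aK d M μb g F k - tokenMarg d M μb k * ∑ j, aK d M μb g F j)) / tokenMarg d M μb k :=
    fun F => (centered (tokenMarg d M μb) htm h1 (aK d M μb f F) (aK d M μb g F)).symm
  rw [Finset.sum_congr rfl fun F _ => hc F]
  have hsq : ∀ (f' : ι → ℕ) (F : ι → Fin d),
      ∑ k : Fin d, (aK d M μb f' F k - tokenMarg d M μb k * ∑ j, aK d M μb f' F j)^2
          / tokenMarg d M μb k
        = (∑ k : Fin d, aK d M μb f' F k ^ 2 / tokenMarg d M μb k)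
            - (∑ k : Fin d, aK d M μb f' F k)^2 := by
    intro f' F
    have h2 := centered (tokenMarg d M μb) htm h1 (aK d M μb f' F) (aK d M μb f' F)
    calc ∑ k : Fin d, (aK d M μb f' F k - tokenMarg d M μb k * ∑ j, aK d M μb f' F j)^2
            / tokenMarg d M μb k
        = ∑ k : Fin d, ((aK d M μb f' F k - tokenMarg d M μb k * ∑ j, aK d M μb f' F j) *
            (aK d M μb f' F k - tokenMarg d M μb k * ∑ j, aK d M μb f' F j)) / tokenMarg d M μb k := by
          refine Finset.sum_congr rfl fun k _ => ?_
          rw [pow_two]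
      _ = (∑ k : Fin d, aK d M μb f' F k * aK d M μb f' F k / tokenMarg d M μb k)
            - (∑ k : Fin d, aK d M μb f' F k) * (∑ k : Fin d, aK d M μb f' F k) := h2
      _ = (∑ k : Fin d, aK d M μb f' F k ^ 2 / tokenMarg d M μb k)
            - (∑ k : Fin d, aK d M μb f' F k)^2 := by
          rw [← pow_two]
          congr 1
          exact Finset.sum_congr rfl fun k _ => by rw [pow_two]
  calc |∑ F : ι → Fin d, ∑ k : Fin d,
          ((aK d M μb f F k - tokenMarg d M μb k * ∑ j, aK d M μb f F j) *
           (aK d M μb g F k - tokenMarg d M μb k * ∑ j, aK d M μb g F j)) / tokenMarg d M μb k|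
      ≤ ∑ F : ι → Fin d, ∑ k : Fin d,
          |((aK d M μb f F k - tokenMarg d M μb k * ∑ j, aK d M μb f F j) *
           (aK d M μb g F k - tokenMarg d M μb k * ∑ j, aK d M μb g F j)) / tokenMarg d M μb k| := by
        refine (Finset.abs_sum_le_sum_abs _ _).trans (Finset.sum_le_sum fun F _ => ?_)
        exact Finset.abs_sum_le_sum_abs _ _
    _ ≤ ∑ F : ι → Fin d, ∑ k : Fin d,
          ((aK d M μb f F k - tokenMarg d M μb k * ∑ j, aK d M μb f F j)^2 / tokenMarg d M μb k
           + (aK d M μb g F k - tokenMarg d M μb k * ∑ j, aK d M μb g F j)^2 / tokenMarg d M μb k)/2 :=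
        Finset.sum_le_sum fun F _ => Finset.sum_le_sum fun k _ => abs_prod_div_le (htm k)
    _ = ((∑ F : ι → Fin d, ∑ k : Fin d,
            (aK d M μb f F k - tokenMarg d M μb k * ∑ j, aK d M μb f F j)^2 / tokenMarg d M μb k)
         + (∑ F : ι → Fin d, ∑ k : Fin d,
            (aK d M μb g F k - tokenMarg d M μb k * ∑ j, aK d M μb g F j)^2 / tokenMarg d M μb k))/2 := by
        rw [← Finset.sum_add_distrib, Finset.sum_div]
        refine Finset.sum_congr rfl fun F _ => ?_
        rw [← Finset.sum_add_distrib, Finset.sum_div]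
    _ = (modMI d M μb (Finset.image f Finset.univ) + modMI d M μb (Finset.image g Finset.univ))/2 := by
        rw [Finset.sum_congr rfl fun F _ => hsq f F, Finset.sum_congr rfl fun F _ => hsq g F,
          sumF_eq_modMI, sumF_eq_modMI]
    _ ≤ max (modMI d M μb (Finset.image f Finset.univ))
          (modMI d M μb (Finset.image g Finset.univ)) := by
        have ha := le_max_left (modMI d M μb (Finset.image f Finset.univ))
          (modMI d M μb (Finset.image g Finset.univ))
        have hb := le_max_right (modMI d M μb (Finset.image f Finset.univ))
          (modMI d M μb (Finset.image g Finset.univ))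
        linarith

lemma per_h (d M : ℕ) (y y' : Fin (M + 1) → Fin d) (st sh : ℕ → ℝ) :
    ∑ kk : Fin d,
      (∑ i2 ∈ Finset.Icc 1 M, st i2 *
          (if y' ⟨M - i2, Nat.lt_succ_of_le (Nat.sub_le _ _)⟩ = kk then (1:ℝ) else 0)) *
      (∑ j2 ∈ Finset.Icc 1 M, sh j2 *
          (if y ⟨M - j2, Nat.lt_succ_of_le (Nat.sub_le _ _)⟩ = kk then (1:ℝ) else 0))
    = ∑ p ∈ Finset.Icc 1 M ×ˢ Finset.Icc 1 M, st p.1 * sh p.2 *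
        (if y ⟨M - p.2, Nat.lt_succ_of_le (Nat.sub_le _ _)⟩ =
            y' ⟨M - p.1, Nat.lt_succ_of_le (Nat.sub_le _ _)⟩ then (1:ℝ) else 0) := by
  rw [Finset.sum_product]
  rw [Finset.sum_congr rfl fun kk (_ : kk ∈ univ) =>
    Finset.sum_mul_sum (Finset.Icc 1 M) (Finset.Icc 1 M) _ _, Finset.sum_comm]
  refine Finset.sum_congr rfl fun i _ => ?_
  rw [Finset.sum_comm]
  refine Finset.sum_congr rfl fun j _ => ?_
  have e1 := sum_ind_ind (y' ⟨M - i, Nat.lt_succ_of_le (Nat.sub_le _ _)⟩)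
    (y ⟨M - j, Nat.lt_succ_of_le (Nat.sub_le _ _)⟩)
  calc ∑ kk : Fin d,
        (st i * (if y' ⟨M - i, Nat.lt_succ_of_le (Nat.sub_le _ _)⟩ = kk then (1:ℝ) else 0)) *
        (sh j * (if y ⟨M - j, Nat.lt_succ_of_le (Nat.sub_le _ _)⟩ = kk then (1:ℝ) else 0))
      = st i * sh j * ∑ kk : Fin d,
          (if y' ⟨M - i, Nat.lt_succ_of_le (Nat.sub_le _ _)⟩ = kk then (1:ℝ) else 0) *
          (if y ⟨M - j, Nat.lt_succ_of_le (Nat.sub_le _ _)⟩ = kk then (1:ℝ) else 0) := by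
        rw [Finset.mul_sum]
        exact Finset.sum_congr rfl fun kk _ => by ring
    _ = st i * sh j *
          (if y ⟨M - j, Nat.lt_succ_of_le (Nat.sub_le _ _)⟩ =
              y' ⟨M - i, Nat.lt_succ_of_le (Nat.sub_le _ _)⟩ then (1:ℝ) else 0) := by
        rw [e1]
        congr 1
        by_cases h : y' ⟨M - i, Nat.lt_succ_of_le (Nat.sub_le _ _)⟩ =
            y ⟨M - j, Nat.lt_succ_of_le (Nat.sub_le _ _)⟩
        · rw [if_pos h, if_pos h.symm]
        · rw [if_neg h, if_neg fun h' => h h'.symm]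

lemma pull_core {π : Type} (a z : ℝ) (s : Finset π) (w t : π → ℝ) :
    a * (z * ∑ P ∈ s, w P * t P) = ∑ P ∈ s, w P * (a * (z * t P)) := by
  rw [Finset.mul_sum, Finset.mul_sum]
  exact Finset.sum_congr rfl fun P _ => by ring

/-- Approximating the product of soft inner products
`∏_h ⟨ṽ^{(h)}(Z), v^{(h)}(X)⟩` by the hard indicator `∏_h 1{x_{−i*_h} = z_{−j*_h}}` weighted by
`Π = ∏_h σ^{(h)}_{−i*_h} σ̃^{(h)}_{−j*_h}` incurs an error of at most `(1 − Π)·Ĩ_max` in the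
mutual-information-type expectation. -/
theorem statement15 (d M : ℕ) (hd : 0 < d) (hM : 0 < M)
    (μb : (Fin (M + 1) → Fin d) → ℝ) (hnn : ∀ y, 0 ≤ μb y) (hsum : ∑ y, μb y = 1)
    (htm : ∀ e, 0 < tokenMarg d M μb e)
    (ι : Type) [Fintype ι]
    (σ σt : ι → ℕ → ℝ)
    (hσ : ∀ h, (∀ i, 0 ≤ σ h i) ∧ ∑ i ∈ Finset.Icc 1 M, σ h i = 1)
    (hσt : ∀ h, (∀ i, 0 ≤ σt h i) ∧ ∑ i ∈ Finset.Icc 1 M, σt h i = 1)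
    (istar jstar : ι → ℕ)
    (hi : ∀ h, 1 ≤ istar h ∧ istar h ≤ M) (hj : ∀ h, 1 ≤ jstar h ∧ jstar h ≤ M) :
    let Pi := ∏ h : ι, σ h (istar h) * σt h (jstar h);
    let Imax := ((Finset.Icc 1 M).powerset.filter
        (fun S' => S'.card ≤ Fintype.card ι)).sup'
      ⟨∅, Finset.mem_filter.mpr ⟨Finset.empty_mem_powerset _, by simp⟩⟩ (modMI d M μb);
    let A := ∑ y : Fin (M + 1) → Fin d, ∑ y' : Fin (M + 1) → Fin d,
      μb y * μb y' *
        (((∑ k : Fin d,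
            (if y ⟨M, Nat.lt_succ_self M⟩ = k ∧ y' ⟨M, Nat.lt_succ_self M⟩ = k
              then (1 : ℝ) else 0) / tokenMarg d M μb k) - 1) *
          ∏ h : ι, ∑ kk : Fin d,
            (∑ i2 ∈ Finset.Icc 1 M, σt h i2 *
                (if y' ⟨M - i2, Nat.lt_succ_of_le (Nat.sub_le _ _)⟩ = kk then (1 : ℝ) else 0)) *
            (∑ j2 ∈ Finset.Icc 1 M, σ h j2 *
                (if y ⟨M - j2, Nat.lt_succ_of_le (Nat.sub_le _ _)⟩ = kk then (1 : ℝ) else 0)));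
    let B := ∑ y : Fin (M + 1) → Fin d, ∑ y' : Fin (M + 1) → Fin d,
      μb y * μb y' *
        ((∏ h : ι,
            (if y ⟨M - istar h, Nat.lt_succ_of_le (Nat.sub_le _ _)⟩ =
                y' ⟨M - jstar h, Nat.lt_succ_of_le (Nat.sub_le _ _)⟩ then (1 : ℝ) else 0)) *
          ((∑ k : Fin d,
              (if y ⟨M, Nat.lt_succ_self M⟩ = k ∧ y' ⟨M, Nat.lt_succ_self M⟩ = k
                then (1 : ℝ) else 0) / tokenMarg d M μb k) - 1));
    |A - Pi * B| ≤ (1 - Pi) * Imax := by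
  classical
  intro Pi Imax A B
  -- notation for the big objects
  set G : (Fin (M + 1) → Fin d) → (Fin (M + 1) → Fin d) → ℝ := fun y y' =>
    (∑ k : Fin d,
      (if y ⟨M, Nat.lt_succ_self M⟩ = k ∧ y' ⟨M, Nat.lt_succ_self M⟩ = k
        then (1 : ℝ) else 0) / tokenMarg d M μb k) - 1 with hG
  set T : (ι → ℕ × ℕ) → ℝ := fun P =>
    ∑ y : Fin (M + 1) → Fin d, ∑ y' : Fin (M + 1) → Fin d,
      μb y * μb y' * (G y y' *
        ∏ h : ι, (if y ⟨M - (P h).2, Nat.lt_succ_of_le (Nat.sub_le _ _)⟩ =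
            y' ⟨M - (P h).1, Nat.lt_succ_of_le (Nat.sub_le _ _)⟩ then (1:ℝ) else 0)) with hT
  set W : (ι → ℕ × ℕ) → ℝ := fun P => ∏ h : ι, σt h (P h).1 * σ h (P h).2 with hW
  have hWnn : ∀ P, 0 ≤ W P := fun P =>
    Finset.prod_nonneg fun h _ => mul_nonneg ((hσt h).1 _) ((hσ h).1 _)
  have hPmem : (fun h => (jstar h, istar h)) ∈
      Fintype.piFinset (fun _ : ι => Finset.Icc 1 M ×ˢ Finset.Icc 1 M) := by
    rw [Fintype.mem_piFinset]
    intro h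
    rw [Finset.mem_product, Finset.mem_Icc, Finset.mem_Icc]
    exact ⟨⟨(hj h).1, (hj h).2⟩, ⟨(hi h).1, (hi h).2⟩⟩
  -- A expansion
  have hA : A = ∑ P ∈ Fintype.piFinset (fun _ : ι => Finset.Icc 1 M ×ˢ Finset.Icc 1 M),
      W P * T P := by
    show (∑ y : Fin (M + 1) → Fin d, ∑ y' : Fin (M + 1) → Fin d,
      μb y * μb y' *
        (((∑ k : Fin d,
            (if y ⟨M, Nat.lt_succ_self M⟩ = k ∧ y' ⟨M, Nat.lt_succ_self M⟩ = k
              then (1 : ℝ) else 0) / tokenMarg d M μb k) - 1) *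
          ∏ h : ι, ∑ kk : Fin d,
            (∑ i2 ∈ Finset.Icc 1 M, σt h i2 *
                (if y' ⟨M - i2, Nat.lt_succ_of_le (Nat.sub_le _ _)⟩ = kk then (1 : ℝ) else 0)) *
            (∑ j2 ∈ Finset.Icc 1 M, σ h j2 *
                (if y ⟨M - j2, Nat.lt_succ_of_le (Nat.sub_le _ _)⟩ = kk then (1 : ℝ) else 0)))) = _
    have hph : ∀ (y y' : Fin (M + 1) → Fin d) (h : ι),
        (∑ kk : Fin d,
          (∑ i2 ∈ Finset.Icc 1 M, σt h i2 *
              (if y' ⟨M - i2, Nat.lt_succ_of_le (Nat.sub_le _ _)⟩ = kk then (1 : ℝ) else 0)) *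
          (∑ j2 ∈ Finset.Icc 1 M, σ h j2 *
              (if y ⟨M - j2, Nat.lt_succ_of_le (Nat.sub_le _ _)⟩ = kk then (1 : ℝ) else 0)))
        = ∑ p ∈ Finset.Icc 1 M ×ˢ Finset.Icc 1 M, σt h p.1 * σ h p.2 *
            (if y ⟨M - p.2, Nat.lt_succ_of_le (Nat.sub_le _ _)⟩ =
                y' ⟨M - p.1, Nat.lt_succ_of_le (Nat.sub_le _ _)⟩ then (1:ℝ) else 0) :=
      fun y y' h => per_h d M y y' (σt h) (σ h)
    have hprodP : ∀ (y y' : Fin (M + 1) → Fin d),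
        (∏ h : ι, ∑ p ∈ Finset.Icc 1 M ×ˢ Finset.Icc 1 M, σt h p.1 * σ h p.2 *
            (if y ⟨M - p.2, Nat.lt_succ_of_le (Nat.sub_le _ _)⟩ =
                y' ⟨M - p.1, Nat.lt_succ_of_le (Nat.sub_le _ _)⟩ then (1:ℝ) else 0))
          = ∑ P ∈ Fintype.piFinset (fun _ : ι => Finset.Icc 1 M ×ˢ Finset.Icc 1 M),
              (∏ h : ι, σt h (P h).1 * σ h (P h).2) *
              (∏ h : ι, (if y ⟨M - (P h).2, Nat.lt_succ_of_le (Nat.sub_le _ _)⟩ =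
                  y' ⟨M - (P h).1, Nat.lt_succ_of_le (Nat.sub_le _ _)⟩ then (1:ℝ) else 0)) := by
      intro y y'
      rw [Finset.prod_univ_sum]
      refine Finset.sum_congr rfl fun P _ => ?_
      rw [← Finset.prod_mul_distrib]
    simp only [hph, hprodP]
    simp only [pull_core]
    rw [Finset.sum_congr rfl fun y (_ : y ∈ univ) => Finset.sum_comm, Finset.sum_comm]
    refine Finset.sum_congr rfl fun P _ => ?_
    rw [Finset.sum_congr rfl fun y (_ : y ∈ univ) => (Finset.mul_sum _ _ _).symm,
      ← Finset.mul_sum]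
  -- B identification
  have hB : B = T (fun h => (jstar h, istar h)) := by
    show (∑ y : Fin (M + 1) → Fin d, ∑ y' : Fin (M + 1) → Fin d,
      μb y * μb y' *
        ((∏ h : ι,
            (if y ⟨M - istar h, Nat.lt_succ_of_le (Nat.sub_le _ _)⟩ =
                y' ⟨M - jstar h, Nat.lt_succ_of_le (Nat.sub_le _ _)⟩ then (1 : ℝ) else 0)) *
          ((∑ k : Fin d,
              (if y ⟨M, Nat.lt_succ_self M⟩ = k ∧ y' ⟨M, Nat.lt_succ_self M⟩ = k
                then (1 : ℝ) else 0) / tokenMarg d M μb k) - 1))) = _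
    refine Finset.sum_congr rfl fun y _ => Finset.sum_congr rfl fun y' _ => ?_
    show _ = μb y * μb y' * (G y y' * _)
    rw [mul_comm (G y y')]
  have hWP : W (fun h => (jstar h, istar h)) = Pi :=
    Finset.prod_congr rfl fun h _ => mul_comm _ _
  have hsumW : ∑ P ∈ Fintype.piFinset (fun _ : ι => Finset.Icc 1 M ×ˢ Finset.Icc 1 M),
      W P = 1 := by
    have e := Finset.prod_univ_sum (fun _ : ι => Finset.Icc 1 M ×ˢ Finset.Icc 1 M)
      (fun h p => σt h p.1 * σ h p.2)
    rw [hW]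
    rw [← e]
    calc ∏ h : ι, ∑ p ∈ Finset.Icc 1 M ×ˢ Finset.Icc 1 M, σt h p.1 * σ h p.2
        = ∏ h : ι, (1:ℝ) := by
          refine Finset.prod_congr rfl fun h _ => ?_
          rw [Finset.sum_product]
          have e1 : (∑ i ∈ Finset.Icc 1 M, σt h i) * (∑ j ∈ Finset.Icc 1 M, σ h j) = 1 := by
            rw [(hσt h).2, (hσ h).2, one_mul]
          rw [← e1, Finset.sum_mul_sum]
      _ = 1 := Finset.prod_const_one
  -- bound on |T P|
  have hTbound : ∀ P ∈ Fintype.piFinset (fun _ : ι => Finset.Icc 1 M ×ˢ Finset.Icc 1 M),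
      |T P| ≤ Imax := by
    intro P hP
    rw [hT]
    simp only [hG]
    rw [expandT d M μb (fun h => (P h).2) (fun h => (P h).1)]
    refine (key_bound d M μb hsum htm _ _).trans ?_
    have himg : ∀ (f : ι → ℕ), (∀ h, f h ∈ Finset.Icc 1 M) →
        modMI d M μb (Finset.image f Finset.univ) ≤ Imax := by
      intro f hf
      refine Finset.le_sup' (modMI d M μb) ?_
      rw [Finset.mem_filter, Finset.mem_powerset]
      constructor
      · intro s hs
        obtain ⟨h, -, hfh⟩ := Finset.mem_image.mp hs
        exact hfh ▸ hf h
      · calc (Finset.image f Finset.univ).card ≤ (Finset.univ : Finset ι).card :=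
            Finset.card_image_le
          _ = Fintype.card ι := Finset.card_univ
    refine max_le (himg _ fun h => ?_) (himg _ fun h => ?_)
    · exact (Finset.mem_product.mp (Fintype.mem_piFinset.mp hP h)).2
    · exact (Finset.mem_product.mp (Fintype.mem_piFinset.mp hP h)).1
  -- assemble
  have hsplit := Finset.add_sum_erase
    (Fintype.piFinset (fun _ : ι => Finset.Icc 1 M ×ˢ Finset.Icc 1 M))
    (fun P => W P * T P) hPmem
  have hWsplit := Finset.add_sum_erase
    (Fintype.piFinset (fun _ : ι => Finset.Icc 1 M ×ˢ Finset.Icc 1 M)) W hPmem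
  have hAB : A - Pi * B
      = ∑ P ∈ (Fintype.piFinset (fun _ : ι => Finset.Icc 1 M ×ˢ Finset.Icc 1 M)).erase
          (fun h => (jstar h, istar h)), W P * T P := by
    rw [hA, hB, ← hsplit]
    simp only [hWP]
    ring
  rw [hAB]
  calc |∑ P ∈ (Fintype.piFinset (fun _ : ι => Finset.Icc 1 M ×ˢ Finset.Icc 1 M)).erase
          (fun h => (jstar h, istar h)), W P * T P|
      ≤ ∑ P ∈ (Fintype.piFinset (fun _ : ι => Finset.Icc 1 M ×ˢ Finset.Icc 1 M)).erase
          (fun h => (jstar h, istar h)), |W P * T P| := Finset.abs_sum_le_sum_abs _ _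
    _ ≤ ∑ P ∈ (Fintype.piFinset (fun _ : ι => Finset.Icc 1 M ×ˢ Finset.Icc 1 M)).erase
          (fun h => (jstar h, istar h)), W P * Imax := by
        refine Finset.sum_le_sum fun P hP => ?_
        rw [abs_mul, abs_of_nonneg (hWnn P)]
        exact mul_le_mul_of_nonneg_left (hTbound P (Finset.mem_of_mem_erase hP)) (hWnn P)
    _ = (∑ P ∈ (Fintype.piFinset (fun _ : ι => Finset.Icc 1 M ×ˢ Finset.Icc 1 M)).erase
          (fun h => (jstar h, istar h)), W P) * Imax := (Finset.sum_mul _ _ _).symm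
    _ = (1 - Pi) * Imax := by
        congr 1
        have := hWsplit
        rw [hsumW] at this
        rw [← hWP]
        linarith
end

section
/- In the multi-head feature setup, additionally fix S* ∈ [H]_{≤D} with S* ⊆ {1,…,min(H,M)}, let a > 0 and ε ∈ (0,1], and for each sequence x_1,…,x_{L+1} define s*_l = ∏_{h∈S*} 1{x_{l−h} = x_{L+1−h}}, σ_l = exp(a·s_l)/Σ_{l′=M+1}^{L} exp(a·s_{l′}), σ*_l = exp(a·s*_l)/Σ_{l′=M+1}^{L} exp(a·s*_{l′}), y(k) = Σ_{l=M+1}^{L} σ_l·1{x_l = e_k} and y*(k) = Σ_{l=M+1}^{L} σ*_l·1{x_l = e_k}. Set Δ₁ = 1 − p_{S*} and Δ₂ = 1 − ∏_{h∈S*} (σ^{(h)}_{−h})². Then for any probability distribution ρ on 𝒳^{L+1}, with f₁ = E_ρ[ Σ_{l=M+1}^{L} σ_l Σ_{k=1}^{d} ( 1{x_{L+1}=x_l=e_k}/(y(k)+ε) − y(k)·1{x_{L+1}=e_k}/(y(k)+ε) ) · ∏_{h∈S*} ⟨v_l^{(h)}, v_{L+1}^{(h)}⟩ ] and f₂ =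 E_ρ[ Σ_{l=M+1}^{L} σ*_l Σ_{k=1}^{d} ( 1{x_{L+1}=x_l=e_k}/(y*(k)+ε) − y*(k)·1{x_{L+1}=e_k}/(y*(k)+ε) ) · ∏_{h∈S*} 1{x_{l−h} = x_{L+1−h}} ], one has |f₁ − f₂| ≤ 12·(1 + a·ε^{−1})·(Δ₁ + Δ₂). -/
open Finset

lemma exp_sub_one_le_mul (x : ℝ) : Real.exp x - 1 ≤ x * Real.exp x := by
  have h := Real.add_one_le_exp (-x)
  rw [Real.exp_neg, inv_eq_one_div, le_div_iff₀ (Real.exp_pos x)] at h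
  nlinarith

lemma softmax_l1 {ι : Type*} (I : Finset ι) (hI : I.Nonempty) (u u' : ι → ℝ) (t : ℝ)
    (ht : ∀ l ∈ I, |u l - u' l| ≤ t) :
    ∑ l ∈ I, |Real.exp (u l) / (∑ j ∈ I, Real.exp (u j)) -
      Real.exp (u' l) / (∑ j ∈ I, Real.exp (u' j))| ≤ Real.exp (2 * t) - 1 := by
  have hZ : 0 < ∑ j ∈ I, Real.exp (u j) :=
    Finset.sum_pos (fun j _ => Real.exp_pos _) hI
  have hZ' : 0 < ∑ j ∈ I, Real.exp (u' j) :=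
    Finset.sum_pos (fun j _ => Real.exp_pos _) hI
  have ht0 : 0 ≤ t := by
    obtain ⟨l, hl⟩ := hI
    exact le_trans (abs_nonneg _) (ht l hl)
  have hcmp : ∀ l ∈ I, Real.exp (u l) ≤ Real.exp t * Real.exp (u' l) := by
    intro l hl
    rw [← Real.exp_add]
    exact Real.exp_le_exp.mpr (by have := (abs_le.mp (ht l hl)).2; linarith)
  have hcmp' : ∀ l ∈ I, Real.exp (u' l) ≤ Real.exp t * Real.exp (u l) := by
    intro l hl
    rw [← Real.exp_add]
    exact Real.exp_le_exp.mpr (by have := (abs_le.mp (ht l hl)).1; linarith)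
  have hZle : (∑ j ∈ I, Real.exp (u j)) ≤ Real.exp t * ∑ j ∈ I, Real.exp (u' j) := by
    rw [Finset.mul_sum]; exact Finset.sum_le_sum hcmp
  have hZle' : (∑ j ∈ I, Real.exp (u' j)) ≤ Real.exp t * ∑ j ∈ I, Real.exp (u j) := by
    rw [Finset.mul_sum]; exact Finset.sum_le_sum hcmp'
  have het : 0 < Real.exp t := Real.exp_pos t
  have het1 : 1 ≤ Real.exp t := Real.one_le_exp ht0
  have key : ∀ l ∈ I, |Real.exp (u l) / (∑ j ∈ I, Real.exp (u j)) -
      Real.exp (u' l) / (∑ j ∈ I, Real.exp (u' j))| ≤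
      (Real.exp (2 * t) - 1) * (Real.exp (u' l) / (∑ j ∈ I, Real.exp (u' j))) := by
    intro l hl
    have hup : Real.exp (u l) / (∑ j ∈ I, Real.exp (u j)) ≤
        Real.exp (2 * t) * (Real.exp (u' l) / (∑ j ∈ I, Real.exp (u' j))) := by
      rw [div_le_iff₀ hZ]
      have h1 := hcmp l hl
      have e2 : Real.exp (2 * t) = Real.exp t * Real.exp t := by
        rw [← Real.exp_add]; ring_nf
      calc Real.exp (u l) ≤ Real.exp t * Real.exp (u' l) := h1
        _ ≤ Real.exp t * Real.exp (u' l) * ((Real.exp t * ∑ j ∈ I, Real.exp (u j)) /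
              (∑ j ∈ I, Real.exp (u' j))) := by
            nth_rewrite 1 [← mul_one (Real.exp t * Real.exp (u' l))]
            apply mul_le_mul_of_nonneg_left _ (by positivity)
            rw [le_div_iff₀ hZ', one_mul]; exact hZle'
        _ = Real.exp (2 * t) * (Real.exp (u' l) / (∑ j ∈ I, Real.exp (u' j))) *
              (∑ j ∈ I, Real.exp (u j)) := by rw [e2]; field_simp
    have hdn : Real.exp (u' l) / (∑ j ∈ I, Real.exp (u' j)) ≤
        Real.exp (2 * t) * (Real.exp (u l) / (∑ j ∈ I, Real.exp (u j))) := by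
      rw [div_le_iff₀ hZ']
      have h1 := hcmp' l hl
      have e2 : Real.exp (2 * t) = Real.exp t * Real.exp t := by
        rw [← Real.exp_add]; ring_nf
      calc Real.exp (u' l) ≤ Real.exp t * Real.exp (u l) := h1
        _ ≤ Real.exp t * Real.exp (u l) * ((Real.exp t * ∑ j ∈ I, Real.exp (u' j)) /
              (∑ j ∈ I, Real.exp (u j))) := by
            nth_rewrite 1 [← mul_one (Real.exp t * Real.exp (u l))]
            apply mul_le_mul_of_nonneg_left _ (by positivity)
            rw [le_div_iff₀ hZ, one_mul]; exact hZle
        _ = Real.exp (2 * t) * (Real.exp (u l) / (∑ j ∈ I, Real.exp (u j))) *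
              (∑ j ∈ I, Real.exp (u' j)) := by rw [e2]; field_simp
    have hσpos : 0 ≤ Real.exp (u l) / (∑ j ∈ I, Real.exp (u j)) := by positivity
    have hσ'pos : 0 ≤ Real.exp (u' l) / (∑ j ∈ I, Real.exp (u' j)) := by positivity
    have he2 : 1 ≤ Real.exp (2 * t) := Real.one_le_exp (by linarith)
    rw [abs_le]
    constructor
    · nlinarith
    · nlinarith
  calc ∑ l ∈ I, |Real.exp (u l) / (∑ j ∈ I, Real.exp (u j)) -
        Real.exp (u' l) / (∑ j ∈ I, Real.exp (u' j))|
      ≤ ∑ l ∈ I, (Real.exp (2 * t) - 1) * (Real.exp (u' l) / (∑ j ∈ I, Real.exp (u' j))) :=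
        Finset.sum_le_sum key
    _ = Real.exp (2 * t) - 1 := by
        rw [← Finset.mul_sum, ← Finset.sum_div, div_self (ne_of_gt hZ'), mul_one]

lemma core_bound {ι : Type*} (I : Finset ι) (w w' c P P' : ι → ℝ) (ε δ Δ2 : ℝ)
    (hε : 0 < ε) (hΔ2 : 0 ≤ Δ2)
    (hc : ∀ l ∈ I, c l = 0 ∨ c l = 1)
    (hw0 : ∀ l ∈ I, 0 ≤ w l) (hw1 : ∑ l ∈ I, w l = 1)
    (hw'0 : ∀ l ∈ I, 0 ≤ w' l) (hw'1 : ∑ l ∈ I, w' l = 1)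
    (hP : ∀ l ∈ I, 0 ≤ P l ∧ P l ≤ 1) (hP' : ∀ l ∈ I, 0 ≤ P' l ∧ P' l ≤ 1)
    (hPP' : ∀ l ∈ I, |P l - P' l| ≤ Δ2)
    (hww' : ∑ l ∈ I, |w l - w' l| ≤ δ) :
    |(∑ l ∈ I, w l * ((c l - ∑ j ∈ I, w j * c j) / ((∑ j ∈ I, w j * c j) + ε)) * P l) -
      ∑ l ∈ I, w' l * ((c l - ∑ j ∈ I, w' j * c j) / ((∑ j ∈ I, w' j * c j) + ε)) * P' l| ≤
    2 * δ / ε + 2 * Δ2 := by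
  set y := ∑ j ∈ I, w j * c j with hy
  set y' := ∑ j ∈ I, w' j * c j with hy'
  clear_value y y'
  have hc01 : ∀ l ∈ I, 0 ≤ c l ∧ c l ≤ 1 := by
    intro l hl; rcases hc l hl with h | h <;> rw [h] <;> norm_num
  have hy0 : 0 ≤ y := hy ▸ Finset.sum_nonneg fun l hl =>
    mul_nonneg (hw0 l hl) (hc01 l hl).1
  have hy1 : y ≤ 1 := by
    rw [hy, ← hw1]
    exact Finset.sum_le_sum fun l hl => by
      nth_rewrite 2 [← mul_one (w l)]
      exact mul_le_mul_of_nonneg_left (hc01 l hl).2 (hw0 l hl)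
  have hy'0 : 0 ≤ y' := hy' ▸ Finset.sum_nonneg fun l hl =>
    mul_nonneg (hw'0 l hl) (hc01 l hl).1
  have hy'1 : y' ≤ 1 := by
    rw [hy', ← hw'1]
    exact Finset.sum_le_sum fun l hl => by
      nth_rewrite 2 [← mul_one (w' l)]
      exact mul_le_mul_of_nonneg_left (hc01 l hl).2 (hw'0 l hl)
  have hyε : 0 < y + ε := by linarith
  have hy'ε : 0 < y' + ε := by linarith
  have hδ0 : 0 ≤ δ := le_trans (Finset.sum_nonneg fun l _ => abs_nonneg _) hww'
  have hyy' : |y - y'| ≤ δ := by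
    rw [hy, hy', ← Finset.sum_sub_distrib]
    refine le_trans (Finset.abs_sum_le_sum_abs _ _) (le_trans (Finset.sum_le_sum ?_) hww')
    intro l hl
    rw [← sub_mul, abs_mul]
    nth_rewrite 2 [← mul_one (|w l - w' l|)]
    exact mul_le_mul_of_nonneg_left (by rw [abs_le]; constructor <;> nlinarith [(hc01 l hl).1, (hc01 l hl).2]) (abs_nonneg _)
  -- decomposition
  have hdecomp : (∑ l ∈ I, w l * ((c l - y) / (y + ε)) * P l) -
      ∑ l ∈ I, w' l * ((c l - y') / (y' + ε)) * P' l =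
      ∑ l ∈ I, ((w l - w' l) * ((c l - y) / (y + ε)) * P l +
        w' l * ((c l - y) / (y + ε) - (c l - y') / (y' + ε)) * P l +
        w' l * ((c l - y') / (y' + ε)) * (P l - P' l)) := by
    rw [← Finset.sum_sub_distrib]
    exact Finset.sum_congr rfl fun l _ => by ring
  rw [hdecomp]
  have habs := Finset.abs_sum_le_sum_abs
    (fun l => (w l - w' l) * ((c l - y) / (y + ε)) * P l +
        w' l * ((c l - y) / (y + ε) - (c l - y') / (y' + ε)) * P l +
        w' l * ((c l - y') / (y' + ε)) * (P l - P' l)) I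
  refine le_trans habs ?_
  have hsplit : ∀ l ∈ I, |(w l - w' l) * ((c l - y) / (y + ε)) * P l +
        w' l * ((c l - y) / (y + ε) - (c l - y') / (y' + ε)) * P l +
        w' l * ((c l - y') / (y' + ε)) * (P l - P' l)| ≤
      |w l - w' l| / ε +
      w' l * (c l + ε) * (δ / (ε * (y' + ε))) +
      w' l * ((c l + y') / (y' + ε)) * Δ2 := by
    intro l hl
    obtain ⟨hP0, hP1⟩ := hP l hl
    obtain ⟨hP'0, hP'1⟩ := hP' l hl
    obtain ⟨hc0, hc1⟩ := hc01 l hl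
    have h1 : |(w l - w' l) * ((c l - y) / (y + ε)) * P l| ≤ |w l - w' l| / ε := by
      rw [abs_mul, abs_mul]
      have hg : |(c l - y) / (y + ε)| ≤ 1 / ε := by
        rw [abs_div, abs_of_pos hyε, div_le_div_iff₀ hyε hε]
        have : |c l - y| ≤ 1 := by rw [abs_le]; constructor <;> linarith
        nlinarith [abs_nonneg (c l - y)]
      have hPa : |P l| ≤ 1 := by rw [abs_of_nonneg hP0]; exact hP1
      calc |w l - w' l| * |(c l - y) / (y + ε)| * |P l|
          ≤ |w l - w' l| * (1 / ε) * 1 := by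
            apply mul_le_mul (mul_le_mul_of_nonneg_left hg (abs_nonneg _)) hPa (abs_nonneg _)
            positivity
        _ = |w l - w' l| / ε := by ring
    have h2 : |w' l * ((c l - y) / (y + ε) - (c l - y') / (y' + ε)) * P l| ≤
        w' l * (c l + ε) * (δ / (ε * (y' + ε))) := by
      have hid : (c l - y) / (y + ε) - (c l - y') / (y' + ε) =
          (y' - y) * (c l + ε) / ((y + ε) * (y' + ε)) := by
        field_simp; ring
      rw [hid, abs_mul, abs_mul, abs_of_nonneg (hw'0 l hl)]
      have hgb : |(y' - y) * (c l + ε) / ((y + ε) * (y' + ε))| ≤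
          (c l + ε) * (δ / (ε * (y' + ε))) := by
        rw [abs_div, abs_mul, abs_of_pos (mul_pos hyε hy'ε),
          abs_of_nonneg (by linarith : (0:ℝ) ≤ c l + ε)]
        have h1 : |y' - y| ≤ δ := by rw [abs_sub_comm]; exact hyy'
        have hne : (0:ℝ) < ε * (y' + ε) := by positivity
        calc |y' - y| * (c l + ε) / ((y + ε) * (y' + ε))
            ≤ δ * (c l + ε) / (ε * (y' + ε)) := by
              apply div_le_div₀ (by positivity)
                (mul_le_mul_of_nonneg_right h1 (by linarith)) hne
              apply mul_le_mul_of_nonneg_right (by linarith) (le_of_lt hy'ε)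
          _ = (c l + ε) * (δ / (ε * (y' + ε))) := by ring
      calc w' l * |(y' - y) * (c l + ε) / ((y + ε) * (y' + ε))| * |P l|
          ≤ w' l * ((c l + ε) * (δ / (ε * (y' + ε)))) * 1 := by
            apply mul_le_mul (mul_le_mul_of_nonneg_left hgb (hw'0 l hl))
              (by rw [abs_of_nonneg hP0]; exact hP1) (abs_nonneg _)
            exact mul_nonneg (hw'0 l hl) (by positivity)
        _ = w' l * (c l + ε) * (δ / (ε * (y' + ε))) := by ring
    have h3 : |w' l * ((c l - y') / (y' + ε)) * (P l - P' l)| ≤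
        w' l * ((c l + y') / (y' + ε)) * Δ2 := by
      rw [abs_mul, abs_mul, abs_of_nonneg (hw'0 l hl)]
      apply mul_le_mul _ (hPP' l hl) (abs_nonneg _)
        (mul_nonneg (hw'0 l hl) (by positivity))
      apply mul_le_mul_of_nonneg_left _ (hw'0 l hl)
      rw [abs_div, abs_of_pos hy'ε, div_le_div_iff₀ hy'ε hy'ε]
      have : |c l - y'| ≤ c l + y' := by
        rw [abs_le]; constructor <;> nlinarith
      nlinarith [abs_nonneg (c l - y')]
    calc _ ≤ |(w l - w' l) * ((c l - y) / (y + ε)) * P l| +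
          |w' l * ((c l - y) / (y + ε) - (c l - y') / (y' + ε)) * P l| +
          |w' l * ((c l - y') / (y' + ε)) * (P l - P' l)| := by
          exact abs_add_three _ _ _
      _ ≤ _ := by gcongr
  refine le_trans (Finset.sum_le_sum hsplit) ?_
  rw [Finset.sum_add_distrib, Finset.sum_add_distrib]
  have e1 : ∑ l ∈ I, |w l - w' l| / ε ≤ δ / ε := by
    rw [← Finset.sum_div]
    exact (div_le_div_iff_of_pos_right hε).mpr hww'
  have e2sum : ∑ l ∈ I, w' l * (c l + ε) = y' + ε := by
    simp only [mul_add]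
    rw [Finset.sum_add_distrib, ← hy', ← Finset.sum_mul, hw'1, one_mul]
  have e2 : ∑ l ∈ I, w' l * (c l + ε) * (δ / (ε * (y' + ε))) = δ / ε := by
    rw [← Finset.sum_mul, e2sum]
    field_simp
  have e3 : ∑ l ∈ I, w' l * ((c l + y') / (y' + ε)) * Δ2 ≤ 2 * Δ2 := by
    rw [← Finset.sum_mul]
    apply mul_le_mul_of_nonneg_right _ hΔ2
    have hss : ∑ l ∈ I, w' l * ((c l + y') / (y' + ε)) = (y' + y') / (y' + ε) := by
      simp only [mul_div_assoc']
      rw [← Finset.sum_div]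
      congr 1
      simp only [mul_add]
      rw [Finset.sum_add_distrib, ← hy', ← Finset.sum_mul, hw'1, one_mul]
    rw [hss, div_le_iff₀ hy'ε]
    linarith
  linarith [show 2*δ/ε = δ/ε + δ/ε by ring]

lemma prod_diff_bound {ι : Type*} [DecidableEq ι] (S : Finset ι) (q r : ι → ℝ) (b : ι → Prop)
    [DecidablePred b]
    (hq : ∀ h ∈ S, 0 ≤ q h ∧ q h ≤ 1) (hr : ∀ h ∈ S, 0 ≤ r h ∧ r h ≤ 1)
    (hlow : ∀ h ∈ S, b h → r h ^ 2 ≤ q h)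
    (hhigh : ∀ h ∈ S, ¬ b h → q h ≤ 1 - r h ^ 2) :
    |(∏ h ∈ S, q h) - ∏ h ∈ S, (if b h then (1 : ℝ) else 0)| ≤ 1 - ∏ h ∈ S, r h ^ 2 := by
  have hr2 : ∀ h ∈ S, 0 ≤ r h ^ 2 ∧ r h ^ 2 ≤ 1 := by
    intro h hh
    obtain ⟨h0, h1⟩ := hr h hh
    exact ⟨by positivity, by nlinarith⟩
  have hprod_r_le_one : ∏ h ∈ S, r h ^ 2 ≤ 1 :=
    Finset.prod_le_one (fun h hh => (hr2 h hh).1) (fun h hh => (hr2 h hh).2)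
  have hq_le_one : ∏ h ∈ S, q h ≤ 1 :=
    Finset.prod_le_one (fun h hh => (hq h hh).1) (fun h hh => (hq h hh).2)
  have hq_nonneg : 0 ≤ ∏ h ∈ S, q h := Finset.prod_nonneg fun h hh => (hq h hh).1
  by_cases hall : ∀ h ∈ S, b h
  · have hone : (∏ h ∈ S, (if b h then (1 : ℝ) else 0)) = 1 := by
      rw [Finset.prod_congr rfl (fun h hh => if_pos (hall h hh))]
      exact Finset.prod_const_one
    rw [hone]
    have hlower : (∏ h ∈ S, r h ^ 2) ≤ ∏ h ∈ S, q h :=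
      Finset.prod_le_prod (fun h hh => (hr2 h hh).1) (fun h hh => hlow h hh (hall h hh))
    rw [abs_le]
    constructor <;> linarith
  · push_neg at hall
    obtain ⟨h0, hh0, hb0⟩ := hall
    have hzero : (∏ h ∈ S, (if b h then (1 : ℝ) else 0)) = 0 :=
      Finset.prod_eq_zero hh0 (if_neg hb0)
    rw [hzero, sub_zero, abs_of_nonneg hq_nonneg]
    have h1 : (∏ h ∈ S, q h) ≤ q h0 := by
      rw [← Finset.mul_prod_erase S q hh0]
      nth_rewrite 2 [← mul_one (q h0)]
      apply mul_le_mul_of_nonneg_left _ (hq h0 hh0).1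
      exact Finset.prod_le_one (fun h hh => (hq h (Finset.mem_of_mem_erase hh)).1)
        (fun h hh => (hq h (Finset.mem_of_mem_erase hh)).2)
    have h2 : (∏ h ∈ S, r h ^ 2) ≤ r h0 ^ 2 := by
      rw [← Finset.mul_prod_erase S _ hh0]
      nth_rewrite 2 [← mul_one (r h0 ^ 2)]
      apply mul_le_mul_of_nonneg_left _ (hr2 h0 hh0).1
      exact Finset.prod_le_one (fun h hh => (hr2 h (Finset.mem_of_mem_erase hh)).1)
        (fun h hh => (hr2 h (Finset.mem_of_mem_erase hh)).2)
    have := hhigh h0 hh0 hb0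
    linarith

lemma weighted_avg_diff {ι : Type*} [DecidableEq ι] (F : Finset ι) (p g : ι → ℝ) (S0 : ι)
    (hS0 : S0 ∈ F) (hp0 : ∀ S ∈ F, 0 ≤ p S) (hp1 : ∑ S ∈ F, p S = 1)
    (hg : ∀ S ∈ F, 0 ≤ g S ∧ g S ≤ 1) :
    |(∑ S ∈ F, p S * g S) - g S0| ≤ 1 - p S0 := by
  have hsplit : ∑ S ∈ F, p S * g S = p S0 * g S0 + ∑ S ∈ F.erase S0, p S * g S :=
    (Finset.add_sum_erase F (fun S => p S * g S) hS0).symm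
  have hpsplit : ∑ S ∈ F.erase S0, p S = 1 - p S0 := by
    have := Finset.add_sum_erase F p hS0
    linarith
  have herase_nonneg : 0 ≤ ∑ S ∈ F.erase S0, p S * g S :=
    Finset.sum_nonneg fun S hS => mul_nonneg (hp0 S (Finset.mem_of_mem_erase hS))
      (hg S (Finset.mem_of_mem_erase hS)).1
  have herase_le : ∑ S ∈ F.erase S0, p S * g S ≤ 1 - p S0 := by
    rw [← hpsplit]
    exact Finset.sum_le_sum fun S hS => by
      nth_rewrite 2 [← mul_one (p S)]
      exact mul_le_mul_of_nonneg_left (hg S (Finset.mem_of_mem_erase hS)).2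
        (hp0 S (Finset.mem_of_mem_erase hS))
  have hp0le : p S0 ≤ 1 := by
    have h0 : 0 ≤ ∑ S ∈ F.erase S0, p S :=
      Finset.sum_nonneg fun S hS => hp0 S (Finset.mem_of_mem_erase hS)
    linarith
  obtain ⟨hg0, hg1⟩ := hg S0 hS0
  rw [hsplit, abs_le]
  constructor <;> nlinarith [hp0 S0 hS0]

lemma softmax_sum_one {ι : Type*} (I : Finset ι) (hI : I.Nonempty) (u : ι → ℝ) :
    ∑ l ∈ I, Real.exp (u l) / (∑ j ∈ I, Real.exp (u j)) = 1 := by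
  have hZ : 0 < ∑ j ∈ I, Real.exp (u j) := Finset.sum_pos (fun j _ => Real.exp_pos _) hI
  rw [← Finset.sum_div, div_self (ne_of_gt hZ)]

lemma softmax_l1_lin {ι : Type*} (I : Finset ι) (hI : I.Nonempty) (u u' : ι → ℝ) (t : ℝ)
    (hl1 : ∑ l ∈ I, |Real.exp (u l) / (∑ j ∈ I, Real.exp (u j)) -
      Real.exp (u' l) / (∑ j ∈ I, Real.exp (u' j))| ≤ Real.exp (2 * t) - 1)
    (ht0 : 0 ≤ t) :
    ∑ l ∈ I, |Real.exp (u l) / (∑ j ∈ I, Real.exp (u j)) -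
      Real.exp (u' l) / (∑ j ∈ I, Real.exp (u' j))| ≤ 6 * t := by
  rcases le_or_gt (2 * t) 1 with hc | hc
  · refine le_trans hl1 ?_
    have h1 := exp_sub_one_le_mul (2 * t)
    have h2 : Real.exp (2 * t) ≤ Real.exp 1 := Real.exp_le_exp.mpr hc
    have h3 : Real.exp 1 < 2.7182818286 := Real.exp_one_lt_d9
    nlinarith
  · have hZ : 0 < ∑ j ∈ I, Real.exp (u j) := Finset.sum_pos (fun j _ => Real.exp_pos _) hI
    have hZ' : 0 < ∑ j ∈ I, Real.exp (u' j) := Finset.sum_pos (fun j _ => Real.exp_pos _) hI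
    have hbd : ∑ l ∈ I, |Real.exp (u l) / (∑ j ∈ I, Real.exp (u j)) -
        Real.exp (u' l) / (∑ j ∈ I, Real.exp (u' j))| ≤
        ∑ l ∈ I, (Real.exp (u l) / (∑ j ∈ I, Real.exp (u j)) +
          Real.exp (u' l) / (∑ j ∈ I, Real.exp (u' j))) := by
      apply Finset.sum_le_sum
      intro l _
      have h1 : 0 ≤ Real.exp (u l) / (∑ j ∈ I, Real.exp (u j)) := by positivity
      have h2 : 0 ≤ Real.exp (u' l) / (∑ j ∈ I, Real.exp (u' j)) := by positivity
      rw [abs_le]; constructor <;> linarith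
    rw [Finset.sum_add_distrib, softmax_sum_one I hI u, softmax_sum_one I hI u'] at hbd
    linarith

set_option maxHeartbeats 2000000 in
/-- Replacing the learned attention scores `s_l` (and the induced softmax
weights `σ_l` and token frequencies `y`) by their idealized counterparts `s*_l`, `σ*_l`, `y*`
incurs an error of at most `12(1 + a ε⁻¹)(Δ₁ + Δ₂)` in the gradient-type expectation, where
`Δ₁ = 1 − p_{S*}` and `Δ₂ = 1 − ∏_{h∈S*}(σ^{(h)}_{−h})²`. -/
theorem statement16 (d H M D L : ℕ) (hd : 0 < d) (hH : 0 < H) (hM : 0 < M) (hD : 0 < D)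
    (hML : M < L)
    (σ : ℕ → ℕ → ℝ) (hσ0 : ∀ h i, 0 ≤ σ h i)
    (hσ1 : ∀ h ∈ Finset.Icc 1 H, ∑ i ∈ Finset.Icc 1 M, σ h i = 1)
    (p : Finset ℕ → ℝ) (hp0 : ∀ S, 0 ≤ p S)
    (hp1 : ∑ S ∈ (Finset.Icc 1 H).powerset.filter (fun S => S.card ≤ D), p S = 1)
    (Sstar : Finset ℕ)
    (hSstar : Sstar ∈ (Finset.Icc 1 H).powerset.filter (fun S => S.card ≤ D))
    (hSstarM : ∀ h ∈ Sstar, h ≤ M)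
    (a ε : ℝ) (ha : 0 < a) (hε0 : 0 < ε) (hε1 : ε ≤ 1)
    (ρ : (Fin (L + 1) → Fin d) → ℝ) (hρ0 : ∀ x, 0 ≤ ρ x) (hρ1 : ∑ x, ρ x = 1) :
    let v : (Fin (L + 1) → Fin d) → ℕ → {m // m ∈ Finset.Ico M L} → Fin d → ℝ := fun x h l kk =>
      ∑ i ∈ Finset.Icc 1 M, σ h i *
        (if x ⟨l.1 - i, lt_of_le_of_lt (Nat.sub_le _ _) (icoLtSucc l)⟩ = kk then (1 : ℝ) else 0);
    let vq : (Fin (L + 1) → Fin d) → ℕ → Fin d → ℝ := fun x h kk =>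
      ∑ i ∈ Finset.Icc 1 M, σ h i *
        (if x ⟨L - i, Nat.lt_succ_of_le (Nat.sub_le _ _)⟩ = kk then (1 : ℝ) else 0);
    let s : (Fin (L + 1) → Fin d) → {m // m ∈ Finset.Ico M L} → ℝ := fun x l =>
      ∑ S ∈ (Finset.Icc 1 H).powerset.filter (fun S => S.card ≤ D),
        p S * ∏ h ∈ S, ∑ kk : Fin d, v x h l kk * vq x h kk;
    let sstar : (Fin (L + 1) → Fin d) → {m // m ∈ Finset.Ico M L} → ℝ := fun x l =>
      ∏ h ∈ Sstar,
        (if x ⟨l.1 - h, lt_of_le_of_lt (Nat.sub_le _ _) (icoLtSucc l)⟩ =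
            x ⟨L - h, Nat.lt_succ_of_le (Nat.sub_le _ _)⟩ then (1 : ℝ) else 0);
    let σw : (Fin (L + 1) → Fin d) → {m // m ∈ Finset.Ico M L} → ℝ := fun x l =>
      Real.exp (a * s x l) / ∑ l' ∈ (Finset.Ico M L).attach, Real.exp (a * s x l');
    let σws : (Fin (L + 1) → Fin d) → {m // m ∈ Finset.Ico M L} → ℝ := fun x l =>
      Real.exp (a * sstar x l) / ∑ l' ∈ (Finset.Ico M L).attach, Real.exp (a * sstar x l');
    let y : (Fin (L + 1) → Fin d) → Fin d → ℝ := fun x k =>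
      ∑ l ∈ (Finset.Ico M L).attach, σw x l * (if x ⟨l.1, icoLtSucc l⟩ = k then (1 : ℝ) else 0);
    let ys : (Fin (L + 1) → Fin d) → Fin d → ℝ := fun x k =>
      ∑ l ∈ (Finset.Ico M L).attach, σws x l * (if x ⟨l.1, icoLtSucc l⟩ = k then (1 : ℝ) else 0);
    let f1 := ∑ x : Fin (L + 1) → Fin d, ρ x *
      ∑ l ∈ (Finset.Ico M L).attach, σw x l *
        ∑ k : Fin d,
          ((if x ⟨L, Nat.lt_succ_self L⟩ = k ∧ x ⟨l.1, icoLtSucc l⟩ = k then (1 : ℝ) else 0) /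
              (y x k + ε) -
            y x k * (if x ⟨L, Nat.lt_succ_self L⟩ = k then (1 : ℝ) else 0) / (y x k + ε)) *
          ∏ h ∈ Sstar, ∑ kk : Fin d, v x h l kk * vq x h kk;
    let f2 := ∑ x : Fin (L + 1) → Fin d, ρ x *
      ∑ l ∈ (Finset.Ico M L).attach, σws x l *
        ∑ k : Fin d,
          ((if x ⟨L, Nat.lt_succ_self L⟩ = k ∧ x ⟨l.1, icoLtSucc l⟩ = k then (1 : ℝ) else 0) /
              (ys x k + ε) -
            ys x k * (if x ⟨L, Nat.lt_succ_self L⟩ = k then (1 : ℝ) else 0) / (ys x k + ε)) *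
          sstar x l;
    |f1 - f2| ≤ 12 * (1 + a * ε⁻¹) * ((1 - p Sstar) + (1 - ∏ h ∈ Sstar, σ h h ^ 2)) := by
  intro v vq s sstar σw σws y ys f1 f2
  set F := (Finset.Icc 1 H).powerset.filter (fun S => S.card ≤ D) with hF
  set I := (Finset.Ico M L).attach with hI
  set Δ1 := 1 - p Sstar with hΔ1
  set Δ2 := 1 - ∏ h ∈ Sstar, σ h h ^ 2 with hΔ2
  have hIne : I.Nonempty := Finset.attach_nonempty_iff.mpr (Finset.nonempty_Ico.mpr hML)
  have hSsub : Sstar ⊆ Finset.Icc 1 H := Finset.mem_powerset.mp (Finset.mem_filter.mp hSstar).1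
  have hSh : ∀ h ∈ Sstar, h ∈ Finset.Icc 1 M := by
    intro h hh
    have := Finset.mem_Icc.mp (hSsub hh)
    exact Finset.mem_Icc.mpr ⟨this.1, hSstarM h hh⟩
  have hσhh : ∀ h ∈ Sstar, 0 ≤ σ h h ∧ σ h h ≤ 1 := by
    intro h hh
    refine ⟨hσ0 h h, ?_⟩
    rw [← hσ1 h (hSsub hh)]
    exact Finset.single_le_sum (fun i _ => hσ0 h i) (hSh h hh)
  have hΔ1nn : 0 ≤ Δ1 := by
    rw [hΔ1]
    have : p Sstar ≤ 1 := by
      rw [← hp1]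
      exact Finset.single_le_sum (fun S _ => hp0 S) hSstar
    linarith
  have hΔ2nn : 0 ≤ Δ2 := by
    rw [hΔ2]
    have : ∏ h ∈ Sstar, σ h h ^ 2 ≤ 1 :=
      Finset.prod_le_one (fun h hh => by positivity)
        (fun h hh => by nlinarith [(hσhh h hh).1, (hσhh h hh).2])
    linarith
  -- per sequence x bound, in collapsed form
  have key : ∀ x : Fin (L + 1) → Fin d,
      |(∑ l ∈ I, σw x l *
          (((if x ⟨l.1, icoLtSucc l⟩ = x ⟨L, Nat.lt_succ_self L⟩ then (1 : ℝ) else 0) -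
              y x (x ⟨L, Nat.lt_succ_self L⟩)) / (y x (x ⟨L, Nat.lt_succ_self L⟩) + ε)) *
          ∏ h ∈ Sstar, ∑ kk : Fin d, v x h l kk * vq x h kk) -
        ∑ l ∈ I, σws x l *
          (((if x ⟨l.1, icoLtSucc l⟩ = x ⟨L, Nat.lt_succ_self L⟩ then (1 : ℝ) else 0) -
              ys x (x ⟨L, Nat.lt_succ_self L⟩)) / (ys x (x ⟨L, Nat.lt_succ_self L⟩) + ε)) *
          sstar x l| ≤ 12 * (1 + a * ε⁻¹) * (Δ1 + Δ2) := by
    intro x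
    -- basic facts about v and vq
    have hv0 : ∀ h l kk, 0 ≤ v x h l kk := by
      intro h l kk
      simp only [v]
      exact Finset.sum_nonneg fun i _ => mul_nonneg (hσ0 h i) (by split <;> norm_num)
    have hvq0 : ∀ h kk, 0 ≤ vq x h kk := by
      intro h kk
      simp only [vq]
      exact Finset.sum_nonneg fun i _ => mul_nonneg (hσ0 h i) (by split <;> norm_num)
    have hvsum : ∀ h ∈ Finset.Icc 1 H, ∀ l, ∑ kk : Fin d, v x h l kk = 1 := by
      intro h hh l
      simp only [v]
      rw [Finset.sum_comm]
      have hterm : ∀ i ∈ Finset.Icc 1 M, (∑ kk : Fin d, σ h i *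
          (if x ⟨l.1 - i, lt_of_le_of_lt (Nat.sub_le _ _) (icoLtSucc l)⟩ = kk then (1 : ℝ) else 0))
          = σ h i := by
        intro i _
        rw [← Finset.mul_sum]
        simp
      rw [Finset.sum_congr rfl hterm, hσ1 h hh]
    have hvqsum : ∀ h ∈ Finset.Icc 1 H, ∑ kk : Fin d, vq x h kk = 1 := by
      intro h hh
      simp only [vq]
      rw [Finset.sum_comm]
      have hterm : ∀ i ∈ Finset.Icc 1 M, (∑ kk : Fin d, σ h i *
          (if x ⟨L - i, Nat.lt_succ_of_le (Nat.sub_le _ _)⟩ = kk then (1 : ℝ) else 0))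
          = σ h i := by
        intro i _
        rw [← Finset.mul_sum]
        simp
      rw [Finset.sum_congr rfl hterm, hσ1 h hh]
    have hvle1 : ∀ h ∈ Finset.Icc 1 H, ∀ l kk, v x h l kk ≤ 1 := by
      intro h hh l kk
      rw [← hvsum h hh l]
      exact Finset.single_le_sum (fun k _ => hv0 h l k) (Finset.mem_univ kk)
    have hvqle1 : ∀ h ∈ Finset.Icc 1 H, ∀ kk, vq x h kk ≤ 1 := by
      intro h hh kk
      rw [← hvqsum h hh]
      exact Finset.single_le_sum (fun k _ => hvq0 h k) (Finset.mem_univ kk)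
    have hvlow : ∀ h ∈ Sstar, ∀ l kk,
        x ⟨l.1 - h, lt_of_le_of_lt (Nat.sub_le _ _) (icoLtSucc l)⟩ = kk →
        σ h h ≤ v x h l kk := by
      intro h hh l kk hkk
      simp only [v]
      refine le_trans (le_of_eq ?_) (Finset.single_le_sum (f := fun i => σ h i *
        (if x ⟨l.1 - i, lt_of_le_of_lt (Nat.sub_le _ _) (icoLtSucc l)⟩ = kk then (1 : ℝ) else 0))
        (fun i _ => mul_nonneg (hσ0 h i) (by split <;> norm_num)) (hSh h hh))
      simp [hkk]
    have hvqlow : ∀ h ∈ Sstar, ∀ kk,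
        x ⟨L - h, Nat.lt_succ_of_le (Nat.sub_le _ _)⟩ = kk → σ h h ≤ vq x h kk := by
      intro h hh kk hkk
      simp only [vq]
      refine le_trans (le_of_eq ?_) (Finset.single_le_sum (f := fun i => σ h i *
        (if x ⟨L - i, Nat.lt_succ_of_le (Nat.sub_le _ _)⟩ = kk then (1 : ℝ) else 0))
        (fun i _ => mul_nonneg (hσ0 h i) (by split <;> norm_num)) (hSh h hh))
      simp [hkk]
    have hvqhigh : ∀ h ∈ Sstar, ∀ kk,
        kk ≠ x ⟨L - h, Nat.lt_succ_of_le (Nat.sub_le _ _)⟩ → vq x h kk ≤ 1 - σ h h := by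
      intro h hh kk hne
      have hlow := hvqlow h hh (x ⟨L - h, Nat.lt_succ_of_le (Nat.sub_le _ _)⟩) rfl
      have e1 : vq x h kk + vq x h (x ⟨L - h, Nat.lt_succ_of_le (Nat.sub_le _ _)⟩) ≤ 1 := by
        rw [← hvqsum h (hSsub hh), ← Finset.add_sum_erase _ _ (Finset.mem_univ kk)]
        refine add_le_add le_rfl ?_
        exact Finset.single_le_sum (fun k _ => hvq0 h k)
          (Finset.mem_erase.mpr ⟨Ne.symm hne, Finset.mem_univ _⟩)
      linarith
    -- inner product bounds
    have hQ01 : ∀ h ∈ Finset.Icc 1 H, ∀ l,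
        0 ≤ (∑ kk : Fin d, v x h l kk * vq x h kk) ∧
        (∑ kk : Fin d, v x h l kk * vq x h kk) ≤ 1 := by
      intro h hh l
      constructor
      · exact Finset.sum_nonneg fun kk _ => mul_nonneg (hv0 h l kk) (hvq0 h kk)
      · calc (∑ kk : Fin d, v x h l kk * vq x h kk) ≤ ∑ kk : Fin d, v x h l kk :=
            Finset.sum_le_sum fun kk _ =>
              mul_le_of_le_one_right (hv0 h l kk) (hvqle1 h hh kk)
          _ = 1 := hvsum h hh l
    have hQlow : ∀ h ∈ Sstar, ∀ l,
        x ⟨l.1 - h, lt_of_le_of_lt (Nat.sub_le _ _) (icoLtSucc l)⟩ =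
          x ⟨L - h, Nat.lt_succ_of_le (Nat.sub_le _ _)⟩ →
        σ h h ^ 2 ≤ ∑ kk : Fin d, v x h l kk * vq x h kk := by
      intro h hh l heq
      have h1 := hvlow h hh l _ heq
      have h2 := hvqlow h hh _ rfl
      have h3 := (hσhh h hh).1
      have h4 := hvq0 h (x ⟨L - h, Nat.lt_succ_of_le (Nat.sub_le _ _)⟩)
      have hmid : σ h h ^ 2 ≤ v x h l (x ⟨L - h, Nat.lt_succ_of_le (Nat.sub_le _ _)⟩) *
          vq x h (x ⟨L - h, Nat.lt_succ_of_le (Nat.sub_le _ _)⟩) := by nlinarith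
      exact le_trans hmid (Finset.single_le_sum (f := fun kk => v x h l kk * vq x h kk)
        (fun kk _ => mul_nonneg (hv0 h l kk) (hvq0 h kk))
        (Finset.mem_univ (x ⟨L - h, Nat.lt_succ_of_le (Nat.sub_le _ _)⟩)))
    have hQhigh : ∀ h ∈ Sstar, ∀ l,
        ¬ (x ⟨l.1 - h, lt_of_le_of_lt (Nat.sub_le _ _) (icoLtSucc l)⟩ =
          x ⟨L - h, Nat.lt_succ_of_le (Nat.sub_le _ _)⟩) →
        (∑ kk : Fin d, v x h l kk * vq x h kk) ≤ 1 - σ h h ^ 2 := by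
      intro h hh l hne
      rw [← Finset.add_sum_erase _ _
        (Finset.mem_univ (x ⟨l.1 - h, lt_of_le_of_lt (Nat.sub_le _ _) (icoLtSucc l)⟩))]
      have hvqk0 : vq x h (x ⟨l.1 - h, lt_of_le_of_lt (Nat.sub_le _ _) (icoLtSucc l)⟩) ≤
          1 - σ h h := hvqhigh h hh _ hne
      have herase : (∑ kk ∈ Finset.univ.erase
            (x ⟨l.1 - h, lt_of_le_of_lt (Nat.sub_le _ _) (icoLtSucc l)⟩),
            v x h l kk * vq x h kk) ≤
          1 - v x h l (x ⟨l.1 - h, lt_of_le_of_lt (Nat.sub_le _ _) (icoLtSucc l)⟩) := by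
        have h1 : (∑ kk ∈ Finset.univ.erase
              (x ⟨l.1 - h, lt_of_le_of_lt (Nat.sub_le _ _) (icoLtSucc l)⟩),
              v x h l kk * vq x h kk) ≤
            ∑ kk ∈ Finset.univ.erase
              (x ⟨l.1 - h, lt_of_le_of_lt (Nat.sub_le _ _) (icoLtSucc l)⟩), v x h l kk :=
          Finset.sum_le_sum fun kk _ =>
            mul_le_of_le_one_right (hv0 h l kk) (hvqle1 h (hSsub hh) kk)
        have h2 : v x h l (x ⟨l.1 - h, lt_of_le_of_lt (Nat.sub_le _ _) (icoLtSucc l)⟩) +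
            (∑ kk ∈ Finset.univ.erase
              (x ⟨l.1 - h, lt_of_le_of_lt (Nat.sub_le _ _) (icoLtSucc l)⟩), v x h l kk) = 1 := by
          rw [Finset.add_sum_erase _ _ (Finset.mem_univ _)]
          exact hvsum h (hSsub hh) l
        linarith
      have hlow := hvlow h hh l _ rfl
      have hσ01 := hσhh h hh
      have hv01 := hvle1 h (hSsub hh) l
        (x ⟨l.1 - h, lt_of_le_of_lt (Nat.sub_le _ _) (icoLtSucc l)⟩)
      have hvn := hv0 h l (x ⟨l.1 - h, lt_of_le_of_lt (Nat.sub_le _ _) (icoLtSucc l)⟩)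
      have hvqn := hvq0 h (x ⟨l.1 - h, lt_of_le_of_lt (Nat.sub_le _ _) (icoLtSucc l)⟩)
      nlinarith
    -- product comparison
    have hPd : ∀ l, |(∏ h ∈ Sstar, ∑ kk : Fin d, v x h l kk * vq x h kk) - sstar x l| ≤ Δ2 := by
      intro l
      have hpd := prod_diff_bound Sstar (fun h => ∑ kk : Fin d, v x h l kk * vq x h kk)
        (fun h => σ h h)
        (fun h => x ⟨l.1 - h, lt_of_le_of_lt (Nat.sub_le _ _) (icoLtSucc l)⟩ =
          x ⟨L - h, Nat.lt_succ_of_le (Nat.sub_le _ _)⟩)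
        (fun h hh => hQ01 h (hSsub hh) l) (fun h hh => hσhh h hh)
        (fun h hh hb => hQlow h hh l hb) (fun h hh hb => hQhigh h hh l hb)
      rw [hΔ2]
      simp only [sstar]
      convert hpd using 3
    -- weighted average comparison
    have hsPd : ∀ l, |s x l - ∏ h ∈ Sstar, ∑ kk : Fin d, v x h l kk * vq x h kk| ≤ Δ1 := by
      intro l
      have hg : ∀ S ∈ F, 0 ≤ (∏ h ∈ S, ∑ kk : Fin d, v x h l kk * vq x h kk) ∧
          (∏ h ∈ S, ∑ kk : Fin d, v x h l kk * vq x h kk) ≤ 1 := by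
        intro S hS
        have hSsub' : S ⊆ Finset.Icc 1 H :=
          Finset.mem_powerset.mp (Finset.mem_filter.mp hS).1
        exact ⟨Finset.prod_nonneg fun h hh => (hQ01 h (hSsub' hh) l).1,
          Finset.prod_le_one (fun h hh => (hQ01 h (hSsub' hh) l).1)
            (fun h hh => (hQ01 h (hSsub' hh) l).2)⟩
      have hwa := weighted_avg_diff F p
        (fun S => ∏ h ∈ S, ∑ kk : Fin d, v x h l kk * vq x h kk) Sstar hSstar
        (fun S _ => hp0 S) hp1 hg
      rw [hΔ1]
      simp only [s]
      exact hwa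
    have hss : ∀ l, |s x l - sstar x l| ≤ Δ1 + Δ2 := fun l =>
      le_trans (abs_sub_le _ _ _) (add_le_add (hsPd l) (hPd l))
    -- softmax comparison
    have hδ : ∑ l ∈ I, |σw x l - σws x l| ≤ 6 * (a * (Δ1 + Δ2)) := by
      have ht : ∀ l ∈ I, |a * s x l - a * sstar x l| ≤ a * (Δ1 + Δ2) := by
        intro l _
        rw [← mul_sub, abs_mul, abs_of_pos ha]
        exact mul_le_mul_of_nonneg_left (hss l) ha.le
      have hl1 := softmax_l1 I hIne (fun l => a * s x l) (fun l => a * sstar x l)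
        (a * (Δ1 + Δ2)) ht
      have h2 := softmax_l1_lin I hIne (fun l => a * s x l) (fun l => a * sstar x l)
        (a * (Δ1 + Δ2)) hl1 (by positivity)
      simpa only [σw, σws] using h2
    -- softmax weights facts
    have hw0 : ∀ l ∈ I, 0 ≤ σw x l := by
      intro l _
      simp only [σw]
      positivity
    have hw'0 : ∀ l ∈ I, 0 ≤ σws x l := by
      intro l _
      simp only [σws]
      positivity
    have hw1 : ∑ l ∈ I, σw x l = 1 := by
      simp only [σw]
      exact softmax_sum_one I hIne (fun l => a * s x l)
    have hw'1 : ∑ l ∈ I, σws x l = 1 := by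
      simp only [σws]
      exact softmax_sum_one I hIne (fun l => a * sstar x l)
    -- apply the core bound
    have hc : ∀ l ∈ I,
        (if x ⟨l.1, icoLtSucc l⟩ = x ⟨L, Nat.lt_succ_self L⟩ then (1 : ℝ) else 0) = 0 ∨
        (if x ⟨l.1, icoLtSucc l⟩ = x ⟨L, Nat.lt_succ_self L⟩ then (1 : ℝ) else 0) = 1 := by
      intro l _
      split
      · exact Or.inr rfl
      · exact Or.inl rfl
    have hP : ∀ l ∈ I, 0 ≤ (∏ h ∈ Sstar, ∑ kk : Fin d, v x h l kk * vq x h kk) ∧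
        (∏ h ∈ Sstar, ∑ kk : Fin d, v x h l kk * vq x h kk) ≤ 1 := by
      intro l _
      exact ⟨Finset.prod_nonneg fun h hh => (hQ01 h (hSsub hh) l).1,
        Finset.prod_le_one (fun h hh => (hQ01 h (hSsub hh) l).1)
          (fun h hh => (hQ01 h (hSsub hh) l).2)⟩
    have hP' : ∀ l ∈ I, 0 ≤ sstar x l ∧ sstar x l ≤ 1 := by
      intro l _
      simp only [sstar]
      constructor
      · exact Finset.prod_nonneg fun h hh => by split <;> norm_num
      · exact Finset.prod_le_one (fun h hh => by split <;> norm_num)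
          (fun h hh => by split <;> norm_num)
    have hcore := core_bound I (σw x) (σws x)
      (fun l => if x ⟨l.1, icoLtSucc l⟩ = x ⟨L, Nat.lt_succ_self L⟩ then (1 : ℝ) else 0)
      (fun l => ∏ h ∈ Sstar, ∑ kk : Fin d, v x h l kk * vq x h kk) (sstar x) ε
      (6 * (a * (Δ1 + Δ2))) Δ2 hε0 hΔ2nn hc hw0 hw1 hw'0 hw'1 hP hP' (fun l _ => hPd l) hδ
    refine le_trans hcore ?_
    have e1 : 2 * (6 * (a * (Δ1 + Δ2))) / ε = 12 * (a * ε⁻¹) * (Δ1 + Δ2) := by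
      field_simp
      ring
    have e2 : 12 * (1 + a * ε⁻¹) * (Δ1 + Δ2) =
        12 * (Δ1 + Δ2) + 12 * (a * ε⁻¹) * (Δ1 + Δ2) := by ring
    linarith
  -- combine over x
  have hC : 0 ≤ 12 * (1 + a * ε⁻¹) * (Δ1 + Δ2) := by positivity
  rw [show f1 - f2 = ∑ x : Fin (L + 1) → Fin d, ρ x *
      ((∑ l ∈ I, σw x l *
          (((if x ⟨l.1, icoLtSucc l⟩ = x ⟨L, Nat.lt_succ_self L⟩ then (1 : ℝ) else 0) -
              y x (x ⟨L, Nat.lt_succ_self L⟩)) / (y x (x ⟨L, Nat.lt_succ_self L⟩) + ε)) *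
          ∏ h ∈ Sstar, ∑ kk : Fin d, v x h l kk * vq x h kk) -
        ∑ l ∈ I, σws x l *
          (((if x ⟨l.1, icoLtSucc l⟩ = x ⟨L, Nat.lt_succ_self L⟩ then (1 : ℝ) else 0) -
              ys x (x ⟨L, Nat.lt_succ_self L⟩)) / (ys x (x ⟨L, Nat.lt_succ_self L⟩) + ε)) *
          sstar x l) from by
    rw [← Finset.sum_sub_distrib]
    refine Finset.sum_congr rfl fun x _ => ?_
    rw [← mul_sub]
    congr 1
    congr 1
    · refine Finset.sum_congr rfl fun l _ => ?_
      rw [← Finset.sum_mul, ← mul_assoc]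
      congr 1
      congr 1
      rw [Finset.sum_eq_single (x ⟨L, Nat.lt_succ_self L⟩)]
      · simp only [eq_self_iff_true, true_and, if_true, mul_one, div_sub_div_same]
      · intro k _ hk
        simp [Ne.symm hk]
      · intro hmem
        exact absurd (Finset.mem_univ _) hmem
    · refine Finset.sum_congr rfl fun l _ => ?_
      rw [← Finset.sum_mul, ← mul_assoc]
      congr 1
      congr 1
      rw [Finset.sum_eq_single (x ⟨L, Nat.lt_succ_self L⟩)]
      · simp only [eq_self_iff_true, true_and, if_true, mul_one, div_sub_div_same]
      · intro k _ hk
        simp [Ne.symm hk]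
      · intro hmem
        exact absurd (Finset.mem_univ _) hmem]
  refine le_trans (Finset.abs_sum_le_sum_abs _ _) ?_
  calc ∑ x : Fin (L + 1) → Fin d, |ρ x * _| ≤
      ∑ x : Fin (L + 1) → Fin d, ρ x * (12 * (1 + a * ε⁻¹) * (Δ1 + Δ2)) := by
        apply Finset.sum_le_sum
        intro x _
        rw [abs_mul, abs_of_nonneg (hρ0 x)]
        exact mul_le_mul_of_nonneg_left (key x) (hρ0 x)
    _ = 12 * (1 + a * ε⁻¹) * (Δ1 + Δ2) := by rw [← Finset.sum_mul, hρ1, one_mul]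
end

section
/- Let μ be a probability distribution on 𝒳^{M+1} with μ(z, Z) > 0 for all (z, Z), fix S* ⊆ {1,…,M} and a ∈ ℝ, and for each E ∈ 𝒳^{S*} define the reweighted distribution μ̃_E(z, Z) = μ(z, Z)·exp(a·1{Z_{−S*} = E}) / Σ_{z′,Z′} μ(z′, Z′)·exp(a·1{Z′_{−S*} = E}), the scalar r(E) = ( 1 + μ(Z_{−S*} = E)·(e^a − 1) )^{−1}, and J(E) = Σ_{k=1}^{d} ( μ(z=e_k | Z_{−S*}=E) − μ(z=e_k) )² / ( (1 − r(E))·μ(z=e_k | Z_{−S*}=E) + r(E)·μ(z=e_k) ). Then: (i) the marginal of μ̃_E satisfies μ̃_E(z = ·) = r(E)·μ(z = ·) + (1 − r(E))·μ(z = · | Z_{−S*} = E); (ii) μ̃_E(Z_{−S*} = E) = e^a·r(E)·μ(Z_{−S*} = E); and (iii) Σ_{E∈𝒳^{S*}} μ(Z_{−S*}=E) · [ Σ_{k=1}^{d} μ(z=e_k | Z_{−S*}=E)·μ̃_E(z=e_k, Z_{−S*}=E) / μ̃_E(z=e_k) − μ̃_E(Z_{−S*}=E) ] = Σ_{E∈𝒳^{S*}}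 J(E) · e^a · r(E)³ · μ(Z_{−S*}=E)². -/
open Finset

/-- The reweighted distribution `μ̃_E(z, Z) ∝ μ(z, Z)·exp(a·1{Z_{-S} = E})` on `𝒳^{M+1}`. -/
noncomputable def rew (d M : ℕ) (S : Finset ℕ) (a : ℝ)
    (μb : (Fin (M + 1) → Fin d) → ℝ) (E : {s // s ∈ S} → Fin d)
    (y : Fin (M + 1) → Fin d) : ℝ :=
  μb y * Real.exp (a * (if parents d (M + 1) S y M (Nat.lt_succ_self M) = E then 1 else 0)) /
    ∑ y' : Fin (M + 1) → Fin d,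
      μb y' *
        Real.exp (a * (if parents d (M + 1) S y' M (Nat.lt_succ_self M) = E then 1 else 0))

/-- Identities for the reweighted distribution `μ̃_E`:
(i) its token marginal is the mixture `r(E)·μ(z=·) + (1−r(E))·μ(z=· | Z_{-S*}=E)`;
(ii) `μ̃_E(Z_{-S*}=E) = e^a r(E) μ(Z_{-S*}=E)`; (iii) the gradient-signal identity
`Σ_E μ(Z_{-S*}=E)[Σ_k μ(z=e_k|E)·μ̃_E(z=e_k,Z_{-S*}=E)/μ̃_E(z=e_k) − μ̃_E(Z_{-S*}=E)]
  = Σ_E J(E) e^a r(E)³ μ(Z_{-S*}=E)²`. -/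
theorem statement17 (d M : ℕ) (hd : 0 < d) (hM : 0 < M)
    (μb : (Fin (M + 1) → Fin d) → ℝ) (hpos : ∀ y, 0 < μb y) (hsum : ∑ y, μb y = 1)
    (S : Finset ℕ) (hS : ∀ s ∈ S, 1 ≤ s ∧ s ≤ M) (a : ℝ) :
    let jm : Fin d → ({s // s ∈ S} → Fin d) → ℝ := fun e E =>
      windowLaw d (M + 1) S μb M (Nat.lt_succ_self M) (e, E);
    let sm : ({s // s ∈ S} → Fin d) → ℝ := fun E => ∑ e : Fin d, jm e E;
    let tm : Fin d → ℝ := tokenMarg d M μb;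
    let cond : Fin d → ({s // s ∈ S} → Fin d) → ℝ := fun e E => jm e E / sm E;
    let rE : ({s // s ∈ S} → Fin d) → ℝ := fun E => (1 + sm E * (Real.exp a - 1))⁻¹;
    let J : ({s // s ∈ S} → Fin d) → ℝ := fun E =>
      ∑ k : Fin d, (cond k E - tm k) ^ 2 / ((1 - rE E) * cond k E + rE E * tm k);
    (∀ (E : {s // s ∈ S} → Fin d) (e : Fin d),
        tokenMarg d M (rew d M S a μb E) e = rE E * tm e + (1 - rE E) * cond e E) ∧
    (∀ E : {s // s ∈ S} → Fin d,
        (∑ e : Fin d, windowLaw d (M + 1) S (rew d M S a μb E) M (Nat.lt_succ_self M) (e, E))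
          = Real.exp a * rE E * sm E) ∧
    (∑ E : {s // s ∈ S} → Fin d, sm E *
        ((∑ k : Fin d,
            cond k E * windowLaw d (M + 1) S (rew d M S a μb E) M (Nat.lt_succ_self M) (k, E) /
              tokenMarg d M (rew d M S a μb E) k) -
          (∑ e : Fin d, windowLaw d (M + 1) S (rew d M S a μb E) M (Nat.lt_succ_self M) (e, E)))
      = ∑ E : {s // s ∈ S} → Fin d, J E * Real.exp a * rE E ^ 3 * sm E ^ 2) := by
    classical
  intro jm sm tm cond rE J
  have hdne : Nonempty (Fin d) := ⟨⟨0, hd⟩⟩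
  have hEne : Nonempty ({s // s ∈ S} → Fin d) := ⟨fun _ => ⟨0, hd⟩⟩
  -- characterization of window equality
  have hwin : ∀ (y : Fin (M + 1) → Fin d) (e : Fin d) (E : {s // s ∈ S} → Fin d),
      window d (M + 1) S y M (Nat.lt_succ_self M) = (e, E) ↔
        (y ⟨M, Nat.lt_succ_self M⟩ = e ∧
          parents d (M + 1) S y M (Nat.lt_succ_self M) = E) := by
    intro y e E
    simp [window, Prod.ext_iff]
  -- existence of a sequence with a prescribed window
  have hexist : ∀ (E : {s // s ∈ S} → Fin d) (e : Fin d),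
      ∃ y : Fin (M + 1) → Fin d, window d (M + 1) S y M (Nat.lt_succ_self M) = (e, E) := by
    intro E e
    refine ⟨fun i => if h : ∃ t : {t // t ∈ S}, M - t.1 = i.1 then E h.choose else e,
      (hwin _ e E).mpr ⟨?_, ?_⟩⟩
    · show (if h : ∃ t : {t // t ∈ S}, M - t.1 = M then E h.choose else e) = e
      rw [dif_neg]
      rintro ⟨t, ht⟩
      obtain ⟨h1, h2⟩ := hS t.1 t.2
      omega
    · funext s
      show (if h : ∃ t : {t // t ∈ S}, M - t.1 = M - s.1 then E h.choose else e) = E s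
      have hw : ∃ t : {t // t ∈ S}, M - t.1 = M - s.1 := ⟨s, rfl⟩
      rw [dif_pos hw]
      obtain ⟨h1, h2⟩ := hS s.1 s.2
      obtain ⟨h3, h4⟩ := hS hw.choose.1 hw.choose.2
      have h5 := hw.choose_spec
      congr 1
      exact Subtype.ext (by omega)
  -- jm is positive
  have hjmpos : ∀ (E : {s // s ∈ S} → Fin d) (e : Fin d), 0 < jm e E := by
    intro E e
    obtain ⟨y, hy⟩ := hexist E e
    have h0 : (0:ℝ) < if window d (M + 1) S y M (Nat.lt_succ_self M) = (e, E) then μb y else 0 := by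
      rw [if_pos hy]; exact hpos y
    refine lt_of_lt_of_le h0 ?_
    exact Finset.single_le_sum (f := fun x => if window d (M + 1) S x M (Nat.lt_succ_self M) = (e, E) then μb x else 0)
      (fun x _ => by split <;> [exact (hpos x).le; exact le_rfl]) (Finset.mem_univ y)
  have hsmpos : ∀ E, 0 < sm E := fun E =>
    Finset.sum_pos (fun e _ => hjmpos E e) Finset.univ_nonempty
  -- jm ≤ tm
  have hjmle : ∀ (E : {s // s ∈ S} → Fin d) (e : Fin d), jm e E ≤ tm e := by
    intro E e
    refine Finset.sum_le_sum fun y _ => ?_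
    by_cases h : window d (M + 1) S y M (Nat.lt_succ_self M) = (e, E)
    · rw [if_pos h, if_pos ((hwin y e E).mp h).1]
    · rw [if_neg h]
      split <;> [exact (hpos _).le; exact le_rfl]
  -- sm as a one-variable sum
  have h1 : ∀ E : {s // s ∈ S} → Fin d,
      sm E = ∑ y : Fin (M + 1) → Fin d,
        if parents d (M + 1) S y M (Nat.lt_succ_self M) = E then μb y else 0 := by
    intro E
    show (∑ e : Fin d, ∑ y : Fin (M + 1) → Fin d,
        if window d (M + 1) S y M (Nat.lt_succ_self M) = (e, E) then μb y else 0) = _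
    rw [Finset.sum_comm]
    refine Finset.sum_congr rfl fun y _ => ?_
    by_cases h : parents d (M + 1) S y M (Nat.lt_succ_self M) = E
    · rw [if_pos h]
      rw [Finset.sum_eq_single (y ⟨M, Nat.lt_succ_self M⟩)]
      · rw [if_pos ((hwin y _ E).mpr ⟨rfl, h⟩)]
      · intro b _ hb
        rw [if_neg]
        intro hc
        exact hb ((hwin y b E).mp hc).1.symm
      · intro hb; exact absurd (Finset.mem_univ _) hb
    · rw [if_neg h]
      refine Finset.sum_eq_zero fun e _ => ?_
      rw [if_neg]
      intro hc
      exact h ((hwin y e E).mp hc).2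
  -- sum of tm is 1
  have htm1 : ∑ e : Fin d, tm e = 1 := by
    show (∑ e : Fin d, ∑ y : Fin (M + 1) → Fin d,
        if y ⟨M, Nat.lt_succ_self M⟩ = e then μb y else 0) = 1
    rw [Finset.sum_comm, ← hsum]
    refine Finset.sum_congr rfl fun y _ => ?_
    rw [Finset.sum_eq_single (y ⟨M, Nat.lt_succ_self M⟩)]
    · rw [if_pos rfl]
    · intro b _ hb; rw [if_neg (by exact fun h => hb h.symm)]
    · intro hb; exact absurd (Finset.mem_univ _) hb
  -- normalizing constant
  have hZ : ∀ E : {s // s ∈ S} → Fin d,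
      (∑ y' : Fin (M + 1) → Fin d, μb y' *
        Real.exp (a * (if parents d (M + 1) S y' M (Nat.lt_succ_self M) = E then 1 else 0)))
      = 1 + sm E * (Real.exp a - 1) := by
    intro E
    have hterm : ∀ y : Fin (M + 1) → Fin d,
        μb y * Real.exp (a * (if parents d (M + 1) S y M (Nat.lt_succ_self M) = E then 1 else 0))
        = μb y + (if parents d (M + 1) S y M (Nat.lt_succ_self M) = E then μb y else 0) *
            (Real.exp a - 1) := by
      intro y
      by_cases h : parents d (M + 1) S y M (Nat.lt_succ_self M) = E
      · rw [if_pos h, if_pos h, mul_one]; ring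
      · rw [if_neg h, if_neg h, mul_zero, Real.exp_zero, mul_one, zero_mul, add_zero]
    rw [Finset.sum_congr rfl fun y _ => hterm y, Finset.sum_add_distrib, hsum,
      ← Finset.sum_mul, ← h1 E]
  have hBpos : ∀ E : {s // s ∈ S} → Fin d, 0 < 1 + sm E * (Real.exp a - 1) := by
    intro E
    rw [← hZ E]
    exact Finset.sum_pos (fun y _ => mul_pos (hpos y) (Real.exp_pos _)) Finset.univ_nonempty
  -- window law of the reweighted distribution
  have h3 : ∀ (E : {s // s ∈ S} → Fin d) (e : Fin d),
      windowLaw d (M + 1) S (rew d M S a μb E) M (Nat.lt_succ_self M) (e, E)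
        = Real.exp a * jm e E / (1 + sm E * (Real.exp a - 1)) := by
    intro E e
    show (∑ y : Fin (M + 1) → Fin d,
        if window d (M + 1) S y M (Nat.lt_succ_self M) = (e, E) then rew d M S a μb E y else 0) = _
    unfold rew
    rw [hZ E]
    have hterm : ∀ y : Fin (M + 1) → Fin d,
        (if window d (M + 1) S y M (Nat.lt_succ_self M) = (e, E) then
          μb y * Real.exp (a * (if parents d (M + 1) S y M (Nat.lt_succ_self M) = E then 1 else 0)) /
            (1 + sm E * (Real.exp a - 1)) else 0)
        = (if window d (M + 1) S y M (Nat.lt_succ_self M) = (e, E) then μb y else 0) *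
            (Real.exp a / (1 + sm E * (Real.exp a - 1))) := by
      intro y
      by_cases h : window d (M + 1) S y M (Nat.lt_succ_self M) = (e, E)
      · rw [if_pos h, if_pos h, ((hwin y e E).mp h).2, if_pos rfl, mul_one]; ring
      · rw [if_neg h, if_neg h, zero_mul]
    rw [Finset.sum_congr rfl fun y _ => hterm y, ← Finset.sum_mul]
    show jm e E * (Real.exp a / (1 + sm E * (Real.exp a - 1))) = _
    ring
  -- token marginal of the reweighted distribution
  have h4 : ∀ (E : {s // s ∈ S} → Fin d) (e : Fin d),
      tokenMarg d M (rew d M S a μb E) e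
        = (tm e + (Real.exp a - 1) * jm e E) / (1 + sm E * (Real.exp a - 1)) := by
    intro E e
    show (∑ y : Fin (M + 1) → Fin d,
        if y ⟨M, Nat.lt_succ_self M⟩ = e then rew d M S a μb E y else 0) = _
    unfold rew
    rw [hZ E]
    have hterm : ∀ y : Fin (M + 1) → Fin d,
        (if y ⟨M, Nat.lt_succ_self M⟩ = e then
          μb y * Real.exp (a * (if parents d (M + 1) S y M (Nat.lt_succ_self M) = E then 1 else 0)) /
            (1 + sm E * (Real.exp a - 1)) else 0)
        = (if y ⟨M, Nat.lt_succ_self M⟩ = e then μb y else 0) *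
            (1 / (1 + sm E * (Real.exp a - 1)))
          + (if window d (M + 1) S y M (Nat.lt_succ_self M) = (e, E) then μb y else 0) *
            ((Real.exp a - 1) / (1 + sm E * (Real.exp a - 1))) := by
      intro y
      by_cases ha1 : y ⟨M, Nat.lt_succ_self M⟩ = e
      · by_cases ha2 : parents d (M + 1) S y M (Nat.lt_succ_self M) = E
        · rw [if_pos ha1, if_pos ha1, if_pos ha2, if_pos ((hwin y e E).mpr ⟨ha1, ha2⟩), mul_one]
          ring
        · rw [if_pos ha1, if_pos ha1, if_neg ha2,
            if_neg (fun hc => ha2 ((hwin y e E).mp hc).2), mul_zero, Real.exp_zero, mul_one,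
            zero_mul, add_zero, one_div, div_eq_mul_inv]
      · rw [if_neg ha1, if_neg ha1, if_neg (fun hc => ha1 ((hwin y e E).mp hc).1),
          zero_mul, zero_mul, add_zero]
    rw [Finset.sum_congr rfl fun y _ => hterm y, Finset.sum_add_distrib,
      ← Finset.sum_mul, ← Finset.sum_mul]
    show tm e * (1 / (1 + sm E * (Real.exp a - 1)))
        + jm e E * ((Real.exp a - 1) / (1 + sm E * (Real.exp a - 1))) = _
    ring
  -- Part (i)
  have hi : ∀ (E : {s // s ∈ S} → Fin d) (e : Fin d),
      tokenMarg d M (rew d M S a μb E) e = rE E * tm e + (1 - rE E) * cond e E := by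
    intro E e
    rw [h4 E e]
    have hB0 : (1 + sm E * (Real.exp a - 1)) ≠ 0 := (hBpos E).ne'
    have hs0 : sm E ≠ 0 := (hsmpos E).ne'
    show _ = (1 + sm E * (Real.exp a - 1))⁻¹ * tm e +
      (1 - (1 + sm E * (Real.exp a - 1))⁻¹) * (jm e E / sm E)
    field_simp
    have hB1 : 1 + (Real.exp a - 1) * sm E ≠ 0 := by
      rw [show 1 + (Real.exp a - 1) * sm E = 1 + sm E * (Real.exp a - 1) by ring]; exact hB0
    field_simp
    ring
  -- Part (ii)
  have hii : ∀ E : {s // s ∈ S} → Fin d,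
      (∑ e : Fin d, windowLaw d (M + 1) S (rew d M S a μb E) M (Nat.lt_succ_self M) (e, E))
        = Real.exp a * rE E * sm E := by
    intro E
    rw [Finset.sum_congr rfl fun e _ => h3 E e]
    have hterm : ∀ e : Fin d, Real.exp a * jm e E / (1 + sm E * (Real.exp a - 1))
        = jm e E * (Real.exp a / (1 + sm E * (Real.exp a - 1))) := fun e => by ring
    rw [Finset.sum_congr rfl fun e _ => hterm e, ← Finset.sum_mul]
    show sm E * (Real.exp a / (1 + sm E * (Real.exp a - 1)))
      = Real.exp a * (1 + sm E * (Real.exp a - 1))⁻¹ * sm E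
    ring
  refine ⟨hi, hii, ?_⟩
  -- Part (iii)
  have hcond1 : ∀ E : {s // s ∈ S} → Fin d, ∑ k : Fin d, cond k E = 1 := by
    intro E
    show (∑ k : Fin d, jm k E / sm E) = 1
    rw [← Finset.sum_div]
    exact div_self (hsmpos E).ne'
  have hD : ∀ (E : {s // s ∈ S} → Fin d) (k : Fin d),
      0 < (1 - rE E) * cond k E + rE E * tm k := by
    intro E k
    have h5 : (1 - rE E) * cond k E + rE E * tm k = rE E * tm k + (1 - rE E) * cond k E := by ring
    rw [h5, ← hi E k, h4 E k]
    apply div_pos _ (hBpos E)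
    nlinarith [mul_pos (Real.exp_pos a) (hjmpos E k), hjmle E k]
  refine Finset.sum_congr rfl fun E _ => ?_
  have hs0 : sm E ≠ 0 := (hsmpos E).ne'
  have hrr : rE E = (1 + sm E * (Real.exp a - 1))⁻¹ := rfl
  have hterm : ∀ k : Fin d,
      cond k E * windowLaw d (M + 1) S (rew d M S a μb E) M (Nat.lt_succ_self M) (k, E) /
        tokenMarg d M (rew d M S a μb E) k
      = (Real.exp a * rE E * sm E) *
          (cond k E ^ 2 / ((1 - rE E) * cond k E + rE E * tm k)) := by
    intro k
    rw [h3 E k, hi E k]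
    have hjmc : jm k E = cond k E * sm E := by
      show jm k E = jm k E / sm E * sm E
      rw [div_mul_cancel₀ _ hs0]
    rw [hjmc, hrr]
    have h6 : rE E * tm k + (1 - rE E) * cond k E = (1 - rE E) * cond k E + rE E * tm k := by ring
    rw [hrr] at h6
    rw [h6]
    ring
  have key : ∀ k : Fin d,
      cond k E ^ 2 / ((1 - rE E) * cond k E + rE E * tm k)
        - rE E ^ 2 * ((cond k E - tm k) ^ 2 / ((1 - rE E) * cond k E + rE E * tm k))
      = cond k E + rE E * (cond k E - tm k) := by
    intro k
    have hDk : ((1 - rE E) * cond k E + rE E * tm k) ≠ 0 := (hD E k).ne'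
    field_simp
    have hD2 : cond k E * (1 - rE E) + rE E * tm k ≠ 0 := by
      rw [show cond k E * (1 - rE E) + rE E * tm k = (1 - rE E) * cond k E + rE E * tm k by ring]
      exact hDk
    rw [div_eq_iff hD2]
    ring
  have hsum2 : (∑ k : Fin d, cond k E ^ 2 / ((1 - rE E) * cond k E + rE E * tm k))
      = 1 + rE E ^ 2 * J E := by
    have e1 := Finset.sum_congr rfl fun (k : Fin d) (_ : k ∈ Finset.univ) => key k
    rw [Finset.sum_sub_distrib, ← Finset.mul_sum, Finset.sum_add_distrib,
      ← Finset.mul_sum, Finset.sum_sub_distrib, hcond1 E, htm1] at e1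
    have hJ : J E = ∑ k : Fin d,
        (cond k E - tm k) ^ 2 / ((1 - rE E) * cond k E + rE E * tm k) := rfl
    rw [← hJ] at e1
    linarith
  rw [Finset.sum_congr rfl fun (k : Fin d) (_ : k ∈ Finset.univ) => hterm k,
    ← Finset.mul_sum, hii E, hsum2]
  ring
end
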